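/- arXiv:0707.3945 — 6 statements merged into one kernel-verified Lean document; each statement's English description precedes it below -/
import Mathlib

section
/- Let p, q, m ∈ ℕ, let A ∈ ℚ^{m×p}, G ∈ ℚ^{m×q}, b ∈ ℚ^m, and let P := {(x,y) ∈ ℝ^p × ℝ^q : Ax + Gy ≤ b componentwise} and P_I := conv({(x,y) ∈ P : x ∈ ℤ^p}). Let α ∈ ℚ^p, β ∈ ℚ^q, γ ∈ ℚ be such that α·x + β·y ≤ γ holds for every (x,y) ∈ P_I. Then there exist vectors d^1,…,d^{2^p} ∈ ℤ^p and integers δ^1,…,δ^{2^p} ∈ ℤ forming a 2^p-disjunction (i.e., for every x ∈ ℤ^p there is some i with d^i·x ≤ δ^i) such that every (x,y) ∈ P with α·x + β·y > γ satisfies d^i·x > δ^i for every i ∈ {1,…,2^p}. In other words, every inequality valid for P_I is a 2^p-disjunctive cut for P. -/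
open Set

noncomputable section

/-- The LP relaxation `P = {(x,y) : Ax + Gy ≤ b}`. -/
def feasSet {p q m : ℕ} (A : Matrix (Fin m) (Fin p) ℚ) (G : Matrix (Fin m) (Fin q) ℚ)
    (b : Fin m → ℚ) : Set ((Fin p → ℝ) × (Fin q → ℝ)) :=
  {z | ∀ i : Fin m, (∑ j, (A i j : ℝ) * z.1 j) + (∑ j, (G i j : ℝ) * z.2 j) ≤ (b i : ℝ)}

/-- `x` is an integral vector. -/
def IsIntVec {p : ℕ} (x : Fin p → ℝ) : Prop := ∀ j, ∃ n : ℤ, x j = (n : ℝ)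

/-- The mixed integer hull `P_I`. -/
def mixedIntHull {p q m : ℕ} (A : Matrix (Fin m) (Fin p) ℚ) (G : Matrix (Fin m) (Fin q) ℚ)
    (b : Fin m → ℚ) : Set ((Fin p → ℝ) × (Fin q → ℝ)) :=
  convexHull ℝ {z ∈ feasSet A G b | IsIntVec z.1}

/-- A `k`-disjunction: every integer point satisfies one of the inequalities `dⁱ·x ≤ δⁱ`. -/
def IsKDisjunction {p : ℕ} (k : ℕ) (d : Fin k → Fin p → ℤ) (δ : Fin k → ℤ) : Prop :=
  ∀ x : Fin p → ℤ, ∃ i, (∑ j, d i j * x j) ≤ δ i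

namespace TwoPow


structure LC (p q : ℕ) where
  a : Fin p → ℚ
  g : Fin q → ℚ
  r : ℚ
  strict : Bool

variable {p q : ℕ}

def LC.lhs (C : LC p q) (x : Fin p → ℝ) (y : Fin q → ℝ) : ℝ :=
  (∑ j, (C.a j : ℝ) * x j) + ∑ j, (C.g j : ℝ) * y j

def LC.Sat (C : LC p q) (x : Fin p → ℝ) (y : Fin q → ℝ) : Prop :=
  if C.strict then C.lhs x y < (C.r : ℝ) else C.lhs x y ≤ (C.r : ℝ)

def LC.dropLast (C : LC p (q + 1)) : LC p q :=
  ⟨C.a, fun j => C.g j.castSucc, C.r, C.strict⟩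

def comb (Cl Cu : LC p (q + 1)) : LC p q :=
  ⟨fun j => Cu.g (Fin.last q) * Cl.a j - Cl.g (Fin.last q) * Cu.a j,
   fun j => Cu.g (Fin.last q) * Cl.g j.castSucc - Cl.g (Fin.last q) * Cu.g j.castSucc,
   Cu.g (Fin.last q) * Cl.r - Cl.g (Fin.last q) * Cu.r,
   Cl.strict || Cu.strict⟩

lemma lhs_snoc (C : LC p (q + 1)) (x : Fin p → ℝ) (y : Fin q → ℝ) (t : ℝ) :
    C.lhs x (Fin.snoc y t) = C.dropLast.lhs x y + (C.g (Fin.last q) : ℝ) * t := by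
  simp only [LC.lhs, LC.dropLast, Fin.sum_univ_castSucc, Fin.snoc_castSucc, Fin.snoc_last]
  ring

lemma lhs_comb (Cl Cu : LC p (q + 1)) (x : Fin p → ℝ) (y : Fin q → ℝ) :
    (comb Cl Cu).lhs x y
      = (Cu.g (Fin.last q) : ℝ) * Cl.dropLast.lhs x y
        - (Cl.g (Fin.last q) : ℝ) * Cu.dropLast.lhs x y := by
  simp only [LC.lhs, comb, LC.dropLast, Rat.cast_sub, Rat.cast_mul, sub_mul,
    Finset.sum_sub_distrib, Finset.mul_sum, mul_add, mul_assoc]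
  ring

lemma comb_sat_aux {nl pu A B Rl Ru t : ℝ} (hn : nl < 0) (hp : 0 < pu)
    (sl su : Bool)
    (hl : if sl then A + nl * t < Rl else A + nl * t ≤ Rl)
    (hu : if su then B + pu * t < Ru else B + pu * t ≤ Ru) :
    if sl || su then pu * A - nl * B < pu * Rl - nl * Ru
    else pu * A - nl * B ≤ pu * Rl - nl * Ru := by
  have hn' : (0:ℝ) ≤ -nl := by linarith
  have hn'' : (0:ℝ) < -nl := by linarith
  cases sl <;> cases su <;> simp at hl hu ⊢
  · nlinarith [mul_le_mul_of_nonneg_left hl hp.le, mul_le_mul_of_nonneg_left hu hn']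
  · nlinarith [mul_le_mul_of_nonneg_left hl hp.le, mul_lt_mul_of_pos_left hu hn'']
  · nlinarith [mul_lt_mul_of_pos_left hl hp, mul_le_mul_of_nonneg_left hu hn']
  · nlinarith [mul_lt_mul_of_pos_left hl hp, mul_lt_mul_of_pos_left hu hn'']

lemma exists_list_max (L : List (ℝ × Bool)) (h : L ≠ []) :
    ∃ mx ∈ L, ∀ z ∈ L, z.1 ≤ mx.1 := by
  induction L with
  | nil => exact absurd rfl h
  | cons a t ih =>
    rcases eq_or_ne t [] with rfl | ht
    · exact ⟨a, List.mem_singleton.mpr rfl, by simp⟩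
    · obtain ⟨mx, hmem, hmax⟩ := ih ht
      rcases le_total a.1 mx.1 with h1 | h1
      · refine ⟨mx, List.mem_cons_of_mem _ hmem, ?_⟩
        intro z hz
        rcases List.mem_cons.mp hz with rfl | hz
        · exact h1
        · exact hmax _ hz
      · refine ⟨a, List.mem_cons_self, ?_⟩
        intro z hz
        rcases List.mem_cons.mp hz with rfl | hz
        · exact le_rfl
        · exact (hmax _ hz).trans h1

lemma exists_list_min (L : List (ℝ × Bool)) (h : L ≠ []) :
    ∃ mn ∈ L, ∀ z ∈ L, mn.1 ≤ z.1 := by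
  obtain ⟨mx, hmem, hmax⟩ := exists_list_max (L.map (fun z => (-z.1, z.2))) (by simpa using h)
  obtain ⟨z, hz, hzeq⟩ := List.mem_map.mp hmem
  refine ⟨z, hz, fun w hw => ?_⟩
  have := hmax _ (List.mem_map.mpr ⟨w, hw, rfl⟩)
  simp only [← hzeq] at this
  simpa using neg_le_neg this

lemma exists_between (lows ups : List (ℝ × Bool))
    (h : ∀ l ∈ lows, ∀ u ∈ ups, if l.2 || u.2 then l.1 < u.1 else l.1 ≤ u.1) :
    ∃ t : ℝ, (∀ l ∈ lows, if l.2 then l.1 < t else l.1 ≤ t) ∧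
             (∀ u ∈ ups, if u.2 then t < u.1 else t ≤ u.1) := by
  rcases eq_or_ne lows [] with rfl | hl
  · rcases eq_or_ne ups [] with rfl | hu
    · exact ⟨0, by simp, by simp⟩
    · obtain ⟨mn, hmem, hmin⟩ := exists_list_min ups hu
      refine ⟨mn.1 - 1, by simp, fun u hu' => ?_⟩
      have := hmin u hu'
      split <;> linarith
  · obtain ⟨mx, hxmem, hmax⟩ := exists_list_max lows hl
    rcases eq_or_ne ups [] with rfl | hu
    · refine ⟨mx.1 + 1, fun l hl' => ?_, by simp⟩
      have := hmax l hl'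
      split <;> linarith
    · obtain ⟨mn, hnmem, hmin⟩ := exists_list_min ups hu
      have hle : mx.1 ≤ mn.1 := by
        have := h mx hxmem mn hnmem
        split at this <;> linarith
      rcases lt_or_eq_of_le hle with hlt | heq
      · refine ⟨(mx.1 + mn.1) / 2, fun l hl' => ?_, fun u hu' => ?_⟩
        · have := hmax l hl'
          split <;> linarith
        · have := hmin u hu'
          split <;> linarith
      · refine ⟨mx.1, fun l hl' => ?_, fun u hu' => ?_⟩
        · have h1 := hmax l hl'
          cases hb : l.2
          · simpa [hb] using h1
          · have hh := h l hl' mn hnmem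
            rw [hb] at hh
            simp at hh
            simpa [hb, ← heq] using hh
        · have h1 := hmin u hu'
          cases hb : u.2
          · simpa [hb, heq] using h1
          · have hh := h mx hxmem u hu'
            rw [hb] at hh
            simp at hh
            simpa [hb] using hh

def negs (L : List (LC p (q + 1))) : List (LC p (q + 1)) :=
  L.filter (fun C => decide (C.g (Fin.last q) < 0))
def poss (L : List (LC p (q + 1))) : List (LC p (q + 1)) :=
  L.filter (fun C => decide (0 < C.g (Fin.last q)))
def zers (L : List (LC p (q + 1))) : List (LC p (q + 1)) :=
  L.filter (fun C => decide (C.g (Fin.last q) = 0))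

def elimStep (L : List (LC p (q + 1))) : List (LC p q) :=
  (zers L).map LC.dropLast ++ (negs L).flatMap (fun Cl => (poss L).map (comb Cl))

theorem elimStep_iff (L : List (LC p (q + 1))) (x : Fin p → ℝ) (y : Fin q → ℝ) :
    (∀ C ∈ elimStep L, C.Sat x y) ↔ ∃ t : ℝ, ∀ C ∈ L, C.Sat x (Fin.snoc y t) := by
  set lb : LC p (q+1) → ℝ × Bool :=
    fun C => (((C.r : ℝ) - C.dropLast.lhs x y) / (C.g (Fin.last q) : ℝ), C.strict) with hlb
  constructor
  · intro hs
    have hpair : ∀ l ∈ (negs L).map lb, ∀ u ∈ (poss L).map lb,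
        if l.2 || u.2 then l.1 < u.1 else l.1 ≤ u.1 := by
      intro l hlmem u humem
      obtain ⟨Cl, hClmem, rfl⟩ := List.mem_map.mp hlmem
      obtain ⟨Cu, hCumem, rfl⟩ := List.mem_map.mp humem
      have hCl : Cl.g (Fin.last q) < 0 := by simpa using (List.mem_filter.mp hClmem).2
      have hCu : 0 < Cu.g (Fin.last q) := by simpa using (List.mem_filter.mp hCumem).2
      have hnl : ((Cl.g (Fin.last q) : ℝ)) < 0 := by exact_mod_cast hCl
      have hpu : (0:ℝ) < ((Cu.g (Fin.last q) : ℝ)) := by exact_mod_cast hCu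
      have hmem2 : comb Cl Cu ∈ elimStep L :=
        List.mem_append_right _ (List.mem_flatMap.mpr ⟨Cl, hClmem,
          List.mem_map.mpr ⟨Cu, hCumem, rfl⟩⟩)
      have hsat0 := hs _ hmem2
      rw [LC.Sat, lhs_comb] at hsat0
      have hr : (((comb Cl Cu).r : ℚ) : ℝ)
          = (Cu.g (Fin.last q) : ℝ) * (Cl.r : ℝ) - (Cl.g (Fin.last q) : ℝ) * (Cu.r : ℝ) := by
        show (((Cu.g (Fin.last q) * Cl.r - Cl.g (Fin.last q) * Cu.r : ℚ)) : ℝ) = _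
        push_cast
        ring
      rw [hr] at hsat0
      have hsat : if (Cl.strict || Cu.strict) = true then
            (Cu.g (Fin.last q) : ℝ) * Cl.dropLast.lhs x y
              - (Cl.g (Fin.last q) : ℝ) * Cu.dropLast.lhs x y
            < (Cu.g (Fin.last q) : ℝ) * (Cl.r : ℝ) - (Cl.g (Fin.last q) : ℝ) * (Cu.r : ℝ)
          else
            (Cu.g (Fin.last q) : ℝ) * Cl.dropLast.lhs x y
              - (Cl.g (Fin.last q) : ℝ) * Cu.dropLast.lhs x y
            ≤ (Cu.g (Fin.last q) : ℝ) * (Cl.r : ℝ) - (Cl.g (Fin.last q) : ℝ) * (Cu.r : ℝ) :=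
        hsat0
      clear hsat0
      have e1 : ((Cl.r : ℝ) - Cl.dropLast.lhs x y) / (Cl.g (Fin.last q) : ℝ)
          = (Cl.dropLast.lhs x y - (Cl.r : ℝ)) / (-(Cl.g (Fin.last q) : ℝ)) := by
        rw [div_neg, ← neg_div, neg_sub]
      have hnl' : (0:ℝ) < -(Cl.g (Fin.last q) : ℝ) := by linarith
      show if (Cl.strict || Cu.strict) = true then
          ((Cl.r : ℝ) - Cl.dropLast.lhs x y) / (Cl.g (Fin.last q) : ℝ)
            < ((Cu.r : ℝ) - Cu.dropLast.lhs x y) / (Cu.g (Fin.last q) : ℝ)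
        else
          ((Cl.r : ℝ) - Cl.dropLast.lhs x y) / (Cl.g (Fin.last q) : ℝ)
            ≤ ((Cu.r : ℝ) - Cu.dropLast.lhs x y) / (Cu.g (Fin.last q) : ℝ)
      cases hbl : Cl.strict <;> cases hbu : Cu.strict <;> rw [hbl, hbu] at hsat
      · rw [if_neg (by decide)] at hsat ⊢
        rw [e1, div_le_div_iff₀ hnl' hpu]
        nlinarith
      · rw [if_pos (by decide)] at hsat ⊢
        rw [e1, div_lt_div_iff₀ hnl' hpu]
        nlinarith
      · rw [if_pos (by decide)] at hsat ⊢
        rw [e1, div_lt_div_iff₀ hnl' hpu]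
        nlinarith
      · rw [if_pos (by decide)] at hsat ⊢
        rw [e1, div_lt_div_iff₀ hnl' hpu]
        nlinarith
    obtain ⟨t, htl, htu⟩ := exists_between _ _ hpair
    refine ⟨t, fun C hC => ?_⟩
    rcases lt_trichotomy (C.g (Fin.last q)) 0 with hc | hc | hc
    · have hCmem : C ∈ negs L := List.mem_filter.mpr ⟨hC, by simpa using hc⟩
      have hb0 := htl _ (List.mem_map.mpr ⟨C, hCmem, rfl⟩)
      have hb : if C.strict = true then
            ((C.r : ℝ) - C.dropLast.lhs x y) / (C.g (Fin.last q) : ℝ) < t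
          else ((C.r : ℝ) - C.dropLast.lhs x y) / (C.g (Fin.last q) : ℝ) ≤ t := hb0
      have hnl : ((C.g (Fin.last q) : ℝ)) < 0 := by exact_mod_cast hc
      rw [LC.Sat, lhs_snoc]
      cases hsb : C.strict <;> rw [hsb] at hb
      · rw [if_neg (by decide)] at hb ⊢
        rw [div_le_iff_of_neg hnl] at hb
        linarith
      · rw [if_pos (by decide)] at hb ⊢
        rw [div_lt_iff_of_neg hnl] at hb
        linarith
    · have hCmem : C ∈ zers L := List.mem_filter.mpr ⟨hC, by simpa using hc⟩
      have hsat := hs _ (List.mem_append_left _ (List.mem_map.mpr ⟨C, hCmem, rfl⟩))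
      rw [LC.Sat] at hsat
      rw [LC.Sat, lhs_snoc, hc]
      simp only [LC.dropLast] at hsat ⊢
      simp at hsat ⊢; exact hsat
    · have hCmem : C ∈ poss L := List.mem_filter.mpr ⟨hC, by simpa using hc⟩
      have hb0 := htu _ (List.mem_map.mpr ⟨C, hCmem, rfl⟩)
      have hb : if C.strict = true then
            t < ((C.r : ℝ) - C.dropLast.lhs x y) / (C.g (Fin.last q) : ℝ)
          else t ≤ ((C.r : ℝ) - C.dropLast.lhs x y) / (C.g (Fin.last q) : ℝ) := hb0
      have hpu : (0:ℝ) < ((C.g (Fin.last q) : ℝ)) := by exact_mod_cast hc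
      rw [LC.Sat, lhs_snoc]
      cases hsb : C.strict <;> rw [hsb] at hb
      · rw [if_neg (by decide)] at hb ⊢
        rw [le_div_iff₀ hpu] at hb
        linarith
      · rw [if_pos (by decide)] at hb ⊢
        rw [lt_div_iff₀ hpu] at hb
        linarith
  · rintro ⟨t, ht⟩ C' hC'
    rcases List.mem_append.mp hC' with hz | hcb
    · obtain ⟨C, hCmem, rfl⟩ := List.mem_map.mp hz
      have hc : C.g (Fin.last q) = 0 := by simpa using (List.mem_filter.mp hCmem).2
      have hsat := ht C (List.mem_filter.mp hCmem).1
      rw [LC.Sat, lhs_snoc, hc] at hsat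
      rw [LC.Sat]
      simp only [LC.dropLast]
      simp at hsat ⊢; exact hsat
    · obtain ⟨Cl, hClmem, h2⟩ := List.mem_flatMap.mp hcb
      obtain ⟨Cu, hCumem, rfl⟩ := List.mem_map.mp h2
      have hCl : Cl.g (Fin.last q) < 0 := by simpa using (List.mem_filter.mp hClmem).2
      have hCu : 0 < Cu.g (Fin.last q) := by simpa using (List.mem_filter.mp hCumem).2
      have hnl : ((Cl.g (Fin.last q) : ℝ)) < 0 := by exact_mod_cast hCl
      have hpu : (0:ℝ) < ((Cu.g (Fin.last q) : ℝ)) := by exact_mod_cast hCu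
      have hsatl := ht Cl (List.mem_filter.mp hClmem).1
      have hsatu := ht Cu (List.mem_filter.mp hCumem).1
      rw [LC.Sat, lhs_snoc] at hsatl hsatu
      have hres := comb_sat_aux hnl hpu Cl.strict Cu.strict hsatl hsatu
      rw [LC.Sat, lhs_comb]
      have hr : (((comb Cl Cu).r : ℚ) : ℝ)
          = (Cu.g (Fin.last q) : ℝ) * (Cl.r : ℝ) - (Cl.g (Fin.last q) : ℝ) * (Cu.r : ℝ) := by
        show (((Cu.g (Fin.last q) * Cl.r - Cl.g (Fin.last q) * Cu.r : ℚ)) : ℝ) = _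
        push_cast
        ring
      rw [hr]
      exact hres

theorem elim_all {p : ℕ} : ∀ {q : ℕ} (L : List (LC p q)), ∃ L' : List (LC p 0),
    ∀ x : Fin p → ℝ,
      (∀ C ∈ L', C.Sat x (fun i => i.elim0)) ↔ ∃ y : Fin q → ℝ, ∀ C ∈ L, C.Sat x y := by
  intro q
  induction q with
  | zero =>
    intro L
    refine ⟨L, fun x => ⟨fun h => ⟨fun i => i.elim0, fun C hC => ?_⟩, fun ⟨y, h⟩ C hC => ?_⟩⟩
    · exact h C hC
    · have := h C hC
      have hy : y = (fun i : Fin 0 => i.elim0) := Subsingleton.elim _ _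
      rwa [hy] at this
  | succ q ih =>
    intro L
    obtain ⟨L', hL'⟩ := ih (elimStep L)
    refine ⟨L', fun x => (hL' x).trans ?_⟩
    constructor
    · rintro ⟨y, hy⟩
      obtain ⟨t, ht⟩ := (elimStep_iff L x y).mp hy
      exact ⟨Fin.snoc y t, ht⟩
    · rintro ⟨Y, hY⟩
      refine ⟨Fin.init Y, (elimStep_iff L x (Fin.init Y)).mpr ⟨Y (Fin.last q), ?_⟩⟩
      simpa [Fin.snoc_init_self] using hY





def Infeas {ι : Type} (aa : ι → Fin p → ℤ) (bb : ι → ℤ) (S : Finset ι) : Prop :=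
  ∀ x : Fin p → ℤ, ∃ i ∈ S, bb i + 1 ≤ ∑ j, aa i j * x j

lemma bell_core {ι : Type} [DecidableEq ι] (aa : ι → Fin p → ℤ) (S : Finset ι) (bb : ι → ℤ)
    (hinf : Infeas aa bb S) (hmin : ∀ i ∈ S, ¬ Infeas aa bb (S.erase i)) :
    S.card ≤ 2 ^ p := by
  by_contra hcard
  push_neg at hcard
  have hw : ∀ i ∈ S, ∃ w : Fin p → ℤ, ∀ k ∈ S.erase i, ∑ j, aa k j * w j ≤ bb k := by
    intro i hi
    have h1 := hmin i hi
    rw [Infeas] at h1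
    push_neg at h1
    obtain ⟨w, hwk⟩ := h1
    exact ⟨w, fun k hk => by have := hwk k hk; omega⟩
  choose! w hwspec using hw
  have hbdd : ∃ M : ℤ, ∀ s, (∃ b' : ι → ℤ,
      (∀ i ∈ S, bb i ≤ b' i) ∧ Infeas aa b' S ∧ s = ∑ i ∈ S, b' i) → s ≤ M := by
    refine ⟨∑ i ∈ S, (∑ j, aa i j * w i j - 1), ?_⟩
    rintro s ⟨b', hge, hinf', rfl⟩
    apply Finset.sum_le_sum
    intro i hi
    obtain ⟨k, hk, hviol⟩ := hinf' (w i)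
    rcases eq_or_ne k i with rfl | hne
    · omega
    · exfalso
      have h1 : ∑ j, aa k j * w i j ≤ bb k := hwspec i hi k (Finset.mem_erase.mpr ⟨hne, hk⟩)
      have h2 : bb k ≤ b' k := hge k hk
      omega
  have hne : ∃ s : ℤ, (∃ b' : ι → ℤ,
      (∀ i ∈ S, bb i ≤ b' i) ∧ Infeas aa b' S ∧ s = ∑ i ∈ S, b' i) :=
    ⟨∑ i ∈ S, bb i, bb, fun i _ => le_rfl, hinf, rfl⟩
  obtain ⟨s0, ⟨b', hge, hinf', hsum⟩, hgreatest⟩ := Int.exists_greatest_of_bdd hbdd hne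
  have hY : ∀ i ∈ S, ∃ Y : Fin p → ℤ,
      (∀ k ∈ S.erase i, ∑ j, aa k j * Y j ≤ b' k) ∧ ∑ j, aa i j * Y j = b' i + 1 := by
    intro i hi
    have hnot : ¬ Infeas aa (Function.update b' i (b' i + 1)) S := by
      intro hinf''
      have hP : ∃ b'' : ι → ℤ,
          (∀ k ∈ S, bb k ≤ b'' k) ∧ Infeas aa b'' S ∧ s0 + 1 = ∑ k ∈ S, b'' k := by
        refine ⟨Function.update b' i (b' i + 1), fun k hk => ?_, hinf'', ?_⟩
        · rcases eq_or_ne k i with rfl | hne2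
          · rw [Function.update_self]
            have := hge k hk
            omega
          · rw [Function.update_of_ne hne2]
            exact hge k hk
        · have e2 := Finset.sum_update_of_mem hi b' (b' i + 1)
          rw [← Finset.erase_eq] at e2
          have e3 : b' i + ∑ k ∈ S.erase i, b' k = ∑ k ∈ S, b' k :=
            Finset.add_sum_erase S b' hi
          omega
      have := hgreatest (s0 + 1) hP
      omega
    rw [Infeas] at hnot
    push_neg at hnot
    obtain ⟨Z, hZk⟩ := hnot
    have hZfeas : ∀ k ∈ S, ∑ j, aa k j * Z j ≤ Function.update b' i (b' i + 1) k :=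
      fun k hk => by have := hZk k hk; omega
    obtain ⟨k, hk, hviol⟩ := hinf' Z
    have hki : k = i := by
      by_contra hne2
      have h1 := hZfeas k hk
      rw [Function.update_of_ne hne2] at h1
      omega
    subst hki
    refine ⟨Z, fun k' hk' => ?_, ?_⟩
    · have h1 := hZfeas k' (Finset.mem_of_mem_erase hk')
      have hne2 := (Finset.mem_erase.mp hk').1
      rwa [Function.update_of_ne hne2] at h1
    · have h1 := hZfeas k hk
      rw [Function.update_self] at h1
      omega
  choose! Y hY1 hY2 using hY
  have hcardfn : Fintype.card (Fin p → ZMod 2) = 2 ^ p := by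
    rw [Fintype.card_fun]
    simp
  have hcard2 : Fintype.card (Fin p → ZMod 2) < S.card := by omega
  obtain ⟨i, hi, j, hj, hij, hpar⟩ :=
    Finset.exists_ne_map_eq_of_card_lt_of_maps_to hcard2
      (fun i _ => Finset.mem_univ (fun jj => ((Y i jj : ZMod 2))))
  have hdvd : ∀ jj, (2:ℤ) ∣ (Y i jj + Y j jj) := by
    intro jj
    have hcc : ((Y i jj + Y j jj : ℤ) : ZMod 2) = 0 := by
      push_cast
      have hc := congrFun hpar jj
      try simp only at hc
      rw [hc]
      have h2 : (2 : ZMod 2) = 0 := by decide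
      calc ((Y j jj : ℤ) : ZMod 2) + ((Y j jj : ℤ) : ZMod 2)
          = 2 * ((Y j jj : ℤ) : ZMod 2) := (two_mul _).symm
        _ = 0 := by rw [h2, zero_mul]
    exact (ZMod.intCast_zmod_eq_zero_iff_dvd _ 2).mp hcc
  have hzval : ∀ jj, 2 * ((Y i jj + Y j jj) / 2) = Y i jj + Y j jj :=
    fun jj => Int.mul_ediv_cancel' (hdvd jj)
  have hsum2 : ∀ k, 2 * (∑ jj, aa k jj * ((Y i jj + Y j jj) / 2))
      = (∑ jj, aa k jj * Y i jj) + (∑ jj, aa k jj * Y j jj) := by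
    intro k
    rw [Finset.mul_sum, ← Finset.sum_add_distrib]
    refine Finset.sum_congr rfl fun jj _ => ?_
    calc 2 * (aa k jj * ((Y i jj + Y j jj) / 2))
        = aa k jj * (2 * ((Y i jj + Y j jj) / 2)) := by ring
      _ = aa k jj * (Y i jj + Y j jj) := by rw [hzval jj]
      _ = aa k jj * Y i jj + aa k jj * Y j jj := by ring
  have hzfeas : ∀ k ∈ S, ∑ jj, aa k jj * ((Y i jj + Y j jj) / 2) ≤ b' k := by
    intro k hk
    have hs2 := hsum2 k
    rcases eq_or_ne k i with rfl | hki
    · have h1 : ∑ jj, aa k jj * Y k jj = b' k + 1 := hY2 k hk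
      have h2 : ∑ jj, aa k jj * Y j jj ≤ b' k :=
        hY1 j hj k (Finset.mem_erase.mpr ⟨hij, hk⟩)
      omega
    · rcases eq_or_ne k j with rfl | hkj
      · have h1 : ∑ jj, aa k jj * Y k jj = b' k + 1 := hY2 k hk
        have h2 : ∑ jj, aa k jj * Y i jj ≤ b' k :=
          hY1 i hi k (Finset.mem_erase.mpr ⟨hij.symm, hk⟩)
        omega
      · have h1 : ∑ jj, aa k jj * Y i jj ≤ b' k :=
          hY1 i hi k (Finset.mem_erase.mpr ⟨hki, hk⟩)
        have h2 : ∑ jj, aa k jj * Y j jj ≤ b' k :=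
          hY1 j hj k (Finset.mem_erase.mpr ⟨hkj, hk⟩)
        omega
  obtain ⟨k, hk, hviol⟩ := hinf' (fun jj => (Y i jj + Y j jj) / 2)
  have := hzfeas k hk
  omega

lemma bell_list (L : List ((Fin p → ℤ) × ℤ))
    (hinf : ∀ x : Fin p → ℤ, ∃ R ∈ L, R.2 + 1 ≤ ∑ j, R.1 j * x j) :
    ∃ f : Fin (2 ^ p) → (Fin p → ℤ) × ℤ, (∀ i, f i ∈ L) ∧
      ∀ x : Fin p → ℤ, ∃ i, (f i).2 + 1 ≤ ∑ j, (f i).1 j * x j := by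
  classical
  have hinf' : Infeas (fun i : Fin L.length => (L.get i).1)
      (fun i : Fin L.length => (L.get i).2) Finset.univ := by
    intro x
    obtain ⟨R, hR, hv⟩ := hinf x
    obtain ⟨i, hi⟩ := List.mem_iff_get.mp hR
    refine ⟨i, Finset.mem_univ _, ?_⟩
    show (L.get i).2 + 1 ≤ ∑ j, (L.get i).1 j * x j
    rw [hi]
    exact hv
  obtain ⟨T, hTmem, hTmin⟩ := Finset.exists_min_image
      ((Finset.univ : Finset (Finset (Fin L.length))).filter
        (fun T => Infeas (fun i => (L.get i).1) (fun i => (L.get i).2) T))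
      (fun T => T.card)
      ⟨Finset.univ, by simp only [Finset.mem_filter, Finset.mem_univ, true_and]; exact hinf'⟩
  have hTinf := (Finset.mem_filter.mp hTmem).2
  have hTcard : T.card ≤ 2 ^ p := by
    apply bell_core _ _ _ hTinf
    intro i hi hbad
    have h1 := hTmin (T.erase i)
      (Finset.mem_filter.mpr ⟨Finset.mem_univ _, hbad⟩)
    have h2 := Finset.card_erase_lt_of_mem hi
    omega
  have hTne : T.Nonempty := by
    obtain ⟨i, hi, _⟩ := hTinf 0
    exact ⟨i, hi⟩
  obtain ⟨i0, hi0⟩ := hTne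
  have hlen : T.toList.length ≤ 2 ^ p := by
    rw [Finset.length_toList]
    exact hTcard
  refine ⟨fun n => L.get (T.toList.getD (n : ℕ) i0), fun n => List.get_mem L _, ?_⟩
  intro x
  obtain ⟨k, hk, hv⟩ := hTinf x
  obtain ⟨idx, hidx⟩ := List.mem_iff_get.mp (Finset.mem_toList.mpr hk)
  refine ⟨⟨idx.1, lt_of_lt_of_le idx.2 hlen⟩, ?_⟩
  have hpick : T.toList.getD ((⟨idx.1, lt_of_lt_of_le idx.2 hlen⟩ : Fin (2 ^ p)) : ℕ) i0 = k := by
    show T.toList.getD idx.1 i0 = k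
    rw [List.getD_eq_getElem _ _ idx.2, ← hidx]
    simp [List.get_eq_getElem]
  show (L.get (T.toList.getD _ i0)).2 + 1 ≤ ∑ j, (L.get (T.toList.getD _ i0)).1 j * x j
  rw [hpick]
  exact hv

/-! ### Integerization of a constraint in the `x` variables only -/

def lden (C : LC p 0) : ℕ := ∏ k, (C.a k).den

def LC0int (C : LC p 0) : (Fin p → ℤ) × ℤ :=
  (fun j => (C.a j).num * ((lden C / (C.a j).den : ℕ) : ℤ),
   if C.strict then ⌈(C.r * (lden C : ℚ))⌉ - 1 else ⌊(C.r * (lden C : ℚ))⌋)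

lemma lden_pos (C : LC p 0) : 0 < lden C :=
  Finset.prod_pos fun k _ => (C.a k).pos

lemma lc0_cast (C : LC p 0) (j : Fin p) :
    (((LC0int C).1 j : ℤ) : ℚ) = C.a j * (lden C : ℚ) := by
  have hdvd : (C.a j).den ∣ lden C := Finset.dvd_prod_of_mem _ (Finset.mem_univ j)
  have hden : ((C.a j).den : ℚ) ≠ 0 := by
    exact_mod_cast (C.a j).den_nz
  have key : (C.a j) * ((C.a j).den : ℚ) = ((C.a j).num : ℚ) := by
    nth_rewrite 1 [← Rat.num_div_den (C.a j)]
    rw [div_mul_cancel₀ _ hden]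
  obtain ⟨c, hc⟩ := hdvd
  have hdc : (lden C / (C.a j).den : ℕ) = c := by
    rw [hc]
    exact Nat.mul_div_cancel_left c (C.a j).pos
  show (((C.a j).num * ((lden C / (C.a j).den : ℕ) : ℤ) : ℤ) : ℚ) = _
  rw [hdc, hc]
  push_cast
  rw [← key]
  ring

lemma lc0_castR (C : LC p 0) (j : Fin p) :
    (((LC0int C).1 j : ℤ) : ℝ) = (C.a j : ℝ) * ((lden C : ℕ) : ℝ) := by
  have := lc0_cast C j
  exact_mod_cast congrArg (fun t : ℚ => (t : ℝ)) this

lemma int_sat_iff (C : LC p 0) (v : Fin p → ℤ) :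
    C.Sat (fun j => (v j : ℝ)) (fun i => i.elim0) ↔
      ∑ j, (LC0int C).1 j * v j ≤ (LC0int C).2 := by
  have hNpos : (0:ℚ) < (lden C : ℚ) := by exact_mod_cast lden_pos C
  have hval : C.lhs (fun j => (v j : ℝ)) (fun i => i.elim0)
      = ((∑ j, C.a j * (v j : ℚ) : ℚ) : ℝ) := by
    simp only [LC.lhs, Finset.univ_eq_empty, Finset.sum_empty, add_zero]
    push_cast
    rfl
  have hsum : ((∑ j, (LC0int C).1 j * v j : ℤ) : ℚ)
      = (lden C : ℚ) * ∑ j, C.a j * (v j : ℚ) := by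
    push_cast
    rw [Finset.mul_sum]
    refine Finset.sum_congr rfl fun j _ => ?_
    rw [show (((LC0int C).1 j : ℤ) : ℚ) = C.a j * (lden C : ℚ) from lc0_cast C j]
    ring
  have hQ : C.Sat (fun j => (v j : ℝ)) (fun i => i.elim0) ↔
      (if C.strict then (∑ j, C.a j * (v j : ℚ)) < C.r else (∑ j, C.a j * (v j : ℚ)) ≤ C.r) := by
    rw [LC.Sat, hval]
    cases hb : C.strict
    · rw [if_neg (by decide), if_neg (by decide)]
      exact Rat.cast_le
    · rw [if_pos (by decide), if_pos (by decide)]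
      exact Rat.cast_lt
  rw [hQ]
  cases hb : C.strict
  · rw [if_neg (by decide)]
    have h2 : (LC0int C).2 = ⌊(C.r * (lden C : ℚ))⌋ := by
      show (if C.strict then _ else _) = _
      rw [hb, if_neg (by decide)]
    rw [h2, Int.le_floor, hsum, mul_comm C.r]
    exact (mul_le_mul_iff_of_pos_left hNpos).symm
  · rw [if_pos (by decide)]
    have h2 : (LC0int C).2 = ⌈(C.r * (lden C : ℚ))⌉ - 1 := by
      show (if C.strict then _ else _) = _
      rw [hb, if_pos (by decide)]
    rw [h2]
    have : (∑ j, (LC0int C).1 j * v j ≤ ⌈(C.r * (lden C : ℚ))⌉ - 1)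
        ↔ (∑ j, (LC0int C).1 j * v j < ⌈(C.r * (lden C : ℚ))⌉) := by omega
    rw [this, Int.lt_ceil, hsum, mul_comm C.r]
    exact (mul_lt_mul_iff_of_pos_left hNpos).symm

lemma int_sat_real (C : LC p 0) (x : Fin p → ℝ)
    (hs : C.Sat x (fun i => i.elim0)) :
    ∑ j, ((LC0int C).1 j : ℝ) * x j < ((LC0int C).2 : ℝ) + 1 := by
  have hNpos : (0:ℝ) < ((lden C : ℕ) : ℝ) := by exact_mod_cast lden_pos C
  have hsum : ∑ j, ((LC0int C).1 j : ℝ) * x j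
      = ((lden C : ℕ) : ℝ) * ∑ j, (C.a j : ℝ) * x j := by
    rw [Finset.mul_sum]
    refine Finset.sum_congr rfl fun j _ => ?_
    rw [lc0_castR C j]
    ring
  have hlhs : C.lhs x (fun i => i.elim0) = ∑ j, (C.a j : ℝ) * x j := by
    simp only [LC.lhs, Finset.univ_eq_empty, Finset.sum_empty, add_zero]
  rw [LC.Sat, hlhs] at hs
  rw [hsum]
  cases hb : C.strict <;> rw [hb] at hs
  · rw [if_neg (by decide)] at hs
    have h2 : (LC0int C).2 = ⌊(C.r * (lden C : ℚ))⌋ := by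
      show (if C.strict then _ else _) = _
      rw [hb, if_neg (by decide)]
    rw [h2]
    have h3 : ((C.r * (lden C : ℚ)) : ℚ) < (⌊(C.r * (lden C : ℚ))⌋ : ℚ) + 1 :=
      Int.lt_floor_add_one _
    have h4 : ((C.r : ℝ) * ((lden C : ℕ) : ℝ)) < ((⌊(C.r * (lden C : ℚ))⌋ : ℤ) : ℝ) + 1 := by
      exact_mod_cast h3
    nlinarith [mul_le_mul_of_nonneg_left hs hNpos.le]
  · rw [if_pos (by decide)] at hs
    have h2 : (LC0int C).2 = ⌈(C.r * (lden C : ℚ))⌉ - 1 := by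
      show (if C.strict then _ else _) = _
      rw [hb, if_pos (by decide)]
    rw [h2]
    have h3 : ((C.r * (lden C : ℚ)) : ℚ) ≤ (⌈(C.r * (lden C : ℚ))⌉ : ℚ) := Int.le_ceil _
    have h4 : ((C.r : ℝ) * ((lden C : ℕ) : ℝ)) ≤ ((⌈(C.r * (lden C : ℚ))⌉ : ℤ) : ℝ) := by
      exact_mod_cast h3
    push_cast
    nlinarith [mul_lt_mul_of_pos_left hs hNpos]

end TwoPow


open TwoPow in
/-- Every inequality valid for the mixed integer hull `P_I` is a `2^p`-disjunctive cut for `P`. -/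
theorem every_valid_inequality_is_two_pow_p_disjunctive_cut
    {p q m : ℕ} (A : Matrix (Fin m) (Fin p) ℚ) (G : Matrix (Fin m) (Fin q) ℚ) (b : Fin m → ℚ)
    (α : Fin p → ℚ) (β : Fin q → ℚ) (γ : ℚ)
    (hvalid : ∀ z ∈ mixedIntHull A G b,
      (∑ j, (α j : ℝ) * z.1 j) + (∑ j, (β j : ℝ) * z.2 j) ≤ (γ : ℝ)) :
    ∃ (d : Fin (2 ^ p) → Fin p → ℤ) (δ : Fin (2 ^ p) → ℤ),
      IsKDisjunction (2 ^ p) d δ ∧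
      ∀ z ∈ feasSet A G b,
        (γ : ℝ) < (∑ j, (α j : ℝ) * z.1 j) + (∑ j, (β j : ℝ) * z.2 j) →
        ∀ i, (δ i : ℝ) < ∑ j, (d i j : ℝ) * z.1 j := by

  classical
  set L : List (LC p q) :=
    (List.ofFn (fun i : Fin m => (⟨fun j => A i j, fun j => G i j, b i, false⟩ : LC p q)))
      ++ [⟨fun j => -α j, fun j => -β j, -γ, true⟩] with hLdef
  have hLsat : ∀ (x : Fin p → ℝ) (y : Fin q → ℝ),
      (∀ C ∈ L, C.Sat x y) ↔ ((x, y) ∈ feasSet A G b ∧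
        (γ : ℝ) < (∑ j, (α j : ℝ) * x j) + (∑ j, (β j : ℝ) * y j)) := by
    intro x y
    constructor
    · intro h
      constructor
      · intro i
        exact h _ (List.mem_append_left _ (List.mem_ofFn.mpr ⟨i, rfl⟩))
      · have h1 := h _ (List.mem_append_right _ (List.mem_singleton.mpr rfl))
        have h2 : (∑ j, ((-α j : ℚ) : ℝ) * x j) + (∑ j, ((-β j : ℚ) : ℝ) * y j)
            < ((-γ : ℚ) : ℝ) := h1
        push_cast at h2
        simp only [neg_mul] at h2
        rw [Finset.sum_neg_distrib, Finset.sum_neg_distrib] at h2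
        linarith
    · rintro ⟨hfeas, hcut⟩ C hC
      rcases List.mem_append.mp hC with hA | hB
      · obtain ⟨i, hi⟩ := List.mem_ofFn.mp hA
        subst hi
        exact hfeas i
      · rw [List.mem_singleton] at hB
        subst hB
        show (∑ j, ((-α j : ℚ) : ℝ) * x j) + (∑ j, ((-β j : ℚ) : ℝ) * y j) < ((-γ : ℚ) : ℝ)
        push_cast
        simp only [neg_mul]
        rw [Finset.sum_neg_distrib, Finset.sum_neg_distrib]
        linarith
  obtain ⟨L', hL'⟩ := elim_all L
  have hlat : ∀ v : Fin p → ℤ,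
      ¬ ∀ C ∈ L', C.Sat (fun j => (v j : ℝ)) (fun i => i.elim0) := by
    intro v hsat
    obtain ⟨y, hy⟩ := (hL' _).mp hsat
    obtain ⟨hfeas, hcut⟩ := (hLsat _ y).mp hy
    have hmem : (((fun j => (v j : ℝ)) : Fin p → ℝ), y) ∈ mixedIntHull A G b :=
      subset_convexHull ℝ _ ⟨hfeas, fun j => ⟨v j, rfl⟩⟩
    have := hvalid _ hmem
    simp only at this
    linarith
  have hinfZ : ∀ x : Fin p → ℤ, ∃ R ∈ L'.map LC0int, R.2 + 1 ≤ ∑ j, R.1 j * x j := by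
    intro v
    obtain ⟨C, hC, hnot⟩ : ∃ C ∈ L', ¬ C.Sat (fun j => (v j : ℝ)) (fun i => i.elim0) := by
      by_contra hno
      push_neg at hno
      exact hlat v (fun C hC => hno C hC)
    refine ⟨LC0int C, List.mem_map_of_mem hC, ?_⟩
    have h2 : ¬ (∑ j, (LC0int C).1 j * v j ≤ (LC0int C).2) :=
      fun hle => hnot ((int_sat_iff C v).mpr hle)
    omega
  obtain ⟨f, hfmem, hfcov⟩ := bell_list (L'.map LC0int) hinfZ
  refine ⟨fun i => fun j => -(f i).1 j, fun i => -(f i).2 - 1, ?_, ?_⟩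
  · intro v
    obtain ⟨i, hv⟩ := hfcov v
    refine ⟨i, ?_⟩
    have hneg : ∑ j, (-(f i).1 j) * v j = -∑ j, (f i).1 j * v j := by
      rw [← Finset.sum_neg_distrib]
      exact Finset.sum_congr rfl fun j _ => by ring
    show ∑ j, (-(f i).1 j) * v j ≤ -(f i).2 - 1
    rw [hneg]
    omega
  · intro z hz hcut i
    have hLs : ∀ C ∈ L, C.Sat z.1 z.2 := (hLsat z.1 z.2).mpr ⟨hz, hcut⟩
    have hL's : ∀ C ∈ L', C.Sat z.1 (fun i => i.elim0) := (hL' z.1).mpr ⟨z.2, hLs⟩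
    obtain ⟨C, hC, hCeq⟩ := List.mem_map.mp (hfmem i)
    have hreal := int_sat_real C z.1 (hL's C hC)
    rw [hCeq] at hreal
    have hneg : ∑ j, ((-(f i).1 j : ℤ) : ℝ) * z.1 j = -∑ j, (((f i).1 j : ℤ) : ℝ) * z.1 j := by
      rw [← Finset.sum_neg_distrib]
      refine Finset.sum_congr rfl fun j _ => ?_
      push_cast
      ring
    push_cast
    push_cast at hneg hreal
    rw [hneg]
    linarith


end
end

section
/- Let p, q, m ∈ ℕ, let A ∈ ℚ^{m×p}, G ∈ ℚ^{m×q}, b ∈ ℚ^m, and suppose P := {(x,y) ∈ ℝ^p × ℝ^q : Ax + Gy ≤ b componentwise} is bounded (a polytope) with P_I := conv({(x,y) ∈ P : x ∈ ℤ^p}) nonempty. Let c ∈ ℚ^p, h ∈ ℚ^q, let γ* := sup{c·x + h·y : (x,y) ∈ P_I}, and for i ∈ ℕ let γ^{(i)} := sup{c·x + h·y : (x,y) ∈ P^{(i)}}, where P^{(i)} denotes the i-th iterated split closure of P. Then for every ε > 0 there exists i₀ ∈ ℕ with |γ^{(i₀)} − γ*| < ε. -/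
open Set

noncomputable section

/-- The split closure of a set `C`: the intersection of `C` with all half-spaces valid for
both sides of some split disjunction `d·x ≤ δ ∨ d·x ≥ δ + 1`. -/
def splitClosure {p q : ℕ} (C : Set ((Fin p → ℝ) × (Fin q → ℝ))) :
    Set ((Fin p → ℝ) × (Fin q → ℝ)) :=
  {z ∈ C | ∀ (α : Fin p → ℝ) (β : Fin q → ℝ) (γ : ℝ),
    (∃ (d : Fin p → ℤ) (δ : ℤ),
      ∀ w ∈ C, ((∑ j, (d j : ℝ) * w.1 j) ≤ (δ : ℝ) ∨ (δ : ℝ) + 1 ≤ (∑ j, (d j : ℝ) * w.1 j)) →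
        (∑ j, α j * w.1 j) + (∑ j, β j * w.2 j) ≤ γ) →
    (∑ j, α j * z.1 j) + (∑ j, β j * z.2 j) ≤ γ}

/-- Iterated split closures, `C^{(0)} = C`. -/
def splitIter {p q : ℕ} (C : Set ((Fin p → ℝ) × (Fin q → ℝ))) :
    ℕ → Set ((Fin p → ℝ) × (Fin q → ℝ))
  | 0 => C
  | (i+1) => splitClosure (splitIter C i)

section Aux

variable {p q : ℕ}

/-- The linear functional `z ↦ α·z.1 + β·z.2`. -/
def lfun (α : Fin p → ℝ) (β : Fin q → ℝ) : ((Fin p → ℝ) × (Fin q → ℝ)) →ₗ[ℝ] ℝ where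
  toFun z := (∑ j, α j * z.1 j) + (∑ j, β j * z.2 j)
  map_add' z w := by
    simp only [Prod.fst_add, Prod.snd_add, Pi.add_apply, mul_add, Finset.sum_add_distrib]
    ring
  map_smul' r z := by
    simp only [Prod.smul_fst, Prod.smul_snd, Pi.smul_apply, smul_eq_mul, RingHom.id_apply,
      Finset.mul_sum, mul_add]
    congr 1 <;> exact Finset.sum_congr rfl fun j _ => by ring

@[simp] lemma lfun_apply (α : Fin p → ℝ) (β : Fin q → ℝ) (z : (Fin p → ℝ) × (Fin q → ℝ)) :
    lfun α β z = (∑ j, α j * z.1 j) + (∑ j, β j * z.2 j) := rfl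

lemma lfun_cont (α : Fin p → ℝ) (β : Fin q → ℝ) : Continuous (lfun α β) :=
  (lfun α β).continuous_of_finiteDimensional

/-- Every continuous linear functional has the `lfun` form. -/
lemma exists_lfun_eq (f : ((Fin p → ℝ) × (Fin q → ℝ)) →L[ℝ] ℝ) :
    ∃ (α : Fin p → ℝ) (β : Fin q → ℝ), ∀ z, f z = lfun α β z := by
  refine ⟨fun j => f (Pi.single j 1, 0), fun j => f (0, Pi.single j 1), fun z => ?_⟩
  have hz : z = (∑ j, z.1 j • ((Pi.single j 1 : Fin p → ℝ), (0 : Fin q → ℝ)))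
      + ∑ j, z.2 j • ((0 : Fin p → ℝ), (Pi.single j 1 : Fin q → ℝ)) := by
    refine Prod.ext ?_ ?_ <;>
      simp only [Prod.fst_add, Prod.snd_add, Prod.fst_sum, Prod.snd_sum, Prod.smul_fst,
        Prod.smul_snd, smul_zero, Finset.sum_const_zero, add_zero, zero_add]
    · funext k
      simp [Finset.sum_apply, Pi.single_apply, Finset.sum_ite_eq' , mul_comm]
    · funext k
      simp [Finset.sum_apply, Pi.single_apply, Finset.sum_ite_eq', mul_comm]
  calc f z = f ((∑ j, z.1 j • ((Pi.single j 1 : Fin p → ℝ), (0 : Fin q → ℝ)))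
      + ∑ j, z.2 j • ((0 : Fin p → ℝ), (Pi.single j 1 : Fin q → ℝ))) := by rw [← hz]
    _ = (∑ j, z.1 j * f ((Pi.single j 1 : Fin p → ℝ), (0 : Fin q → ℝ)))
        + ∑ j, z.2 j * f ((0 : Fin p → ℝ), (Pi.single j 1 : Fin q → ℝ)) := by
      rw [map_add, map_sum, map_sum]
      congr 1 <;> refine Finset.sum_congr rfl fun j _ => ?_ <;>
        rw [ContinuousLinearMap.map_smul, smul_eq_mul]
    _ = _ := by
      simp only [lfun_apply]
      congr 1 <;> exact Finset.sum_congr rfl fun j _ => by ring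

end Aux


section Aux2

variable {p q m : ℕ}

/-- A "valid cut" for `C`. -/
def validCut (C : Set ((Fin p → ℝ) × (Fin q → ℝ))) (α : Fin p → ℝ) (β : Fin q → ℝ) (γ : ℝ) :
    Prop :=
  ∃ (d : Fin p → ℤ) (δ : ℤ),
    ∀ w ∈ C, ((∑ j, (d j : ℝ) * w.1 j) ≤ (δ : ℝ) ∨ (δ : ℝ) + 1 ≤ (∑ j, (d j : ℝ) * w.1 j)) →
      lfun α β w ≤ γ

lemma splitClosure_eq (C : Set ((Fin p → ℝ) × (Fin q → ℝ))) :
    splitClosure C = C ∩ ⋂ (α : Fin p → ℝ) (β : Fin q → ℝ) (γ : ℝ) (_ : validCut C α β γ),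
      {z | lfun α β z ≤ γ} := by
  ext z
  simp only [splitClosure, validCut, Set.mem_setOf_eq, Set.mem_inter_iff, Set.mem_iInter,
    lfun_apply]


lemma splitClosure_subset (C : Set ((Fin p → ℝ) × (Fin q → ℝ))) : splitClosure C ⊆ C :=
  fun _ hz => hz.1

lemma splitClosure_isClosed {C : Set ((Fin p → ℝ) × (Fin q → ℝ))} (hC : IsClosed C) :
    IsClosed (splitClosure C) := by
  rw [splitClosure_eq]
  exact hC.inter (isClosed_iInter fun α => isClosed_iInter fun β => isClosed_iInter fun γ =>
    isClosed_iInter fun _ => isClosed_le (lfun_cont α β) continuous_const)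

lemma splitClosure_convex {C : Set ((Fin p → ℝ) × (Fin q → ℝ))} (hC : Convex ℝ C) :
    Convex ℝ (splitClosure C) := by
  rw [splitClosure_eq]
  exact hC.inter (convex_iInter fun α => convex_iInter fun β => convex_iInter fun γ =>
    convex_iInter fun _ => convex_halfSpace_le (lfun α β).isLinear γ)

lemma feasSet_isClosed (A : Matrix (Fin m) (Fin p) ℚ) (G : Matrix (Fin m) (Fin q) ℚ)
    (b : Fin m → ℚ) : IsClosed (feasSet A G b) := by
  have : feasSet A G b = ⋂ i : Fin m,
      {z | lfun (fun j => (A i j : ℝ)) (fun j => (G i j : ℝ)) z ≤ (b i : ℝ)} := by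
    ext z; simp [feasSet, lfun_apply]
  rw [this]
  exact isClosed_iInter fun i => isClosed_le (lfun_cont _ _) continuous_const

lemma feasSet_convex (A : Matrix (Fin m) (Fin p) ℚ) (G : Matrix (Fin m) (Fin q) ℚ)
    (b : Fin m → ℚ) : Convex ℝ (feasSet A G b) := by
  have : feasSet A G b = ⋂ i : Fin m,
      {z | lfun (fun j => (A i j : ℝ)) (fun j => (G i j : ℝ)) z ≤ (b i : ℝ)} := by
    ext z; simp [feasSet, lfun_apply]
  rw [this]
  exact convex_iInter fun i => convex_halfSpace_le (lfun _ _).isLinear _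

lemma splitIter_antitone (C : Set ((Fin p → ℝ) × (Fin q → ℝ))) :
    Antitone (splitIter C) := by
  refine antitone_nat_of_succ_le fun i => ?_
  exact splitClosure_subset _

lemma splitIter_subset (C : Set ((Fin p → ℝ) × (Fin q → ℝ))) (i : ℕ) : splitIter C i ⊆ C :=
  splitIter_antitone C (Nat.zero_le i)

lemma splitIter_isClosed {C : Set ((Fin p → ℝ) × (Fin q → ℝ))} (hC : IsClosed C) (i : ℕ) :
    IsClosed (splitIter C i) := by
  induction i with
  | zero => exact hC
  | succ i ih => exact splitClosure_isClosed ih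

lemma splitIter_convex {C : Set ((Fin p → ℝ) × (Fin q → ℝ))} (hC : Convex ℝ C) (i : ℕ) :
    Convex ℝ (splitIter C i) := by
  induction i with
  | zero => exact hC
  | succ i ih => exact splitClosure_convex ih

/-- integral vectors give integer values to integer combinations -/
lemma intVec_sum_int (d : Fin p → ℤ) {x : Fin p → ℝ} (hx : IsIntVec x) :
    ∃ k : ℤ, (∑ j, (d j : ℝ) * x j) = (k : ℝ) := by
  choose n hn using hx
  refine ⟨∑ j, d j * n j, ?_⟩
  push_cast
  exact Finset.sum_congr rfl fun j _ => by rw [hn j]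

lemma int_disj (d : Fin p → ℤ) (δ : ℤ) {x : Fin p → ℝ} (hx : IsIntVec x) :
    (∑ j, (d j : ℝ) * x j) ≤ (δ : ℝ) ∨ (δ : ℝ) + 1 ≤ (∑ j, (d j : ℝ) * x j) := by
  obtain ⟨k, hk⟩ := intVec_sum_int d hx
  rw [hk]
  rcases le_or_gt k δ with hle | hlt
  · exact Or.inl (by exact_mod_cast hle)
  · refine Or.inr ?_
    have : δ + 1 ≤ k := hlt
    exact_mod_cast this

/-- The mixed integer hull survives every split closure round. -/
lemma mixedIntHull_subset_splitIter (A : Matrix (Fin m) (Fin p) ℚ)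
    (G : Matrix (Fin m) (Fin q) ℚ) (b : Fin m → ℚ) (i : ℕ) :
    mixedIntHull A G b ⊆ splitIter (feasSet A G b) i := by
  induction i with
  | zero => exact convexHull_min (Set.sep_subset _ _) (feasSet_convex A G b)
  | succ i ih =>
    rw [show splitIter (feasSet A G b) (i+1) = splitClosure (splitIter (feasSet A G b) i)
      from rfl, splitClosure_eq]
    refine Set.subset_inter ih ?_
    refine Set.subset_iInter fun α => Set.subset_iInter fun β => Set.subset_iInter fun γ =>
      Set.subset_iInter fun hcut => ?_
    obtain ⟨d, δ, hval⟩ := hcut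
    refine convexHull_min (fun w hw => ?_) (convex_halfSpace_le (lfun α β).isLinear γ)
    exact hval w (ih (subset_convexHull ℝ _ hw)) (int_disj d δ hw.2)

end Aux2

section Aux3

variable {p q m : ℕ} (A : Matrix (Fin m) (Fin p) ℚ) (G : Matrix (Fin m) (Fin q) ℚ)
  (b : Fin m → ℚ)

lemma feasSet_isCompact (hbdd : Bornology.IsBounded (feasSet A G b)) :
    IsCompact (feasSet A G b) :=
  Metric.isCompact_of_isClosed_isBounded (feasSet_isClosed A G b) hbdd

lemma splitIter_isCompact (hbdd : Bornology.IsBounded (feasSet A G b)) (i : ℕ) :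
    IsCompact (splitIter (feasSet A G b) i) :=
  IsCompact.of_isClosed_subset (feasSet_isCompact A G b hbdd)
    (splitIter_isClosed (feasSet_isClosed A G b) i) (splitIter_subset _ i)

/-- Any valid cut for `Q = ⋂ i, P^{(i)}` is satisfied on `Q`: `Q` is a fixed point of the
split closure operator. -/
lemma valid_on_iInter (hbdd : Bornology.IsBounded (feasSet A G b))
    {α : Fin p → ℝ} {β : Fin q → ℝ} {γ : ℝ}
    (hcut : validCut (⋂ i, splitIter (feasSet A G b) i) α β γ) :
    ∀ z ∈ ⋂ i, splitIter (feasSet A G b) i, lfun α β z ≤ γ := by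
  set P := feasSet A G b with hP
  obtain ⟨d, δ, hval⟩ := hcut
  intro z hz
  refine le_of_forall_pos_le_add fun ε hε => ?_
  set g := lfun (fun j => (d j : ℝ)) (0 : Fin q → ℝ) with hgdef
  have hg : ∀ w : (Fin p → ℝ) × (Fin q → ℝ), g w = ∑ j, (d j : ℝ) * w.1 j := by
    intro w; simp [hgdef]
  set U : Set ((Fin p → ℝ) × (Fin q → ℝ)) :=
    {w | lfun α β w < γ + ε} ∪ ({w | (δ : ℝ) < g w} ∩ {w | g w < (δ : ℝ) + 1}) with hUdef
  have hUopen : IsOpen U := by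
    refine IsOpen.union (isOpen_lt (lfun_cont α β) continuous_const) ?_
    exact (isOpen_lt continuous_const (lfun_cont _ _)).inter
      (isOpen_lt (lfun_cont _ _) continuous_const)
  have hQU : (⋂ i, splitIter P i) ⊆ U := by
    intro w hw
    rcases le_or_gt (g w) (δ : ℝ) with hle | hlt
    · exact Or.inl (lt_of_le_of_lt (hval w hw (Or.inl (by rw [← hg]; exact hle)))
        (lt_add_of_pos_right _ hε))
    · rcases le_or_gt ((δ : ℝ) + 1) (g w) with hge | hlt2
      · exact Or.inl (lt_of_le_of_lt (hval w hw (Or.inr (by rw [← hg]; exact hge)))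
          (lt_add_of_pos_right _ hε))
      · exact Or.inr ⟨hlt, hlt2⟩
  have hdir : Directed (fun x1 x2 : Set ((Fin p → ℝ) × (Fin q → ℝ)) => x1 ⊇ x2)
      (splitIter P) := fun i j =>
    ⟨max i j, splitIter_antitone P (le_max_left i j), splitIter_antitone P (le_max_right i j)⟩
  obtain ⟨i, hi⟩ := exists_subset_nhds_of_isCompact' hdir
    (splitIter_isCompact A G b hbdd) (splitIter_isClosed (feasSet_isClosed A G b))
    (fun x hx => hUopen.mem_nhds (hQU hx))
  have hz' : z ∈ splitClosure (splitIter P i) := Set.mem_iInter.1 hz (i + 1)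
  obtain ⟨-, hz2⟩ := hz'
  have key := hz2 α β (γ + ε) ⟨d, δ, fun w hw hdisj => ?_⟩
  · exact key
  · have hwU : w ∈ U := hi hw
    rcases hwU with hlt | ⟨h1, h2⟩
    · exact le_of_lt hlt
    · exfalso
      simp only [Set.mem_setOf_eq, hg] at h1 h2
      rcases hdisj with h | h
      · exact absurd h (not_le.2 h1)
      · exact absurd h (not_le.2 h2)

end Aux3

section Aux4

variable {p q m : ℕ} (A : Matrix (Fin m) (Fin p) ℚ) (G : Matrix (Fin m) (Fin q) ℚ)
  (b : Fin m → ℚ)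

lemma isCompact_convexHull_union {S T : Set ((Fin p → ℝ) × (Fin q → ℝ))}
    (hSc : IsCompact S) (hTc : IsCompact T) (hS : Convex ℝ S) (hT : Convex ℝ T) :
    IsCompact (convexHull ℝ (S ∪ T)) := by
  rcases S.eq_empty_or_nonempty with hS0 | hS0
  · rw [hS0, Set.empty_union, hT.convexHull_eq]; exact hTc
  rcases T.eq_empty_or_nonempty with hT0 | hT0
  · rw [hT0, Set.union_empty, hS.convexHull_eq]; exact hSc
  rw [convexHull_union hS0 hT0, hS.convexHull_eq, hT.convexHull_eq]
  have himg : convexJoin ℝ S T =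
      (fun x : ((Fin p → ℝ) × (Fin q → ℝ)) × ((Fin p → ℝ) × (Fin q → ℝ)) × ℝ =>
        (1 - x.2.2) • x.1 + x.2.2 • x.2.1) '' (S ×ˢ T ×ˢ Icc (0 : ℝ) 1) := by
    ext x
    simp only [mem_convexJoin, segment_eq_image, Set.mem_image, Set.mem_prod]
    constructor
    · rintro ⟨a, ha, b, hb, θ, hθ, rfl⟩
      exact ⟨(a, b, θ), ⟨ha, hb, hθ⟩, rfl⟩
    · rintro ⟨⟨a, b, θ⟩, ⟨ha, hb, hθ⟩, rfl⟩
      exact ⟨a, ha, b, hb, θ, hθ, rfl⟩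
  rw [himg]
  refine (hSc.prod (hTc.prod isCompact_Icc)).image ?_
  fun_prop

lemma iInter_splitIter_isCompact (hbdd : Bornology.IsBounded (feasSet A G b)) :
    IsCompact (⋂ i, splitIter (feasSet A G b) i) :=
  IsCompact.of_isClosed_subset (feasSet_isCompact A G b hbdd)
    (isClosed_iInter fun i => splitIter_isClosed (feasSet_isClosed A G b) i)
    (Set.iInter_subset _ 0)

lemma iInter_splitIter_convex :
    Convex ℝ (⋂ i, splitIter (feasSet A G b) i) :=
  convex_iInter fun i => splitIter_convex (feasSet_convex A G b) i

lemma extremePoints_intVec (hbdd : Bornology.IsBounded (feasSet A G b)) :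
    ∀ z ∈ Set.extremePoints ℝ (⋂ i, splitIter (feasSet A G b) i), IsIntVec z.1 := by
  intro z hz
  set Q := ⋂ i, splitIter (feasSet A G b) i with hQdef
  have hQconv : Convex ℝ Q := iInter_splitIter_convex A G b
  have hQcomp : IsCompact Q := iInter_splitIter_isCompact A G b hbdd
  obtain ⟨hzQ, hzext⟩ := (mem_extremePoints).1 hz
  intro j
  by_contra hnonint
  push_neg at hnonint
  set t := z.1 j with htdef
  set δ : ℤ := ⌊t⌋ with hδdef
  have h1 : (δ : ℝ) < t := (Int.floor_le t).lt_of_ne fun h => hnonint ⌊t⌋ h.symm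
  have h2 : t < (δ : ℝ) + 1 := Int.lt_floor_add_one t
  have hlin : IsLinearMap ℝ (fun w : (Fin p → ℝ) × (Fin q → ℝ) => w.1 j) :=
    ⟨fun a b => rfl, fun c x => rfl⟩
  have hclS : IsClosed {w : (Fin p → ℝ) × (Fin q → ℝ) | w.1 j ≤ (δ : ℝ)} :=
    isClosed_le ((continuous_apply j).comp continuous_fst) continuous_const
  have hclT : IsClosed {w : (Fin p → ℝ) × (Fin q → ℝ) | (δ : ℝ) + 1 ≤ w.1 j} :=
    isClosed_le continuous_const ((continuous_apply j).comp continuous_fst)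
  set S := Q ∩ {w | w.1 j ≤ (δ : ℝ)} with hSdef
  set T := Q ∩ {w | (δ : ℝ) + 1 ≤ w.1 j} with hTdef
  have hSconv : Convex ℝ S := hQconv.inter (convex_halfSpace_le hlin _)
  have hTconv : Convex ℝ T := hQconv.inter (convex_halfSpace_ge hlin _)
  have hScomp : IsCompact S := hQcomp.inter_right hclS
  have hTcomp : IsCompact T := hQcomp.inter_right hclT
  set K := convexHull ℝ (S ∪ T) with hKdef
  have hKcomp : IsCompact K := isCompact_convexHull_union hScomp hTcomp hSconv hTconv
  have hKQ : K ⊆ Q := convexHull_min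
    (Set.union_subset Set.inter_subset_left Set.inter_subset_left) hQconv
  have hzK : z ∉ K := by
    intro hzK
    rcases S.eq_empty_or_nonempty with hS0 | hS0
    · rw [hKdef, hS0, Set.empty_union, hTconv.convexHull_eq] at hzK
      exact absurd hzK.2 (not_le.2 h2)
    rcases T.eq_empty_or_nonempty with hT0 | hT0
    · rw [hKdef, hT0, Set.union_empty, hSconv.convexHull_eq] at hzK
      exact absurd hzK.2 (not_le.2 h1)
    rw [hKdef, convexHull_union hS0 hT0, hSconv.convexHull_eq, hTconv.convexHull_eq,
      mem_convexJoin] at hzK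
    obtain ⟨a, ha, bb, hb, u, v, hu, hv, huv, habz⟩ := hzK
    rcases eq_or_lt_of_le hu with hu0 | hu0
    · have hzb : z = bb := by
        rw [← habz, ← hu0, zero_smul, zero_add]
        have : v = 1 := by linarith
        rw [this, one_smul]
      have hb2 := hb.2
      rw [← hzb] at hb2
      exact absurd hb2 (not_le.2 h2)
    rcases eq_or_lt_of_le hv with hv0 | hv0
    · have hza : z = a := by
        rw [← habz, ← hv0, zero_smul, add_zero]
        have : u = 1 := by linarith
        rw [this, one_smul]
      have ha2 := ha.2
      rw [← hza] at ha2
      exact absurd ha2 (not_le.2 h1)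
    · have hopen : z ∈ openSegment ℝ a bb := ⟨u, v, hu0, hv0, huv, habz⟩
      obtain ⟨haz, -⟩ := hzext a (hKQ (subset_convexHull ℝ _ (Or.inl ha))) bb
        (hKQ (subset_convexHull ℝ _ (Or.inr hb))) hopen
      rw [haz] at ha
      exact absurd ha.2 (not_le.2 h1)
  obtain ⟨f, u, hfu, hul⟩ := geometric_hahn_banach_closed_point
    (convex_convexHull ℝ _) hKcomp.isClosed hzK
  obtain ⟨α, β, hf⟩ := exists_lfun_eq f
  have hdsum : ∀ w : (Fin p → ℝ) × (Fin q → ℝ),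
      (∑ j', ((Pi.single j 1 : Fin p → ℤ) j' : ℝ) * w.1 j') = w.1 j := by
    intro w
    rw [Finset.sum_eq_single j]
    · simp
    · intro k _ hk
      simp [Pi.single_eq_of_ne hk]
    · simp
  have hvc : validCut Q α β u := by
    refine ⟨Pi.single j 1, δ, fun w hw hdisj => ?_⟩
    rw [hdsum w] at hdisj
    have hwK : w ∈ K := by
      rcases hdisj with hle | hge
      · exact subset_convexHull ℝ _ (Or.inl ⟨hw, hle⟩)
      · exact subset_convexHull ℝ _ (Or.inr ⟨hw, hge⟩)
    rw [← hf w]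
    exact le_of_lt (hfu w hwK)
  have hle := valid_on_iInter A G b hbdd hvc z hzQ
  rw [← hf z] at hle
  linarith

lemma iInter_subset_closure_mixedIntHull (hbdd : Bornology.IsBounded (feasSet A G b)) :
    (⋂ i, splitIter (feasSet A G b) i) ⊆ closure (mixedIntHull A G b) := by
  have hKM := closure_convexHull_extremePoints (iInter_splitIter_isCompact A G b hbdd)
    (iInter_splitIter_convex A G b)
  rw [← hKM]
  refine closure_mono (convexHull_mono fun z hz => ?_)
  refine ⟨Set.iInter_subset _ 0 (hz.1), extremePoints_intVec A G b hbdd z hz⟩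

end Aux4

/-- The split closures approximate the mixed integer optimal value arbitrarily well. -/
theorem split_closure_value_approximates_mixed_integer_optimum
    {p q m : ℕ} (A : Matrix (Fin m) (Fin p) ℚ) (G : Matrix (Fin m) (Fin q) ℚ) (b : Fin m → ℚ)
    (c : Fin p → ℚ) (h : Fin q → ℚ)
    (hbdd : Bornology.IsBounded (feasSet A G b))
    (hne : (mixedIntHull A G b).Nonempty) :
    ∀ ε > (0 : ℝ), ∃ i₀ : ℕ,
      |sSup ((fun z : (Fin p → ℝ) × (Fin q → ℝ) =>
            (∑ j, (c j : ℝ) * z.1 j) + (∑ j, (h j : ℝ) * z.2 j)) '' splitIter (feasSet A G b) i₀)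
        - sSup ((fun z : (Fin p → ℝ) × (Fin q → ℝ) =>
            (∑ j, (c j : ℝ) * z.1 j) + (∑ j, (h j : ℝ) * z.2 j)) '' mixedIntHull A G b)| < ε := by
  intro ε hε
  set P := feasSet A G b with hPdef
  set PI := mixedIntHull A G b with hPIdef
  set f : (Fin p → ℝ) × (Fin q → ℝ) → ℝ :=
    fun z => lfun (fun j => (c j : ℝ)) (fun j => (h j : ℝ)) z with hfdef
  have hFcont : Continuous f := lfun_cont _ _
  have hPc : IsCompact P := feasSet_isCompact A G b hbdd
  have hPI_sub : PI ⊆ P := mixedIntHull_subset_splitIter A G b 0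
  have hbddP : BddAbove (f '' P) := (hPc.image hFcont).bddAbove
  have hbddPI : BddAbove (f '' PI) := hbddP.mono (Set.image_mono (f := f) hPI_sub)
  set γstar := sSup (f '' PI) with hγdef
  have hub : ∀ w ∈ closure PI, f w ≤ γstar := by
    intro w hw
    have h1 : f w ∈ closure (f '' PI) :=
      image_closure_subset_closure_image hFcont ⟨w, hw, rfl⟩
    have h2 : closure (f '' PI) ⊆ Iic γstar :=
      closure_minimal (fun r hr => le_csSup hbddPI hr) isClosed_Iic
    exact h2 h1
  set U : Set ((Fin p → ℝ) × (Fin q → ℝ)) := f ⁻¹' Iio (γstar + ε) with hUdef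
  have hUopen : IsOpen U := IsOpen.preimage hFcont isOpen_Iio
  have hQU : (⋂ i, splitIter P i) ⊆ U := by
    intro w hw
    have := hub w (iInter_subset_closure_mixedIntHull A G b hbdd hw)
    exact lt_of_le_of_lt this (lt_add_of_pos_right _ hε)
  have hdir : Directed (fun x1 x2 : Set ((Fin p → ℝ) × (Fin q → ℝ)) => x1 ⊇ x2)
      (splitIter P) := fun i j =>
    ⟨max i j, splitIter_antitone P (le_max_left i j), splitIter_antitone P (le_max_right i j)⟩
  obtain ⟨i₀, hi₀⟩ := exists_subset_nhds_of_isCompact' hdir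
    (splitIter_isCompact A G b hbdd) (splitIter_isClosed (feasSet_isClosed A G b))
    (fun x hx => hUopen.mem_nhds (hQU hx))
  refine ⟨i₀, ?_⟩
  show |sSup (f '' splitIter P i₀) - sSup (f '' PI)| < ε
  have hSne : (splitIter P i₀).Nonempty :=
    hne.mono (mixedIntHull_subset_splitIter A G b i₀)
  have hSc : IsCompact (splitIter P i₀) := splitIter_isCompact A G b hbdd i₀
  obtain ⟨z₀, hz₀m, hz₀max⟩ := hSc.exists_isMaxOn hSne hFcont.continuousOn
  have hsup_eq : sSup (f '' splitIter P i₀) = f z₀ := by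
    refine le_antisymm (csSup_le (hSne.image f) ?_)
      (le_csSup (hSc.image hFcont).bddAbove (Set.mem_image_of_mem f hz₀m))
    rintro r ⟨w, hw, rfl⟩
    exact hz₀max hw
  have hlt : f z₀ < γstar + ε := hi₀ hz₀m
  have hge : γstar ≤ sSup (f '' splitIter P i₀) :=
    csSup_le_csSup (hSc.image hFcont).bddAbove (hne.image f)
      (Set.image_mono (f := f) (mixedIntHull_subset_splitIter A G b i₀))
  rw [abs_lt]
  constructor <;> [skip; skip] <;> rw [hsup_eq] at hge ⊢ <;> linarith
end
end

section
/- Let p, q, m ∈ ℕ, let A ∈ ℚ^{m×p}, G ∈ ℚ^{m×q}, b ∈ ℚ^m, c ∈ ℚ^p, h ∈ ℚ^q, and let P := {(x,y) ∈ ℝ^p × ℝ^q : Ax + Gy ≤ b componentwise}. Let (x*,y*) ∈ P, set γ* := c·x* + h·y*, and suppose there exists ε > 0 such that c·x + h·y ≤ γ* − ε for every (x,y) ∈ P with x ∈ ℤ^p. Let V be a finite subset of ℚ^m × ℚ such that: every (u,s) ∈ V satisfies u ≥ 0, s ≥ 0, uᵀG = s·h, and uᵀA − s·c ∈ ℤ^p;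 and every (w,t) ∈ ℝ^m × ℝ with w ≥ 0, t ≥ 0, wᵀG = t·h is a nonnegative linear combination of elements of V. For (u,s) ∈ V define d^{(u,s)} := uᵀA − s·c ∈ ℤ^p and δ^{(u,s)} := ⌊u·b − s·γ*⌋ + 1 ∈ ℤ. Then: (a) for every x ∈ ℤ^p there exists (u,s) ∈ V with d^{(u,s)}·x ≥ δ^{(u,s)}; and (b) for every (u,s) ∈ V, d^{(u,s)}·x* < δ^{(u,s)}. In particular, the family of inequalities d^{(u,s)}·x ≥ δ^{(u,s)}, (u,s) ∈ V, is a valid |V|-disjunction that does not contain x*. -/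
open Set

noncomputable section

open Finset

section Cone

variable {H : Type*} [NormedAddCommGroup H] [InnerProductSpace ℝ H]
variable {ι : Type*} [Fintype ι]

/-- Nonnegative combinations of `g i`, `i ∈ T`. -/
def coneT (g : ι → H) (T : Finset ι) : Set H :=
  {x | ∃ lam : ι → ℝ, (∀ i, 0 ≤ lam i) ∧ x = ∑ i ∈ T, lam i • g i}

theorem coneT_mono (g : ι → H) {T T' : Finset ι} (hTT : T ⊆ T') :
    coneT g T ⊆ coneT g T' := by
  classical
  rintro x ⟨lam, hlam, rfl⟩
  refine ⟨fun i => if i ∈ T then lam i else 0, fun i => by by_cases h : i ∈ T <;> simp [h, hlam i], ?_⟩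
  rw [← Finset.sum_subset hTT (by intro i _ hiT; simp [hiT])]
  exact Finset.sum_congr rfl fun i hi => by simp [hi]

theorem coneT_caratheodory (g : ι → H) (T : Finset ι) :
    ∀ x ∈ coneT g T, ∃ T' ⊆ T,
      LinearIndependent ℝ (fun i : T' => g i) ∧ x ∈ coneT g T' := by
  classical
  induction T using Finset.strongInductionOn with
  | _ T IH =>
  intro x hx
  by_cases hli : LinearIndependent ℝ (fun i : T => g i)
  · exact ⟨T, Finset.Subset.refl T, hli, hx⟩
  obtain ⟨lam, hlam, rfl⟩ := hx
  obtain ⟨μ0, hμ0sum, i₀, hi₀⟩ := Fintype.not_linearIndependent_iff.mp hli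
  -- a relation with some strictly positive coefficient
  have key : ∃ μ : ι → ℝ, (∑ i ∈ T, μ i • g i = 0) ∧ ∃ i ∈ T, 0 < μ i := by
    have hsum : ∀ ν0 : {x // x ∈ T} → ℝ,
        (∑ i : {x // x ∈ T}, ν0 i • g i = 0) →
        ∑ i ∈ T, (fun j => if h : j ∈ T then ν0 ⟨j, h⟩ else 0) i • g i = 0 := by
      intro ν0 h0
      rw [← h0, ← Finset.sum_attach T (fun j => (if h : j ∈ T then ν0 ⟨j, h⟩ else 0) • g j)]
      exact Finset.sum_congr rfl fun i _ => by simp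
    rcases lt_or_gt_of_ne hi₀ with hneg | hpos
    · refine ⟨fun j => if h : j ∈ T then (-μ0) ⟨j, h⟩ else 0, hsum (-μ0) (by simp [← Finset.univ_eq_attach, hμ0sum]), i₀, i₀.2, ?_⟩
      simpa using by linarith
    · refine ⟨fun j => if h : j ∈ T then μ0 ⟨j, h⟩ else 0, hsum μ0 hμ0sum, i₀, i₀.2, ?_⟩
      simpa using hpos
  obtain ⟨μ, hμsum, i₁, hi₁T, hi₁⟩ := key
  classical
  set P : Finset ι := T.filter (fun i => 0 < μ i) with hP
  have hPne : P.Nonempty := ⟨i₁, by simp [hP, hi₁T, hi₁]⟩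
  obtain ⟨i₂, hi₂P, hi₂eq⟩ := Finset.exists_mem_eq_inf' hPne (fun i => lam i / μ i)
  have hi₂T : i₂ ∈ T := (Finset.mem_filter.mp hi₂P).1
  have hμi₂ : 0 < μ i₂ := (Finset.mem_filter.mp hi₂P).2
  set t : ℝ := P.inf' hPne (fun i => lam i / μ i) with ht
  have ht0 : 0 ≤ t := by
    rw [hi₂eq]; exact div_nonneg (hlam i₂) hμi₂.le
  set lam' : ι → ℝ := fun i => if i ∈ T then lam i - t * μ i else 0 with hlam'
  have hlam'0 : ∀ i, 0 ≤ lam' i := by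
    intro i
    simp only [hlam']
    split
    · rename_i hiT
      by_cases hμi : 0 < μ i
      · have h1 : t ≤ lam i / μ i := Finset.inf'_le _ (by simp [hP, hiT, hμi])
        have h2 : t * μ i ≤ lam i := (le_div_iff₀ hμi).mp h1
        linarith
      · push_neg at hμi
        nlinarith [hlam i, mul_nonpos_of_nonneg_of_nonpos ht0 hμi]
    · exact le_refl 0
  have hsum' : ∑ i ∈ T, lam' i • g i = ∑ i ∈ T, lam i • g i := by
    have : ∑ i ∈ T, lam' i • g i = ∑ i ∈ T, (lam i • g i - t • (μ i • g i)) := by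
      refine Finset.sum_congr rfl fun i hi => ?_
      simp [hlam', hi, sub_smul, smul_smul]
    rw [this, Finset.sum_sub_distrib, ← Finset.smul_sum, hμsum, smul_zero, sub_zero]
  have hlam'i₂ : lam' i₂ = 0 := by
    simp only [hlam', if_pos hi₂T, hi₂eq]
    field_simp; ring
  have hxmem : ∑ i ∈ T, lam i • g i ∈ coneT g (T.erase i₂) := by
    refine ⟨lam', hlam'0, ?_⟩
    rw [← hsum']
    exact (Finset.sum_erase _ (by rw [hlam'i₂, zero_smul])).symm
  obtain ⟨T', hT'sub, hT'li, hT'mem⟩ :=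
    IH (T.erase i₂) (Finset.erase_ssubset hi₂T) _ hxmem
  exact ⟨T', hT'sub.trans (Finset.erase_subset _ _), hT'li, hT'mem⟩

set_option linter.unusedSectionVars false

theorem coneT_zero_mem (g : ι → H) (T : Finset ι) : (0 : H) ∈ coneT g T :=
  ⟨fun _ => 0, fun _ => le_refl 0, by simp⟩

theorem coneT_isClosed_of_linearIndependent (g : ι → H) (T : Finset ι)
    (hli : LinearIndependent ℝ (fun i : T => g i)) : IsClosed (coneT g T) := by
  classical
  let L : ({x // x ∈ T} → ℝ) →ₗ[ℝ] H :=
    { toFun := fun lam => ∑ i : {x // x ∈ T}, lam i • g i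
      map_add' := fun a b => by simp [add_smul, Finset.sum_add_distrib]
      map_smul' := fun c a => by simp [smul_smul, Finset.smul_sum]
      }
  have hker : LinearMap.ker L = ⊥ := by
    rw [LinearMap.ker_eq_bot']
    intro v hv
    funext i
    exact Fintype.linearIndependent_iff.mp hli v hv i
  have hemb : Topology.IsClosedEmbedding L := LinearMap.isClosedEmbedding_of_injective hker
  have himg : coneT g T = L '' {lam | ∀ i, 0 ≤ lam i} := by
    ext x
    constructor
    · rintro ⟨lam, hlam, rfl⟩
      refine ⟨fun i => lam i, fun i => hlam i, ?_⟩
      show ∑ i : {x // x ∈ T}, lam i • g i = _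
      rw [Finset.univ_eq_attach]
      exact Finset.sum_attach T (fun j => lam j • g j)
    · rintro ⟨lam, hlam, rfl⟩
      refine ⟨fun i => if h : i ∈ T then lam ⟨i, h⟩ else 0,
        fun i => by by_cases h : i ∈ T <;> simp [h] <;> exact hlam _, ?_⟩
      show ∑ i : {x // x ∈ T}, lam i • g i
          = ∑ i ∈ T, (fun i => if h : i ∈ T then lam ⟨i, h⟩ else 0) i • g i
      rw [← Finset.sum_attach T (fun j => (if h : j ∈ T then lam ⟨j, h⟩ else 0) • g j),
        Finset.univ_eq_attach]
      exact Finset.sum_congr rfl fun i _ => by simp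
  rw [himg]
  apply hemb.isClosedMap
  have : {lam : {x // x ∈ T} → ℝ | ∀ i, 0 ≤ lam i} = ⋂ i, {lam | 0 ≤ lam i} := by
    ext; simp [Set.mem_iInter]
  rw [this]
  exact isClosed_iInter fun i => isClosed_le continuous_const (continuous_apply i)

theorem coneT_isClosed (g : ι → H) : IsClosed (coneT g Finset.univ) := by
  classical
  have hrep : coneT g Finset.univ =
      ⋃ T : Finset ι, (if LinearIndependent ℝ (fun i : T => g i)
        then coneT g T else ({0} : Set H)) := by
    ext x
    simp only [Set.mem_iUnion]
    constructor
    · intro hx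
      obtain ⟨T', _, hli, hmem⟩ := coneT_caratheodory g Finset.univ x hx
      exact ⟨T', by rw [if_pos hli]; exact hmem⟩
    · rintro ⟨T, hT⟩
      split at hT
      · exact coneT_mono g (Finset.subset_univ T) hT
      · rw [Set.mem_singleton_iff] at hT
        rw [hT]; exact coneT_zero_mem g Finset.univ
  rw [hrep]
  refine isClosed_iUnion_of_finite fun T => ?_
  split
  · exact coneT_isClosed_of_linearIndependent g T (by assumption)
  · exact isClosed_singleton

theorem euclid_sum_apply {n : ℕ} {ι' : Type*} (s : Finset ι') (f : ι' → EuclideanSpace ℝ (Fin n))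
    (i : Fin n) : (∑ v ∈ s, f v) i = ∑ v ∈ s, f v i := by
  classical
  induction s using Finset.cons_induction with
  | empty => simp [PiLp.zero_apply]
  | cons a s ha ih => rw [Finset.sum_cons, Finset.sum_cons, PiLp.add_apply, ih]

theorem convexCone_sep_aux {E : Type*} [NormedAddCommGroup E] [InnerProductSpace ℝ E]
    [CompleteSpace E] (K : ConvexCone ℝ E) (h0 : (0 : E) ∈ K) (hc : IsClosed (K : Set E))
    {b : E} (hb : b ∉ K) : ∃ y : E, (∀ x ∈ K, 0 ≤ (inner ℝ x y : ℝ)) ∧ (inner ℝ y b : ℝ) < 0 := by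
  let C : ProperCone ℝ E :=
    { carrier := K
      add_mem' := fun ha hb => K.add_mem ha hb
      zero_mem' := h0
      smul_mem' := by
        intro c x hx
        rcases eq_or_lt_of_le c.2 with hc0 | hc0
        · have : c = 0 := Subtype.ext hc0.symm
          subst this; simpa using h0
        · exact K.smul_mem hc0 hx
      isClosed' := hc }
  obtain ⟨y, hy1, hy2⟩ := C.hyperplane_separation' (x₀ := b) hb
  exact ⟨y, hy1, by rwa [real_inner_comm]⟩

/-- Farkas' lemma for systems of linear inequalities. -/
theorem farkas_ineq {n k : ℕ} (M : Fin n → Fin k → ℝ) (β : Fin n → ℝ) :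
    (∃ y : Fin k → ℝ, ∀ i, (∑ j, M i j * y j) ≤ β i) ∨
    (∃ w : Fin n → ℝ, (∀ i, 0 ≤ w i) ∧ (∀ j, (∑ i, w i * M i j) = 0) ∧
      (∑ i, w i * β i) < 0) := by
  classical
  set H := EuclideanSpace ℝ (Fin n)
  set g : ((Fin k ⊕ Fin k) ⊕ Fin n) → H :=
    Sum.elim (Sum.elim (fun j => (WithLp.toLp 2 (fun i => M i j) : H)) (fun j => (WithLp.toLp 2 (fun i => -(M i j)) : H)))
      (fun i0 => EuclideanSpace.single i0 (1 : ℝ)) with hg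
  set β' : H := (WithLp.toLp 2 (fun i => β i) : H) with hβ'
  by_cases hβ : β' ∈ coneT g Finset.univ
  · left
    obtain ⟨lam, hlam, hsum⟩ := hβ
    refine ⟨fun j => lam (Sum.inl (Sum.inl j)) - lam (Sum.inl (Sum.inr j)), fun i => ?_⟩
    have hco : β i = ∑ v, lam v • g v i := by
      rw [show β i = β' i from rfl, hsum, euclid_sum_apply]
      exact Finset.sum_congr rfl fun v _ => rfl
    rw [Fintype.sum_sum_type, Fintype.sum_sum_type] at hco
    have hsingle : ∑ i0, lam (Sum.inr i0) • g (Sum.inr i0) i = lam (Sum.inr i) := by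
      rw [Finset.sum_eq_single i]
      · simp [hg, EuclideanSpace.single_apply]
      · intro b _ hb
        simp [hg, EuclideanSpace.single_apply, hb, Ne.symm hb]
      · simp
    rw [hsingle] at hco
    simp only [hg, Sum.elim_inl, Sum.elim_inr, smul_eq_mul] at hco
    have h2 : ∑ x, lam (Sum.inl (Sum.inl x)) * M i x + ∑ x, lam (Sum.inl (Sum.inr x)) * -M i x
        = ∑ j, M i j * (lam (Sum.inl (Sum.inl j)) - lam (Sum.inl (Sum.inr j))) := by
      rw [← Finset.sum_add_distrib]
      exact Finset.sum_congr rfl fun j _ => by ring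
    have := hlam (Sum.inr i)
    linarith [hco, h2]
  · right
    set K : ConvexCone ℝ H :=
      { carrier := coneT g Finset.univ
        smul_mem' := by
          rintro c hc x ⟨lam, hlam, rfl⟩
          exact ⟨fun v => c * lam v, fun v => mul_nonneg hc.le (hlam v), by
            rw [Finset.smul_sum]
            exact Finset.sum_congr rfl fun v _ => by rw [smul_smul]⟩
        add_mem' := by
          rintro x ⟨lam1, h1, rfl⟩ y ⟨lam2, h2, rfl⟩
          exact ⟨fun v => lam1 v + lam2 v, fun v => add_nonneg (h1 v) (h2 v), by
            rw [← Finset.sum_add_distrib]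
            exact Finset.sum_congr rfl fun v _ => by rw [add_smul]⟩ } with hK
    obtain ⟨w, hw1, hw2⟩ := convexCone_sep_aux K
      (coneT_zero_mem g Finset.univ) (coneT_isClosed g) hβ
    have hgen : ∀ v, (0 : ℝ) ≤ inner ℝ (g v) w := by
      intro v
      refine hw1 (g v) ⟨fun u => if u = v then 1 else 0, fun u => by by_cases h : u = v <;> simp [h], ?_⟩
      simp
    have hinner : ∀ x : H, (inner ℝ x w : ℝ) = ∑ i, x i * w i := by
      intro x
      rw [PiLp.inner_apply]
      simp [RCLike.inner_apply, conj_trivial, mul_comm]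
    refine ⟨fun i => w i, ?_, ?_, ?_⟩
    · intro i
      have := hgen (Sum.inr i)
      rw [hinner] at this
      simpa [hg, EuclideanSpace.single_apply, Finset.sum_ite_eq] using this
    · intro j
      have h1 := hgen (Sum.inl (Sum.inl j))
      have h2 := hgen (Sum.inl (Sum.inr j))
      rw [hinner] at h1 h2
      simp only [hg, Sum.elim_inl, Sum.elim_inr, neg_mul, Finset.sum_neg_distrib] at h1 h2
      have h3 : ∑ i, M i j * w i = 0 := le_antisymm (by linarith) h1
      rw [← h3]
      exact Finset.sum_congr rfl fun i _ => mul_comm _ _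
    · rw [real_inner_comm, hinner] at hw2
      calc ∑ i, w i * β i = ∑ i, β' i * w i := Finset.sum_congr rfl fun i _ => mul_comm _ _
        _ < 0 := hw2

end Cone


/-- The rounded projection inequalities built from the extreme rays of the projection cone form a
valid `|V|`-disjunction which does not contain the point `x*`. -/
theorem projection_disjunction_valid_and_misses_apex
    {p q m : ℕ} (A : Matrix (Fin m) (Fin p) ℚ) (G : Matrix (Fin m) (Fin q) ℚ) (b : Fin m → ℚ)
    (c : Fin p → ℚ) (h : Fin q → ℚ)
    (xstar : Fin p → ℝ) (ystar : Fin q → ℝ) (hP : (xstar, ystar) ∈ feasSet A G b)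
    (γstar : ℝ) (hγ : γstar = (∑ j, (c j : ℝ) * xstar j) + (∑ j, (h j : ℝ) * ystar j))
    (heps : ∃ ε > (0 : ℝ), ∀ z ∈ feasSet A G b, IsIntVec z.1 →
      (∑ j, (c j : ℝ) * z.1 j) + (∑ j, (h j : ℝ) * z.2 j) ≤ γstar - ε)
    (V : Finset ((Fin m → ℚ) × ℚ))
    (hV : ∀ v ∈ V, (∀ i, 0 ≤ v.1 i) ∧ 0 ≤ v.2 ∧
      (∀ j, (∑ i, v.1 i * G i j) = v.2 * h j) ∧
      (∀ j, ∃ n : ℤ, (∑ i, v.1 i * A i j) - v.2 * c j = (n : ℚ)))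
    (hVgen : ∀ (w : Fin m → ℝ) (t : ℝ), (∀ i, 0 ≤ w i) → 0 ≤ t →
      (∀ j, (∑ i, w i * (G i j : ℝ)) = t * (h j : ℝ)) →
      ∃ lam : ((Fin m → ℚ) × ℚ) → ℝ, (∀ v, 0 ≤ lam v) ∧
        (∀ i, w i = ∑ v ∈ V, lam v * (v.1 i : ℝ)) ∧ t = ∑ v ∈ V, lam v * (v.2 : ℝ)) :
    (∀ x : Fin p → ℤ, ∃ v ∈ V,
      ((⌊(∑ i, (v.1 i : ℝ) * (b i : ℝ)) - (v.2 : ℝ) * γstar⌋ + 1 : ℤ) : ℝ) ≤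
        ∑ j, ((∑ i, (v.1 i : ℝ) * (A i j : ℝ)) - (v.2 : ℝ) * (c j : ℝ)) * (x j : ℝ)) ∧
    (∀ v ∈ V,
      (∑ j, ((∑ i, (v.1 i : ℝ) * (A i j : ℝ)) - (v.2 : ℝ) * (c j : ℝ)) * xstar j) <
        ((⌊(∑ i, (v.1 i : ℝ) * (b i : ℝ)) - (v.2 : ℝ) * γstar⌋ + 1 : ℤ) : ℝ)) := by
  classical
  -- abbreviations
  set dre : ((Fin m → ℚ) × ℚ) → Fin p → ℝ :=
    fun v j => (∑ i, (v.1 i : ℝ) * (A i j : ℝ)) - (v.2 : ℝ) * (c j : ℝ) with hdre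
  set αr : ((Fin m → ℚ) × ℚ) → ℝ :=
    fun v => (∑ i, (v.1 i : ℝ) * (b i : ℝ)) - (v.2 : ℝ) * γstar with hαr
  constructor
  · -- part (a)
    intro x
    -- key claim : some v gives a strict inequality αr v < d·x
    have key : ∃ v ∈ V, αr v < ∑ j, dre v j * (x j : ℝ) := by
      by_contra hcon
      push_neg at hcon
      -- set up the Farkas system
      set M : Fin (m + 1) → Fin q → ℝ :=
        Fin.snoc (fun i j => (G i j : ℝ)) (fun j => -(h j : ℝ)) with hM
      set β : Fin (m + 1) → ℝ :=
        Fin.snoc (fun i => (b i : ℝ) - ∑ j, (A i j : ℝ) * (x j : ℝ))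
          ((∑ j, (c j : ℝ) * (x j : ℝ)) - γstar) with hβ
      rcases farkas_ineq M β with ⟨y, hy⟩ | ⟨w, hw0, hwM, hwβ⟩
      · -- feasible : contradiction with heps
        obtain ⟨ε, hε, hbound⟩ := heps
        have hfi : ∀ i : Fin m, ∑ j, (G i j : ℝ) * y j
            ≤ (b i : ℝ) - ∑ j, (A i j : ℝ) * (x j : ℝ) := by
          intro i
          have := hy i.castSucc
          simpa [hM, hβ, Fin.snoc_castSucc] using this
        have hfl : ∑ j, -(h j : ℝ) * y j ≤ (∑ j, (c j : ℝ) * (x j : ℝ)) - γstar := by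
          have := hy (Fin.last m)
          simpa [hM, hβ, Fin.snoc_last] using this
        have hz : ((fun j => ((x j : ℝ))), y) ∈ feasSet A G b := by
          intro i
          have := hfi i
          simp only
          linarith
        have hint : IsIntVec (fun j => ((x j : ℝ))) := fun j => ⟨x j, rfl⟩
        have hb2 := hbound _ hz hint
        simp only at hb2
        have hfl' : γstar ≤ (∑ j, (c j : ℝ) * (x j : ℝ)) + ∑ j, (h j : ℝ) * y j := by
          have : ∑ j, -(h j : ℝ) * y j = -∑ j, (h j : ℝ) * y j := by
            rw [← Finset.sum_neg_distrib]
            exact Finset.sum_congr rfl fun j _ => by ring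
          rw [this] at hfl
          linarith
        linarith
      · -- infeasible branch : contradiction with hcon via hVgen
        set w' : Fin m → ℝ := fun i => w i.castSucc with hw'
        set t : ℝ := w (Fin.last m) with ht
        have hconeR : ∀ j, (∑ i, w' i * (G i j : ℝ)) = t * (h j : ℝ) := by
          intro j
          have := hwM j
          rw [Fin.sum_univ_castSucc] at this
          simp only [hM, Fin.snoc_castSucc, Fin.snoc_last] at this
          rw [hw', ht]
          linarith
        obtain ⟨lam, hlam0, hlamw, hlamt⟩ := hVgen w' t (fun i => hw0 i.castSucc)
          (hw0 (Fin.last m)) hconeR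
        -- decompose the Farkas value
        set Bi : Fin m → ℝ := fun i => (b i : ℝ) - ∑ j, (A i j : ℝ) * (x j : ℝ) with hBi
        set C : ℝ := (∑ j, (c j : ℝ) * (x j : ℝ)) - γstar with hC
        have hS : ∑ i, w i * β i = (∑ i : Fin m, w' i * Bi i) + t * C := by
          rw [Fin.sum_univ_castSucc]
          simp [hβ, Fin.snoc_castSucc, Fin.snoc_last, hw', ht, hBi, hC]
        have hstep1 : ∑ i : Fin m, w' i * Bi i
            = ∑ v ∈ V, lam v * ∑ i, (v.1 i : ℝ) * Bi i := by
          calc ∑ i : Fin m, w' i * Bi i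
              = ∑ i : Fin m, ∑ v ∈ V, lam v * (v.1 i : ℝ) * Bi i := by
                refine Finset.sum_congr rfl fun i _ => ?_
                rw [hlamw i, Finset.sum_mul]
            _ = ∑ v ∈ V, ∑ i : Fin m, lam v * (v.1 i : ℝ) * Bi i := Finset.sum_comm
            _ = ∑ v ∈ V, lam v * ∑ i, (v.1 i : ℝ) * Bi i := by
                refine Finset.sum_congr rfl fun v _ => ?_
                rw [Finset.mul_sum]
                exact Finset.sum_congr rfl fun i _ => by ring
        have hstep2 : t * C = ∑ v ∈ V, lam v * ((v.2 : ℝ) * C) := by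
          rw [hlamt, Finset.sum_mul]
          exact Finset.sum_congr rfl fun v _ => by ring
        have hΦ : ∀ v ∈ V, (∑ i, (v.1 i : ℝ) * Bi i) + (v.2 : ℝ) * C
            = αr v - ∑ j, dre v j * (x j : ℝ) := by
          intro v _
          have hsw : ∑ j, (∑ i, (v.1 i : ℝ) * (A i j : ℝ)) * (x j : ℝ)
              = ∑ i, (v.1 i : ℝ) * ∑ j, (A i j : ℝ) * (x j : ℝ) := by
            calc ∑ j, (∑ i, (v.1 i : ℝ) * (A i j : ℝ)) * (x j : ℝ)
                = ∑ j, ∑ i, (v.1 i : ℝ) * (A i j : ℝ) * (x j : ℝ) := by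
                  exact Finset.sum_congr rfl fun j _ => Finset.sum_mul _ _ _
              _ = ∑ i, ∑ j, (v.1 i : ℝ) * (A i j : ℝ) * (x j : ℝ) := Finset.sum_comm
              _ = ∑ i, (v.1 i : ℝ) * ∑ j, (A i j : ℝ) * (x j : ℝ) := by
                  refine Finset.sum_congr rfl fun i _ => ?_
                  rw [Finset.mul_sum]
                  exact Finset.sum_congr rfl fun j _ => by ring
          have hB : ∑ i, (v.1 i : ℝ) * Bi i
              = (∑ i, (v.1 i : ℝ) * (b i : ℝ))
                - ∑ i, (v.1 i : ℝ) * ∑ j, (A i j : ℝ) * (x j : ℝ) := by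
            rw [← Finset.sum_sub_distrib]
            exact Finset.sum_congr rfl fun i _ => by rw [hBi]; ring
          have hD : ∑ j, dre v j * (x j : ℝ)
              = (∑ j, (∑ i, (v.1 i : ℝ) * (A i j : ℝ)) * (x j : ℝ))
                - (v.2 : ℝ) * ∑ j, (c j : ℝ) * (x j : ℝ) := by
            rw [Finset.mul_sum, ← Finset.sum_sub_distrib]
            exact Finset.sum_congr rfl fun j _ => by rw [hdre]; ring
          rw [hB, hD, hsw, hαr, hC]
          ring
        have hnonneg : 0 ≤ ∑ i, w i * β i := by
          rw [hS, hstep1, hstep2, ← Finset.sum_add_distrib]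
          refine Finset.sum_nonneg fun v hv => ?_
          rw [← mul_add, hΦ v hv]
          exact mul_nonneg (hlam0 v) (by linarith [hcon v hv])
        linarith
    -- from the strict inequality conclude the floor inequality
    obtain ⟨v, hvV, hlt⟩ := key
    refine ⟨v, hvV, ?_⟩
    obtain ⟨-, -, -, hintv⟩ := hV v hvV
    choose nv hnv using hintv
    have hdint : ∀ j, dre v j = ((nv j : ℝ)) := by
      intro j
      have := hnv j
      have := congrArg (fun r : ℚ => (r : ℝ)) this
      push_cast at this
      rw [hdre]
      convert this using 2
    have hDint : ∑ j, dre v j * (x j : ℝ) = ((∑ j, nv j * x j : ℤ) : ℝ) := by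
      push_cast
      exact Finset.sum_congr rfl fun j _ => by rw [hdint j]
    rw [hDint] at hlt ⊢
    have hfl : ⌊αr v⌋ < ∑ j, nv j * x j := Int.floor_lt.mpr (by exact_mod_cast hlt)
    have h2 : ⌊αr v⌋ + 1 ≤ ∑ j, nv j * x j := Int.add_one_le_iff.mpr hfl
    have h3 : ((⌊αr v⌋ + 1 : ℤ) : ℝ) ≤ ((∑ j, nv j * x j : ℤ) : ℝ) := by exact_mod_cast h2
    exact h3
  · -- part (b)
    intro v hvV
    obtain ⟨hu, hs, hcone, -⟩ := hV v hvV
    have hconeR : ∀ j, (∑ i, (v.1 i : ℝ) * (G i j : ℝ)) = (v.2 : ℝ) * (h j : ℝ) := by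
      intro j
      exact_mod_cast congrArg (fun r : ℚ => (r : ℝ)) (hcone j)
    have hmain : ∑ i, (v.1 i : ℝ) * ((∑ j, (A i j : ℝ) * xstar j) + ∑ j, (G i j : ℝ) * ystar j)
        ≤ ∑ i, (v.1 i : ℝ) * (b i : ℝ) := by
      refine Finset.sum_le_sum fun i _ => ?_
      exact mul_le_mul_of_nonneg_left (hP i) (by exact_mod_cast hu i)
    have hsplit : ∑ i, (v.1 i : ℝ) * ((∑ j, (A i j : ℝ) * xstar j) + ∑ j, (G i j : ℝ) * ystar j)
        = (∑ i, (v.1 i : ℝ) * ∑ j, (A i j : ℝ) * xstar j)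
          + ∑ i, (v.1 i : ℝ) * ∑ j, (G i j : ℝ) * ystar j := by
      rw [← Finset.sum_add_distrib]
      exact Finset.sum_congr rfl fun i _ => by ring
    have hGpart : ∑ i, (v.1 i : ℝ) * ∑ j, (G i j : ℝ) * ystar j
        = (v.2 : ℝ) * ∑ j, (h j : ℝ) * ystar j := by
      calc ∑ i, (v.1 i : ℝ) * ∑ j, (G i j : ℝ) * ystar j
          = ∑ i, ∑ j, (v.1 i : ℝ) * (G i j : ℝ) * ystar j := by
            refine Finset.sum_congr rfl fun i _ => ?_
            rw [Finset.mul_sum]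
            exact Finset.sum_congr rfl fun j _ => by ring
        _ = ∑ j, ∑ i, (v.1 i : ℝ) * (G i j : ℝ) * ystar j := Finset.sum_comm
        _ = ∑ j, (v.2 : ℝ) * (h j : ℝ) * ystar j := by
            refine Finset.sum_congr rfl fun j _ => ?_
            rw [← Finset.sum_mul, hconeR j]
        _ = (v.2 : ℝ) * ∑ j, (h j : ℝ) * ystar j := by
            rw [Finset.mul_sum]
            exact Finset.sum_congr rfl fun j _ => by ring
    have hApart : ∑ j, dre v j * xstar j
        = (∑ i, (v.1 i : ℝ) * ∑ j, (A i j : ℝ) * xstar j)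
          - (v.2 : ℝ) * ∑ j, (c j : ℝ) * xstar j := by
      have hsw : ∑ j, (∑ i, (v.1 i : ℝ) * (A i j : ℝ)) * xstar j
          = ∑ i, (v.1 i : ℝ) * ∑ j, (A i j : ℝ) * xstar j := by
        calc ∑ j, (∑ i, (v.1 i : ℝ) * (A i j : ℝ)) * xstar j
            = ∑ j, ∑ i, (v.1 i : ℝ) * (A i j : ℝ) * xstar j := by
              exact Finset.sum_congr rfl fun j _ => Finset.sum_mul _ _ _
          _ = ∑ i, ∑ j, (v.1 i : ℝ) * (A i j : ℝ) * xstar j := Finset.sum_comm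
          _ = ∑ i, (v.1 i : ℝ) * ∑ j, (A i j : ℝ) * xstar j := by
              refine Finset.sum_congr rfl fun i _ => ?_
              rw [Finset.mul_sum]
              exact Finset.sum_congr rfl fun j _ => by ring
      rw [← hsw, Finset.mul_sum, ← Finset.sum_sub_distrib]
      exact Finset.sum_congr rfl fun j _ => by rw [hdre]; ring
    have hα2 : αr v = (∑ i, (v.1 i : ℝ) * (b i : ℝ))
        - ((v.2 : ℝ) * ∑ j, (c j : ℝ) * xstar j + (v.2 : ℝ) * ∑ j, (h j : ℝ) * ystar j) := by
      rw [hαr, hγ]; ring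
    have hle : ∑ j, dre v j * xstar j ≤ αr v := by
      rw [hApart, hα2]
      linarith [hmain, hsplit, hGpart]
    calc ∑ j, dre v j * xstar j ≤ αr v := hle
      _ < (⌊αr v⌋ : ℝ) + 1 := Int.lt_floor_add_one _
      _ = ((⌊αr v⌋ + 1 : ℤ) : ℝ) := by push_cast; ring


end
end

section
/- Let p, q, m ∈ ℕ, let A ∈ ℚ^{m×p}, G ∈ ℚ^{m×q}, b ∈ ℚ^m, c ∈ ℚ^p, h ∈ ℚ^q, and let P := {(x,y) ∈ ℝ^p × ℝ^q : Ax + Gy ≤ b componentwise} and P_I := conv({(x,y) ∈ P : x ∈ ℤ^p}). Let (x*,y*) ∈ P, set γ* := c·x* + h·y*, and suppose there exists ε > 0 such that c·x + h·y ≤ γ* − ε for every (x,y) ∈ P with x ∈ ℤ^p. Let V be a finite subset of ℚ^m × ℚ such that: every (u,s) ∈ V satisfies u ≥ 0, s ≥ 0, uᵀG = s·h, and uᵀA − s·c ∈ ℤ^p; and every (w,t) ∈ ℝ^m × ℝ with w ≥ 0, t ≥ 0, wᵀG = t·h is a nonnegative linear combination of elements of V. For (u,s) ∈ V define δ^{(u,s)}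 := ⌊u·b − s·γ*⌋ + 1, and for (u,s) ∈ V with s > 0 define γ^{(u,s)} := (u·b − δ^{(u,s)})/s. Assume {(u,s) ∈ V : s > 0} is nonempty and set γ̂ := max{γ^{(u,s)} : (u,s) ∈ V, s > 0}. Then c·x + h·y ≤ γ̂ for every (x,y) ∈ P_I, and c·x* + h·y* > γ̂. -/
section AuxFarkas
open Finset

variable {k : ℕ}

/-- The conic hull of a linearly independent family is closed. -/
lemma isClosed_cone_of_linIndep {ι : Type*} [Fintype ι] (w : ι → (Fin k → ℝ))
    (li : LinearIndependent ℝ w) :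
    IsClosed {z : Fin k → ℝ | ∃ μ : ι → ℝ, (∀ i, 0 ≤ μ i) ∧ z = ∑ i, μ i • w i} := by
  classical
  let f : (ι → ℝ) →ₗ[ℝ] (Fin k → ℝ) :=
    { toFun := fun μ => ∑ i, μ i • w i
      map_add' := by
        intro a b
        simp [add_smul, Finset.sum_add_distrib]
      map_smul' := by
        intro r a
        simp [smul_smul, Finset.smul_sum] }
  have hker : LinearMap.ker f = ⊥ := by
    rw [LinearMap.ker_eq_bot']
    intro g hg
    have := Fintype.linearIndependent_iff.mp li g hg
    funext i; exact this i
  have hce := LinearMap.isClosedEmbedding_of_injective (f := f) hker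
  have horth : IsClosed {μ : ι → ℝ | ∀ i, 0 ≤ μ i} := by
    have : {μ : ι → ℝ | ∀ i, 0 ≤ μ i} = ⋂ i, {μ : ι → ℝ | 0 ≤ μ i} := by
      ext μ; simp
    rw [this]
    exact isClosed_iInter fun i => isClosed_le continuous_const (continuous_apply i)
  have himg : {z : Fin k → ℝ | ∃ μ : ι → ℝ, (∀ i, 0 ≤ μ i) ∧ z = ∑ i, μ i • w i}
      = f '' {μ : ι → ℝ | ∀ i, 0 ≤ μ i} := by
    ext z
    constructor
    · rintro ⟨μ, hμ, rfl⟩; exact ⟨μ, hμ, rfl⟩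
    · rintro ⟨μ, hμ, rfl⟩; exact ⟨μ, hμ, rfl⟩
  rw [himg]
  exact hce.isClosedMap _ horth

/-- Conic Carathéodory: any nonnegative combination is a nonnegative combination over a
linearly independent subfamily. -/
lemma caratheodory_cone {ι : Type*} [Fintype ι] (v : ι → (Fin k → ℝ)) (x : Fin k → ℝ)
    (S : Finset ι) (lam : ι → ℝ) (hlam : ∀ i, 0 ≤ lam i)
    (hx : x = ∑ i ∈ S, lam i • v i) :
    ∃ T : Finset ι, T ⊆ S ∧ LinearIndependent ℝ (fun i : T => v i) ∧
      ∃ μ : ι → ℝ, (∀ i, 0 ≤ μ i) ∧ x = ∑ i ∈ T, μ i • v i := by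
  classical
  induction S using Finset.strongInduction generalizing lam with
  | _ S ih =>
  by_cases hli : LinearIndependent ℝ (fun i : S => v i)
  · exact ⟨S, le_refl _, hli, lam, hlam, hx⟩
  · obtain ⟨g, hg0, i₀, hi₀⟩ := Fintype.not_linearIndependent_iff.mp hli
    -- turn g into a function on Fin N
    set c : ι → ℝ := fun i => if h : i ∈ S then g ⟨i, h⟩ else 0 with hc
    have hcsum : ∑ i ∈ S, c i • v i = 0 := by
      rw [← Finset.sum_attach S (fun i => c i • v i)]
      rw [← hg0]
      apply Finset.sum_congr rfl
      intro i _
      simp [hc, i.2]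
    have hcex : ∃ i ∈ S, c i ≠ 0 := ⟨i₀, i₀.2, by simpa [hc, i₀.2] using hi₀⟩
    -- WLOG there is a positive coefficient
    have key : ∀ c : ι → ℝ, (∑ i ∈ S, c i • v i = 0) → (∃ i ∈ S, 0 < c i) →
        ∃ T : Finset ι, T ⊆ S ∧ LinearIndependent ℝ (fun i : T => v i) ∧
          ∃ μ : ι → ℝ, (∀ i, 0 ≤ μ i) ∧ x = ∑ i ∈ T, μ i • v i := by
      intro c hcsum hpos
      set P : Finset ι := S.filter (fun i => 0 < c i) with hP
      have hPne : P.Nonempty := by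
        obtain ⟨i, hiS, hic⟩ := hpos
        exact ⟨i, Finset.mem_filter.mpr ⟨hiS, hic⟩⟩
      obtain ⟨j₀, hj₀P, hj₀min⟩ := Finset.exists_min_image P (fun i => lam i / c i) hPne
      have hj₀S : j₀ ∈ S := (Finset.mem_filter.mp hj₀P).1
      have hj₀c : 0 < c j₀ := (Finset.mem_filter.mp hj₀P).2
      set t : ℝ := lam j₀ / c j₀ with ht
      have ht0 : 0 ≤ t := div_nonneg (hlam j₀) hj₀c.le
      set lam' : ι → ℝ := fun i => if i ∈ S then lam i - t * c i else 0 with hlam'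
      have hlam'0 : ∀ i, 0 ≤ lam' i := by
        intro i
        simp only [hlam']
        split
        · rename_i hiS
          by_cases hci : 0 < c i
          · have : t ≤ lam i / c i := hj₀min i (Finset.mem_filter.mpr ⟨hiS, hci⟩)
            rw [le_div_iff₀ hci] at this
            linarith
          · push_neg at hci
            nlinarith [hlam i, mul_nonpos_of_nonneg_of_nonpos ht0 hci]
        · exact le_refl 0
      have hj₀z : lam' j₀ = 0 := by
        simp only [hlam', if_pos hj₀S, ht]
        field_simp
        simp
      have hx' : x = ∑ i ∈ S.erase j₀, lam' i • v i := by
        have h1 : x = ∑ i ∈ S, lam' i • v i := by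
          rw [hx]
          have : ∑ i ∈ S, lam' i • v i = ∑ i ∈ S, (lam i • v i - t • (c i • v i)) := by
            apply Finset.sum_congr rfl
            intro i hiS
            simp only [hlam', if_pos hiS, sub_smul, smul_smul]
          rw [this, Finset.sum_sub_distrib, ← Finset.smul_sum, hcsum, smul_zero, sub_zero]
        rw [h1, ← Finset.sum_erase_add S _ hj₀S, hj₀z, zero_smul, add_zero]
      obtain ⟨T, hTsub, hTli, μ, hμ0, hμx⟩ :=
        ih (S.erase j₀) (Finset.erase_ssubset hj₀S) lam' hlam'0 hx'
      exact ⟨T, hTsub.trans (Finset.erase_subset _ _), hTli, μ, hμ0, hμx⟩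
    by_cases hsign : ∃ i ∈ S, 0 < c i
    · exact key c hcsum hsign
    · apply key (fun i => -c i)
      · rw [← neg_zero, ← hcsum, ← Finset.sum_neg_distrib]
        apply Finset.sum_congr rfl
        intro i _
        simp [neg_smul]
      · push_neg at hsign
        obtain ⟨i, hiS, hic⟩ := hcex
        exact ⟨i, hiS, by
          have := hsign i hiS
          cases lt_or_eq_of_le this with
          | inl h => linarith
          | inr h => exact absurd h hic⟩

/-- A finitely generated cone in `ℝ^k` is closed. -/
lemma isClosed_fingen_cone {ι : Type*} [Fintype ι] (v : ι → (Fin k → ℝ)) :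
    IsClosed {z : Fin k → ℝ | ∃ lam : ι → ℝ, (∀ i, 0 ≤ lam i) ∧ z = ∑ i, lam i • v i} := by
  classical
  have hEq : {z : Fin k → ℝ | ∃ lam : ι → ℝ, (∀ i, 0 ≤ lam i) ∧ z = ∑ i, lam i • v i}
      = ⋃ T ∈ {T : Finset ι | LinearIndependent ℝ (fun i : T => v i)},
          {z : Fin k → ℝ | ∃ μ : ι → ℝ, (∀ i, 0 ≤ μ i) ∧ z = ∑ i ∈ T, μ i • v i} := by
    ext z
    simp only [Set.mem_setOf_eq, Set.mem_iUnion]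
    constructor
    · rintro ⟨lam, hlam, rfl⟩
      obtain ⟨T, _, hTli, μ, hμ0, hμx⟩ :=
        caratheodory_cone v _ Finset.univ lam hlam rfl
      exact ⟨T, hTli, μ, hμ0, hμx⟩
    · rintro ⟨T, hTli, μ, hμ0, rfl⟩
      refine ⟨fun i => if i ∈ T then μ i else 0, fun i => ?_, ?_⟩
      · by_cases hi : i ∈ T
        · simpa [hi] using hμ0 i
        · simp [hi]
      symm
      calc ∑ i, (if i ∈ T then μ i else 0) • v i
          = ∑ i, (if i ∈ T then μ i • v i else 0) := by
            apply Finset.sum_congr rfl; intro i _; split <;> simp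
        _ = ∑ i ∈ T, μ i • v i := by rw [Finset.sum_ite_mem, Finset.univ_inter]
  rw [hEq]
  apply Set.Finite.isClosed_biUnion (Set.toFinite _)
  intro T hT
  have : {z : Fin k → ℝ | ∃ μ : ι → ℝ, (∀ i, 0 ≤ μ i) ∧ z = ∑ i ∈ T, μ i • v i}
      = {z : Fin k → ℝ | ∃ μ : T → ℝ, (∀ i, 0 ≤ μ i) ∧ z = ∑ i, μ i • v i} := by
    ext z
    simp only [Set.mem_setOf_eq]
    constructor
    · rintro ⟨μ, hμ0, rfl⟩
      refine ⟨fun i => μ i, fun i => hμ0 i, ?_⟩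
      exact (Finset.sum_coe_sort T (fun i => μ i • v i)).symm
    · rintro ⟨μ, hμ0, rfl⟩
      refine ⟨fun i => if h : i ∈ T then μ ⟨i, h⟩ else 0, fun i => by
        dsimp only; split
        · exact hμ0 _
        · exact le_refl 0, ?_⟩
      rw [← Finset.sum_attach T fun i => (if h : i ∈ T then μ ⟨i, h⟩ else 0) • v i]
      apply Finset.sum_congr rfl
      intro i _
      simp [i.2]
  rw [this]
  exact isClosed_cone_of_linIndep _ hT

/-- Farkas' lemma: if every nonnegative certificate is consistent, the system `M y ≤ d`
is feasible. -/
lemma farkas_solvable {n : ℕ} (M : Fin k → Fin n → ℝ) (d : Fin k → ℝ)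
    (hcert : ∀ u : Fin k → ℝ, (∀ i, 0 ≤ u i) → (∀ j, ∑ i, u i * M i j = 0) →
      0 ≤ ∑ i, u i * d i) :
    ∃ y : Fin n → ℝ, ∀ i, ∑ j, M i j * y j ≤ d i := by
  classical
  set C : Set (Fin k → ℝ) :=
    {z | ∃ y : Fin n → ℝ, ∃ r : Fin k → ℝ, (∀ i, 0 ≤ r i) ∧
      z = fun i => (∑ j, M i j * y j) + r i} with hC
  -- C is a finitely generated cone, hence closed
  set gens : ((Fin n ⊕ Fin n) ⊕ Fin k) → (Fin k → ℝ) := fun x =>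
    Sum.rec (fun x' => Sum.rec (fun j => fun i => M i j) (fun j => fun i => -(M i j)) x')
      (fun i0 => Pi.single i0 1) x with hgens
  have hCgen : C = {z : Fin k → ℝ | ∃ lam : ((Fin n ⊕ Fin n) ⊕ Fin k) → ℝ,
      (∀ x, 0 ≤ lam x) ∧ z = ∑ x, lam x • gens x} := by
    ext z
    simp only [hC, Set.mem_setOf_eq]
    constructor
    · rintro ⟨y, r, hr, rfl⟩
      refine ⟨fun x => Sum.rec (fun x' => Sum.rec (fun j => max (y j) 0)
        (fun j => max (-(y j)) 0) x') (fun i0 => r i0) x, ?_, ?_⟩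
      · rintro ((j | j) | i0) <;> simp [hr, le_max_right]
      · funext i
        rw [Finset.sum_apply]
        rw [Fintype.sum_sum_type, Fintype.sum_sum_type]
        simp only [hgens, Pi.smul_apply, smul_eq_mul]
        have e1 : ∀ j : Fin n, max (y j) 0 * M i j + max (-(y j)) 0 * (-(M i j))
            = y j * M i j := by
          intro j
          have := max_zero_sub_max_neg_zero_eq_self (y j)
          linear_combination M i j * this
        rw [← Finset.sum_add_distrib]
        simp only [e1]
        have e2 : ∑ x : Fin k, r x * (Pi.single x 1 : Fin k → ℝ) i = r i := by
          simp [Pi.single_apply, mul_ite, Finset.sum_ite_eq]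
        rw [e2]
        congr 1
        apply Finset.sum_congr rfl
        intro j _
        ring
    · rintro ⟨lam, hlam, rfl⟩
      refine ⟨fun j => lam (Sum.inl (Sum.inl j)) - lam (Sum.inl (Sum.inr j)),
        fun i => lam (Sum.inr i), fun i => hlam _, ?_⟩
      funext i
      rw [Finset.sum_apply, Fintype.sum_sum_type, Fintype.sum_sum_type]
      simp only [hgens, Pi.smul_apply, smul_eq_mul]
      have e2 : ∑ x : Fin k, lam (Sum.inr x) * (Pi.single x 1 : Fin k → ℝ) i
          = lam (Sum.inr i) := by
        simp [Pi.single_apply, mul_ite, Finset.sum_ite_eq]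
      rw [e2, ← Finset.sum_add_distrib]
      congr 1
      apply Finset.sum_congr rfl
      intro j _
      ring
  have hCclosed : IsClosed C := by rw [hCgen]; exact isClosed_fingen_cone gens
  have hCconvex : Convex ℝ C := by
    rw [hCgen]
    rintro z1 ⟨l1, hl1, rfl⟩ z2 ⟨l2, hl2, rfl⟩ a b ha hb hab
    refine ⟨fun x => a * l1 x + b * l2 x,
      fun x => add_nonneg (mul_nonneg ha (hl1 x)) (mul_nonneg hb (hl2 x)), ?_⟩
    rw [Finset.smul_sum, Finset.smul_sum, ← Finset.sum_add_distrib]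
    apply Finset.sum_congr rfl
    intro x _
    simp [add_smul, smul_smul]
  -- membership of d in C gives the conclusion
  by_contra hny
  have hdC : d ∉ C := by
    intro hd
    obtain ⟨y, r, hr, hz⟩ := hd
    apply hny
    refine ⟨y, fun i => ?_⟩
    have h2 : d i = (∑ j, M i j * y j) + r i := by
      have := congrFun hz i; simpa using this
    linarith [hr i]
  obtain ⟨f, s, hfC, hsd⟩ := geometric_hahn_banach_closed_point hCconvex hCclosed hdC
  -- C is a cone, so f ≤ 0 on C
  have hzero : (0 : Fin k → ℝ) ∈ C := ⟨0, 0, fun i => le_refl 0, by funext i; simp⟩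
  have hs0 : 0 < s := by have := hfC 0 hzero; simpa using this
  have hscale : ∀ a ∈ C, ∀ t : ℝ, 0 ≤ t → t • a ∈ C := by
    rintro a ⟨y, r, hr, rfl⟩ t ht
    refine ⟨t • y, t • r, fun i => by
      simp only [Pi.smul_apply, smul_eq_mul]; exact mul_nonneg ht (hr i), ?_⟩
    funext i
    simp only [Pi.smul_apply, smul_eq_mul]
    rw [mul_add, Finset.mul_sum]
    congr 1
    apply Finset.sum_congr rfl
    intro j _
    ring
  have hfC0 : ∀ a ∈ C, f a ≤ 0 := by
    intro a ha
    by_contra hfa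
    push_neg at hfa
    have ht : 0 ≤ (s + 1) / f a := by positivity
    have := hfC _ (hscale a ha _ ht)
    rw [map_smul, smul_eq_mul, div_mul_cancel₀ _ (ne_of_gt hfa)] at this
    linarith
  -- build the certificate
  set u : Fin k → ℝ := fun i => -(f (Pi.single i 1)) with hu
  have hfz : ∀ z : Fin k → ℝ, ∑ i, u i * z i = -(f z) := by
    intro z
    have hzrep : z = ∑ i, z i • (Pi.single i 1 : Fin k → ℝ) := by
      funext i'
      rw [Finset.sum_apply, Finset.sum_eq_single i']
      · simp
      · intro b _ hb; simp [Pi.single_apply, hb]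
      · intro hi; exact absurd (Finset.mem_univ i') hi
    conv_rhs => rw [hzrep]
    rw [map_sum, ← Finset.sum_neg_distrib]
    apply Finset.sum_congr rfl
    intro i _
    rw [map_smul, smul_eq_mul, hu]
    ring
  have hu0 : ∀ i, 0 ≤ u i := by
    intro i
    have hei : (Pi.single i 1 : Fin k → ℝ) ∈ C := by
      refine ⟨0, Pi.single i 1, fun i' => ?_, by simp⟩
      by_cases hii : i' = i <;> simp [Pi.single_apply, hii]
    have := hfC0 _ hei
    simp only [hu]
    linarith
  have hcol : ∀ j, ∑ i, u i * M i j = 0 := by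
    intro j
    have hmem : ∀ e : ℝ, (e • (fun i => M i j) : Fin k → ℝ) ∈ C := by
      intro e
      refine ⟨fun j' => if j' = j then e else 0, 0, fun i => le_refl 0, ?_⟩
      funext i
      simp [mul_ite, Finset.sum_ite_eq', mul_comm]
    have h1 := hfC0 _ (hmem 1)
    have h2 := hfC0 _ (hmem (-1))
    rw [map_smul, smul_eq_mul] at h1 h2
    have hfcol : f (fun i => M i j) = 0 := by linarith
    calc ∑ i, u i * M i j = ∑ i, u i * (fun i => M i j : Fin k → ℝ) i := rfl
      _ = -(f (fun i => M i j)) := hfz _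
      _ = 0 := by rw [hfcol]; ring
  have hfin := hcert u hu0 hcol
  rw [hfz d] at hfin
  linarith

lemma sum_swap_mul {α β : Type*} (s : Finset α) (t : Finset β) (u : α → ℝ) (B : α → β → ℝ)
    (x : β → ℝ) :
    ∑ i ∈ s, u i * (∑ j ∈ t, B i j * x j) = ∑ j ∈ t, (∑ i ∈ s, u i * B i j) * x j := by
  simp_rw [Finset.mul_sum, Finset.sum_mul]
  rw [Finset.sum_comm]
  exact Finset.sum_congr rfl fun j _ => Finset.sum_congr rfl fun i _ => by ring

end AuxFarkas

open Set

noncomputable section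

/-- The disjunctive cut `c·x + h·y ≤ γ̂` obtained from the projection cone rays is valid for
`P_I` and cuts off the current LP solution `(x*,y*)`. -/
theorem projection_disjunctive_cut_valid_and_cuts_off_apex
    {p q m : ℕ} (A : Matrix (Fin m) (Fin p) ℚ) (G : Matrix (Fin m) (Fin q) ℚ) (b : Fin m → ℚ)
    (c : Fin p → ℚ) (h : Fin q → ℚ)
    (xstar : Fin p → ℝ) (ystar : Fin q → ℝ) (hP : (xstar, ystar) ∈ feasSet A G b)
    (γstar : ℝ) (hγ : γstar = (∑ j, (c j : ℝ) * xstar j) + (∑ j, (h j : ℝ) * ystar j))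
    (heps : ∃ ε > (0 : ℝ), ∀ z ∈ feasSet A G b, IsIntVec z.1 →
      (∑ j, (c j : ℝ) * z.1 j) + (∑ j, (h j : ℝ) * z.2 j) ≤ γstar - ε)
    (V : Finset ((Fin m → ℚ) × ℚ))
    (hV : ∀ v ∈ V, (∀ i, 0 ≤ v.1 i) ∧ 0 ≤ v.2 ∧
      (∀ j, (∑ i, v.1 i * G i j) = v.2 * h j) ∧
      (∀ j, ∃ n : ℤ, (∑ i, v.1 i * A i j) - v.2 * c j = (n : ℚ)))
    (hVgen : ∀ (w : Fin m → ℝ) (t : ℝ), (∀ i, 0 ≤ w i) → 0 ≤ t →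
      (∀ j, (∑ i, w i * (G i j : ℝ)) = t * (h j : ℝ)) →
      ∃ lam : ((Fin m → ℚ) × ℚ) → ℝ, (∀ v, 0 ≤ lam v) ∧
        (∀ i, w i = ∑ v ∈ V, lam v * (v.1 i : ℝ)) ∧ t = ∑ v ∈ V, lam v * (v.2 : ℝ))
    (hpos : ∃ v ∈ V, 0 < v.2)
    (γhat : ℝ)
    (hγhat : IsGreatest {r : ℝ | ∃ v ∈ V, 0 < v.2 ∧
      r = ((∑ i, (v.1 i : ℝ) * (b i : ℝ)) -
          ((⌊(∑ i, (v.1 i : ℝ) * (b i : ℝ)) - (v.2 : ℝ) * γstar⌋ + 1 : ℤ) : ℝ)) / (v.2 : ℝ)}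
      γhat) :
    (∀ z ∈ mixedIntHull A G b,
      (∑ j, (c j : ℝ) * z.1 j) + (∑ j, (h j : ℝ) * z.2 j) ≤ γhat) ∧
    γhat < (∑ j, (c j : ℝ) * xstar j) + (∑ j, (h j : ℝ) * ystar j) := by
  classical
  obtain ⟨ε, hε0, hle⟩ := heps
  -- Part 2: the cut removes the apex
  have part2 : γhat < γstar := by
    obtain ⟨v, hvV, hvs, hveq⟩ := hγhat.1
    have hs : (0:ℝ) < (v.2:ℝ) := by exact_mod_cast hvs
    rw [hveq, div_lt_iff₀ hs]
    have hfl := Int.lt_floor_add_one ((∑ i, (v.1 i : ℝ) * (b i : ℝ)) - (v.2:ℝ) * γstar)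
    push_cast
    push_cast at hfl
    linarith
  -- Core: validity for mixed-integer feasible points
  have core : ∀ z ∈ feasSet A G b, IsIntVec z.1 →
      (∑ j, (c j : ℝ) * z.1 j) + (∑ j, (h j : ℝ) * z.2 j) ≤ γhat := by
    intro z hzP hzI
    by_contra hθ
    push_neg at hθ
    set cx : ℝ := ∑ j, (c j : ℝ) * z.1 j with hcx
    set hy : ℝ := ∑ j, (h j : ℝ) * z.2 j with hhy
    -- (★): for every v ∈ V,  u·(Ax) - s·(c·x) ≤ u·b - s·γ*
    have key : ∀ v ∈ V,
        (∑ i, (v.1 i:ℝ) * (∑ j, (A i j:ℝ) * z.1 j)) - (v.2:ℝ) * cx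
          ≤ (∑ i, (v.1 i : ℝ) * (b i : ℝ)) - (v.2:ℝ) * γstar := by
      intro v hvV
      obtain ⟨hu0, hs0, hG, hIntc⟩ := hV v hvV
      -- the combined inequality u·(Ax) + s·(h·y) ≤ u·b
      have hub : (∑ i, (v.1 i:ℝ) * (∑ j, (A i j:ℝ) * z.1 j)) + (v.2:ℝ) * hy
          ≤ ∑ i, (v.1 i : ℝ) * (b i : ℝ) := by
        have h1 : ∑ i, (v.1 i:ℝ) *
            ((∑ j, (A i j:ℝ) * z.1 j) + (∑ j, (G i j:ℝ) * z.2 j))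
            ≤ ∑ i, (v.1 i : ℝ) * (b i : ℝ) := by
          apply Finset.sum_le_sum
          intro i _
          have : (0:ℝ) ≤ (v.1 i : ℝ) := by exact_mod_cast hu0 i
          exact mul_le_mul_of_nonneg_left (hzP i) this
        have h2 : ∑ i, (v.1 i:ℝ) * (∑ j, (G i j:ℝ) * z.2 j) = (v.2:ℝ) * hy := by
          rw [sum_swap_mul]
          have : ∀ j, (∑ i, (v.1 i:ℝ) * (G i j : ℝ)) = (v.2:ℝ) * (h j : ℝ) := by
            intro j
            have := congrArg (fun r : ℚ => (r : ℝ)) (hG j)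
            push_cast at this
            simpa using this
          rw [hhy, Finset.mul_sum]
          apply Finset.sum_congr rfl
          intro j _
          rw [this j]
          ring
        have h3 : ∑ i, (v.1 i:ℝ) *
            ((∑ j, (A i j:ℝ) * z.1 j) + (∑ j, (G i j:ℝ) * z.2 j))
            = (∑ i, (v.1 i:ℝ) * (∑ j, (A i j:ℝ) * z.1 j))
              + ∑ i, (v.1 i:ℝ) * (∑ j, (G i j:ℝ) * z.2 j) := by
          simp_rw [mul_add]
          exact Finset.sum_add_distrib
        rw [h3, h2] at h1
        exact h1
      -- α_v is an integer
      choose nv hnv using hIntc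
      choose mz hmz using hzI
      have hαint : (∑ i, (v.1 i:ℝ) * (∑ j, (A i j:ℝ) * z.1 j)) - (v.2:ℝ) * cx
          = ((∑ j, nv j * mz j : ℤ) : ℝ) := by
        rw [sum_swap_mul, hcx, Finset.mul_sum, ← Finset.sum_sub_distrib]
        push_cast
        apply Finset.sum_congr rfl
        intro j _
        have hj := congrArg (fun r : ℚ => (r : ℝ)) (hnv j)
        push_cast at hj
        rw [hmz j]
        rw [← hj]
        ring
      by_cases hsv : 0 < v.2
      · -- positive multiplier: use the definition of γhat and integrality
        have hs : (0:ℝ) < (v.2:ℝ) := by exact_mod_cast hsv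
        set ub : ℝ := ∑ i, (v.1 i : ℝ) * (b i : ℝ) with hub'
        set δ : ℤ := ⌊ub - (v.2:ℝ) * γstar⌋ + 1 with hδ
        have hγv : (ub - (δ:ℝ)) / (v.2:ℝ) ≤ γhat := by
          apply hγhat.2
          exact ⟨v, hvV, hsv, by rw [hδ]⟩
        have hlt : ub - (v.2:ℝ) * (cx + hy) < (δ:ℝ) := by
          have h4 : (ub - (δ:ℝ)) / (v.2:ℝ) < cx + hy := lt_of_le_of_lt hγv hθ
          rw [div_lt_iff₀ hs] at h4
          linarith
        -- α_v ≤ ub - s θ < δ, so the integer α_v is at most δ - 1 = floor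
        have hα : ((∑ j, nv j * mz j : ℤ) : ℝ) < (δ:ℝ) := by
          rw [← hαint]
          nlinarith [hub, hlt]
        have hint : (∑ j, nv j * mz j : ℤ) ≤ δ - 1 := by
          have h5 : (∑ j, nv j * mz j : ℤ) < δ := by exact_mod_cast hα
          omega
        have : ((∑ j, nv j * mz j : ℤ) : ℝ) ≤ ub - (v.2:ℝ) * γstar := by
          calc ((∑ j, nv j * mz j : ℤ) : ℝ) ≤ ((δ - 1 : ℤ) : ℝ) := by exact_mod_cast hint
            _ = ((⌊ub - (v.2:ℝ) * γstar⌋ : ℤ) : ℝ) := by rw [hδ]; push_cast; ring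
            _ ≤ ub - (v.2:ℝ) * γstar := Int.floor_le _
        rw [hαint]
        exact this
      · -- zero multiplier
        have hs : (v.2:ℝ) = 0 := by
          have : v.2 = 0 := le_antisymm (not_lt.mp hsv) hs0
          exact_mod_cast this
        rw [hs] at hub
        rw [hs]
        simp only [zero_mul, sub_zero]
        linarith [hub]
    -- Farkas: build the system over y with rows (G; -h)
    set M : Fin (m+1) → Fin q → ℝ :=
      fun i => Fin.lastCases (fun j => -(h j : ℝ)) (fun i' j => (G i' j : ℝ)) i with hM
    set d : Fin (m+1) → ℝ :=
      Fin.lastCases (-(γstar - cx)) (fun i' => (b i' : ℝ) - ∑ j, (A i' j : ℝ) * z.1 j) with hd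
    have hcert : ∀ u : Fin (m+1) → ℝ, (∀ i, 0 ≤ u i) →
        (∀ j, ∑ i, u i * M i j = 0) → 0 ≤ ∑ i, u i * d i := by
      intro u hu0 hcol
      set w : Fin m → ℝ := fun i => u (Fin.castSucc i) with hw
      set t : ℝ := u (Fin.last m) with htt
      have hwG : ∀ j, (∑ i, w i * (G i j : ℝ)) = t * (h j : ℝ) := by
        intro j
        have h8 := hcol j
        rw [Fin.sum_univ_castSucc] at h8
        simp only [hM, Fin.lastCases_last, Fin.lastCases_castSucc] at h8
        simp only [hw, htt]
        linarith [h8]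
      obtain ⟨lam, hlam0, hlamw, hlamt⟩ :=
        hVgen w t (fun i => hu0 _) (hu0 _) hwG
      -- expand ∑ u_i d_i
      rw [Fin.sum_univ_castSucc]
      simp only [hd, Fin.lastCases_last, Fin.lastCases_castSucc]
      have expand : ∑ i : Fin m, u (Fin.castSucc i) * ((b i : ℝ) - ∑ j, (A i j : ℝ) * z.1 j)
            + u (Fin.last m) * (-(γstar - cx))
          = ∑ v ∈ V, lam v * (((∑ i, (v.1 i : ℝ) * (b i : ℝ)) - (v.2:ℝ) * γstar)
              - ((∑ i, (v.1 i:ℝ) * (∑ j, (A i j:ℝ) * z.1 j)) - (v.2:ℝ) * cx)) := by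
        have e1 : ∑ i : Fin m, u (Fin.castSucc i) * ((b i : ℝ) - ∑ j, (A i j : ℝ) * z.1 j)
            = ∑ i : Fin m, (∑ v ∈ V, lam v * (v.1 i : ℝ))
                * ((b i : ℝ) - ∑ j, (A i j : ℝ) * z.1 j) := by
          apply Finset.sum_congr rfl
          intro i _
          rw [← hlamw i]
        rw [e1, ← htt, hlamt]
        have e3 : ∀ i : Fin m,
            (∑ v ∈ V, lam v * (v.1 i : ℝ)) * ((b i : ℝ) - ∑ j, (A i j : ℝ) * z.1 j)
            = ∑ v ∈ V, lam v * (v.1 i : ℝ) * ((b i : ℝ) - ∑ j, (A i j : ℝ) * z.1 j) :=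
          fun i => Finset.sum_mul _ _ _
        simp_rw [e3]
        rw [Finset.sum_comm, Finset.sum_mul, ← Finset.sum_add_distrib]
        apply Finset.sum_congr rfl
        intro v _
        have e4 : ∑ i, lam v * (v.1 i:ℝ) * ((b i:ℝ) - ∑ j, (A i j:ℝ) * z.1 j)
            = lam v * ((∑ i, (v.1 i:ℝ) * (b i:ℝ))
                - ∑ i, (v.1 i:ℝ) * (∑ j, (A i j:ℝ) * z.1 j)) := by
          rw [mul_sub, Finset.mul_sum, Finset.mul_sum, ← Finset.sum_sub_distrib]
          apply Finset.sum_congr rfl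
          intro i _
          ring
        rw [e4]
        ring
      rw [expand]
      apply Finset.sum_nonneg
      intro v hvV
      exact mul_nonneg (hlam0 v) (by linarith [key v hvV])
    obtain ⟨y', hy'⟩ := farkas_solvable M d hcert
    have hfeas : (z.1, y') ∈ feasSet A G b := by
      intro i
      have h6 := hy' (Fin.castSucc i)
      simp only [hM, hd, Fin.lastCases_castSucc] at h6
      show (∑ j, (A i j : ℝ) * z.1 j) + (∑ j, (G i j : ℝ) * y' j) ≤ (b i : ℝ)
      linarith [h6]
    have hcut : γstar - cx ≤ ∑ j, (h j : ℝ) * y' j := by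
      have := hy' (Fin.last m)
      simp only [hM, hd, Fin.lastCases_last] at this
      have e : ∑ j, -(h j : ℝ) * y' j = -∑ j, (h j : ℝ) * y' j := by
        rw [← Finset.sum_neg_distrib]
        apply Finset.sum_congr rfl
        intro j _
        ring
      rw [e] at this
      linarith
    have h7 : cx + (∑ j, (h j : ℝ) * y' j) ≤ γstar - ε := hle (z.1, y') hfeas hzI
    linarith
  -- Part 1: validity on the hull by convexity
  refine ⟨?_, by rw [← hγ]; exact part2⟩
  intro z hz
  have hconv : Convex ℝ {z : (Fin p → ℝ) × (Fin q → ℝ) |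
      (∑ j, (c j : ℝ) * z.1 j) + (∑ j, (h j : ℝ) * z.2 j) ≤ γhat} := by
    intro z1 h1 z2 h2 a e ha he hae
    simp only [Set.mem_setOf_eq] at h1 h2 ⊢
    have e1 : ∑ j, (c j : ℝ) * (a • z1 + e • z2).1 j
        = a * (∑ j, (c j : ℝ) * z1.1 j) + e * (∑ j, (c j : ℝ) * z2.1 j) := by
      rw [Finset.mul_sum, Finset.mul_sum, ← Finset.sum_add_distrib]
      apply Finset.sum_congr rfl
      intro j _
      simp only [Prod.fst_add, Prod.smul_fst, Pi.add_apply, Pi.smul_apply, smul_eq_mul]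
      ring
    have e2 : ∑ j, (h j : ℝ) * (a • z1 + e • z2).2 j
        = a * (∑ j, (h j : ℝ) * z1.2 j) + e * (∑ j, (h j : ℝ) * z2.2 j) := by
      rw [Finset.mul_sum, Finset.mul_sum, ← Finset.sum_add_distrib]
      apply Finset.sum_congr rfl
      intro j _
      simp only [Prod.snd_add, Prod.smul_snd, Pi.add_apply, Pi.smul_apply, smul_eq_mul]
      ring
    rw [e1, e2]
    have e5 : a * γhat + e * γhat = γhat := by rw [← add_mul, hae, one_mul]
    linarith [mul_le_mul_of_nonneg_left h1 ha, mul_le_mul_of_nonneg_left h2 he, e5]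
  have hsub : {z ∈ feasSet A G b | IsIntVec z.1} ⊆ {z : (Fin p → ℝ) × (Fin q → ℝ) |
      (∑ j, (c j : ℝ) * z.1 j) + (∑ j, (h j : ℝ) * z.2 j) ≤ γhat} := by
    rintro z ⟨hzP, hzI⟩
    exact core z hzP hzI
  exact convexHull_min hsub hconv hz

end
end

section
/- Let p, q, m ∈ ℕ, let A ∈ ℚ^{m×p}, G ∈ ℚ^{m×q}, b ∈ ℚ^m, c ∈ ℚ^p, h ∈ ℚ^q, and let P := {(x,y) ∈ ℝ^p × ℝ^q : Ax + Gy ≤ b componentwise} and P_I := conv({(x,y) ∈ P : x ∈ ℤ^p}). Let γ* ∈ ℚ be such that c·x + h·y ≤ γ* for every (x,y) ∈ P with x ∈ ℤ^p, while c·x + h·y > γ* for some (x,y) ∈ P. Let V be a finite subset of ℚ^m × ℚ such that: every (u,s) ∈ V satisfies u ≥ 0, s ≥ 0, uᵀG = s·h, and uᵀA − s·c ∈ ℤ^p; and every (w,t) ∈ ℝ^m × ℝ with w ≥ 0, t ≥ 0, wᵀG = t·h is a nonnegative linear combination of elements of V. For (u,s) ∈ V define δ^{(u,s)} := ⌈u·b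 − s·γ*⌉, and for (u,s) ∈ V with s > 0 define γ^{(u,s)} := (u·b − δ^{(u,s)})/s. Assume {(u,s) ∈ V : s > 0} is nonempty and set γ̂ := max{γ^{(u,s)} : (u,s) ∈ V, s > 0}. Then c·x + h·y ≤ γ̂ for every (x,y) ∈ P_I. -/
open Set

open Finset Classical

noncomputable section


lemma sum_dite_subtype {ι : Type} [Fintype ι] (p : ι → Prop) [DecidablePred p]
    (F : {x // p x} → ℝ) :
    ∑ i : ι, (if h : p i then F ⟨i, h⟩ else 0) = ∑ i : {x // p x}, F i := by
  rw [← Fintype.sum_subtype_add_sum_subtype p (fun i => if h : p i then F ⟨i, h⟩ else 0)]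
  have e1 : ∀ x : {x // p x}, (if h : p x.1 then F ⟨x.1, h⟩ else 0) = F x := by
    intro x; simp [x.2]
  have e2 : ∀ x : {x // ¬ p x}, (if h : p x.1 then F ⟨x.1, h⟩ else 0) = (0:ℝ) := by
    intro x; simp [x.2]
  rw [Finset.sum_congr rfl (fun x _ => e1 x), Finset.sum_congr rfl (fun x _ => e2 x)]
  simp

/-- Farkas' lemma: if the system `∀ i, ∑ j, M i j * y j ≤ d i` is infeasible,
there is a nonnegative certificate. -/
theorem my_farkas : ∀ (q : ℕ) (ι : Type) [Fintype ι] (M : ι → Fin q → ℝ) (d : ι → ℝ),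
    (¬ ∃ y : Fin q → ℝ, ∀ i, ∑ j, M i j * y j ≤ d i) →
    ∃ u : ι → ℝ, (∀ i, 0 ≤ u i) ∧ (∀ j, ∑ i, u i * M i j = 0) ∧ ∑ i, u i * d i < 0 := by
  intro q
  induction q with
  | zero =>
    intro ι _ M d hinf
    push_neg at hinf
    obtain ⟨i, hi⟩ := hinf (fun _ => 0)
    simp only [Finset.univ_eq_empty, Finset.sum_empty, not_le] at hi
    refine ⟨fun i' => if i' = i then 1 else 0, fun i' => by positivity, fun j => j.elim0, ?_⟩
    simp [Finset.sum_ite_eq', hi]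
  | succ q IH =>
    intro ι _ M d hinf
    set a : ι → ℝ := fun i => M i (Fin.last q) with ha
    set ι' := {i // a i = 0} ⊕ ({i // 0 < a i} × {i // a i < 0}) with hι'
    set M' : ι' → Fin q → ℝ := fun w j => match w with
      | .inl i => M i.1 j.castSucc
      | .inr (i, k) => (-(a k.1)) * M i.1 j.castSucc + a i.1 * M k.1 j.castSucc with hM'
    set d' : ι' → ℝ := fun w => match w with
      | .inl i => d i.1
      | .inr (i, k) => (-(a k.1)) * d i.1 + a i.1 * d k.1 with hd'
    -- the reduced system is infeasible
    have hinf' : ¬ ∃ y : Fin q → ℝ, ∀ w, ∑ j, M' w j * y j ≤ d' w := by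
      rintro ⟨y', hy'⟩
      apply hinf
      set r : ι → ℝ := fun i => ∑ j : Fin q, M i j.castSucc * y' j with hr
      have hZ : ∀ i, a i = 0 → r i ≤ d i := fun i h0 => hy' (.inl ⟨i, h0⟩)
      have hPN : ∀ (i : {i // 0 < a i}) (k : {i // a i < 0}),
          (-(a k.1)) * r i.1 + a i.1 * r k.1 ≤ (-(a k.1)) * d i.1 + a i.1 * d k.1 := by
        intro i k
        have h1 := hy' (.inr (i, k))
        have h2 : ∑ j, M' (.inr (i, k)) j * y' j
            = (-(a k.1)) * r i.1 + a i.1 * r k.1 := by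
          simp only [hM', hr, Finset.mul_sum]
          rw [← Finset.sum_add_distrib]
          apply Finset.sum_congr rfl
          intro j _
          ring
        rw [h2] at h1
        exact h1
      -- choose the value of the last variable
      have key : ∃ t : ℝ, (∀ i : {i // 0 < a i}, t ≤ (d i.1 - r i.1) / a i.1) ∧
          (∀ k : {i // a i < 0}, (d k.1 - r k.1) / a k.1 ≤ t) := by
        by_cases hP : Nonempty {i // 0 < a i}
        · have hne : (Finset.univ : Finset {i // 0 < a i}).Nonempty := univ_nonempty
          refine ⟨Finset.univ.inf' hne (fun i => (d i.1 - r i.1) / a i.1),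
            fun i => Finset.inf'_le _ (mem_univ i), fun k => ?_⟩
          rw [Finset.le_inf'_iff]
          intro i _
          have h1 : 0 < a i.1 := i.2
          have h2 : a k.1 < 0 := k.2
          have h3 := hPN i k
          have e1 : (d i.1 - r i.1) / a i.1 * a i.1 = d i.1 - r i.1 :=
            div_mul_cancel₀ _ (ne_of_gt h1)
          have e2 : (d k.1 - r k.1) / a k.1 * a k.1 = d k.1 - r k.1 :=
            div_mul_cancel₀ _ (ne_of_lt h2)
          nlinarith [mul_pos h1 (neg_pos.mpr h2)]
        · by_cases hN : Nonempty {i // a i < 0}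
          · have hne : (Finset.univ : Finset {i // a i < 0}).Nonempty := univ_nonempty
            refine ⟨Finset.univ.sup' hne (fun k => (d k.1 - r k.1) / a k.1),
              fun i => absurd ⟨i⟩ hP,
              fun k => Finset.le_sup' (fun k : {i // a i < 0} =>
                (d k.1 - r k.1) / a k.1) (mem_univ k)⟩
          · exact ⟨0, fun i => absurd ⟨i⟩ hP, fun k => absurd ⟨k⟩ hN⟩
      obtain ⟨t, htP, htN⟩ := key
      refine ⟨Fin.snoc y' t, fun i => ?_⟩
      have hsum : ∑ j : Fin (q+1), M i j * (Fin.snoc y' t : Fin (q+1) → ℝ) j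
          = r i + a i * t := by
        rw [Fin.sum_univ_castSucc]
        simp [hr, ha]
      rw [hsum]
      rcases lt_trichotomy (a i) 0 with h0 | h0 | h0
      · have h4 := htN ⟨i, h0⟩
        have e2 : (d i - r i) / a i * a i = d i - r i := div_mul_cancel₀ _ (ne_of_lt h0)
        nlinarith
      · rw [h0]; simpa using hZ i h0
      · have h4 := htP ⟨i, h0⟩
        have e1 : (d i - r i) / a i * a i = d i - r i := div_mul_cancel₀ _ (ne_of_gt h0)
        nlinarith
    obtain ⟨u', hu'0, hu'M, hu'd⟩ := IH ι' M' d' hinf'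
    -- lift the certificate
    set u : ι → ℝ := fun i =>
      (if h : a i = 0 then u' (.inl ⟨i, h⟩) else 0)
      + (if h : 0 < a i then ∑ k : {i // a i < 0}, u' (.inr (⟨i, h⟩, k)) * (-(a k.1)) else 0)
      + (if h : a i < 0 then ∑ p : {i // 0 < a i}, u' (.inr (p, ⟨i, h⟩)) * a p.1 else 0)
      with hu
    have hu0 : ∀ i, 0 ≤ u i := by
      intro i
      simp only [hu]
      refine add_nonneg (add_nonneg ?_ ?_) ?_
      · split
        · exact hu'0 _
        · exact le_rfl
      · split
        · refine Finset.sum_nonneg fun k _ => mul_nonneg (hu'0 _) ?_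
          have := k.2; linarith
        · exact le_rfl
      · split
        · refine Finset.sum_nonneg fun p _ => mul_nonneg (hu'0 _) (le_of_lt p.2)
        · exact le_rfl
    -- key sum identity
    have hkey : ∀ g : ι → ℝ, ∑ i, u i * g i
        = (∑ i : {i // a i = 0}, u' (.inl i) * g i.1)
        + ∑ pk : {i // 0 < a i} × {i // a i < 0},
            u' (.inr pk) * ((-(a pk.2.1)) * g pk.1.1 + a pk.1.1 * g pk.2.1) := by
      intro g
      have expand : ∀ i : ι, u i * g i
          = (if h : a i = 0 then u' (.inl ⟨i, h⟩) * g i else 0)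
          + (if h : 0 < a i then
              ∑ k : {i // a i < 0}, u' (.inr (⟨i, h⟩, k)) * (-(a k.1)) * g i else 0)
          + (if h : a i < 0 then
              ∑ p : {i // 0 < a i}, u' (.inr (p, ⟨i, h⟩)) * a p.1 * g i else 0) := by
        intro i
        simp only [hu]
        rw [add_mul, add_mul]
        congr 1
        · congr 1
          · split <;> simp
          · split
            · rw [Finset.sum_mul]
            · simp
        · split
          · rw [Finset.sum_mul]
          · simp
      rw [Finset.sum_congr rfl (fun i _ => expand i)]
      rw [Finset.sum_add_distrib, Finset.sum_add_distrib]
      rw [sum_dite_subtype (fun i => a i = 0) (fun i => u' (.inl ⟨i.1, i.2⟩) * g i.1)]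
      rw [sum_dite_subtype (fun i => 0 < a i)
        (fun p => ∑ k : {i // a i < 0}, u' (.inr (⟨p.1, p.2⟩, k)) * (-(a k.1)) * g p.1)]
      rw [sum_dite_subtype (fun i => a i < 0)
        (fun k => ∑ p : {i // 0 < a i}, u' (.inr (p, ⟨k.1, k.2⟩)) * a p.1 * g k.1)]
      have h1 : ∑ pk : {i // 0 < a i} × {i // a i < 0},
          u' (.inr pk) * ((-(a pk.2.1)) * g pk.1.1 + a pk.1.1 * g pk.2.1)
          = (∑ p : {i // 0 < a i}, ∑ k : {i // a i < 0},
              u' (.inr (p, k)) * (-(a k.1)) * g p.1)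
          + ∑ p : {i // 0 < a i}, ∑ k : {i // a i < 0},
              u' (.inr (p, k)) * a p.1 * g k.1 := by
        rw [← Finset.sum_add_distrib]
        rw [Fintype.sum_prod_type]
        apply Finset.sum_congr rfl; intro p _
        rw [← Finset.sum_add_distrib]
        apply Finset.sum_congr rfl; intro k _
        ring
      simp only [Subtype.eta]
      rw [h1, add_assoc]
      congr 1
      congr 1
      exact Finset.sum_comm
    refine ⟨u, hu0, ?_, ?_⟩
    · intro j
      refine Fin.lastCases ?_ ?_ j
      · rw [hkey (fun i => M i (Fin.last q))]
        have e1 : ∀ i : {i // a i = 0}, u' (.inl i) * M i.1 (Fin.last q) = 0 := by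
          intro i; have := i.2; simp only [ha] at this; rw [this, mul_zero]
        rw [Finset.sum_congr rfl (fun i _ => e1 i)]
        have e2 : ∀ pk : {i // 0 < a i} × {i // a i < 0},
            u' (.inr pk) * ((-(a pk.2.1)) * M pk.1.1 (Fin.last q)
              + a pk.1.1 * M pk.2.1 (Fin.last q)) = 0 := by
          intro pk
          have : (-(a pk.2.1)) * M pk.1.1 (Fin.last q)
              + a pk.1.1 * M pk.2.1 (Fin.last q) = 0 := by
            simp only [ha]; ring
          rw [this, mul_zero]
        rw [Finset.sum_congr rfl (fun pk _ => e2 pk)]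
        simp
      · intro j'
        rw [hkey (fun i => M i j'.castSucc)]
        have := hu'M j'
        rw [Fintype.sum_sum_type] at this
        convert this using 2
    · rw [hkey d]
      have := hu'd
      rw [Fintype.sum_sum_type] at this
      convert this using 2


lemma swap_sum' {α : Type*} {q : ℕ} (s : Finset α) (f : α → ℝ) (g : α → Fin q → ℝ)
    (y : Fin q → ℝ) :
    ∑ v ∈ s, f v * ∑ j, g v j * y j = ∑ j, (∑ v ∈ s, f v * g v j) * y j := by
  simp_rw [Finset.mul_sum, Finset.sum_mul, mul_assoc]
  exact Finset.sum_comm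

lemma dual_exists {m q : ℕ} (Gr : Fin m → Fin q → ℝ) (d : Fin m → ℝ) (hr : Fin q → ℝ)
    (y₀ : Fin q → ℝ) (hy₀ : ∀ i, ∑ j, Gr i j * y₀ j ≤ d i)
    (β : ℝ) (hub : ∀ y' : Fin q → ℝ, (∀ i, ∑ j, Gr i j * y' j ≤ d i) →
      ∑ j, hr j * y' j ≤ β)
    (ε : ℝ) (hε : 0 < ε) :
    ∃ u : Fin m → ℝ, (∀ i, 0 ≤ u i) ∧ (∀ j, ∑ i, u i * Gr i j = hr j) ∧
      ∑ i, u i * d i < β + ε := by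
  set M : (Fin m ⊕ Unit) → Fin q → ℝ := fun w j => match w with
    | .inl i => Gr i j
    | .inr _ => -hr j with hM
  set D : (Fin m ⊕ Unit) → ℝ := fun w => match w with
    | .inl i => d i
    | .inr _ => -(β + ε) with hD
  have hinf : ¬ ∃ y : Fin q → ℝ, ∀ w, ∑ j, M w j * y j ≤ D w := by
    rintro ⟨y, hy⟩
    have h1 : ∀ i, ∑ j, Gr i j * y j ≤ d i := fun i => hy (.inl i)
    have h2 := hy (.inr ())
    have h3 : ∑ j, M (Sum.inr ()) j * y j = -∑ j, hr j * y j := by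
      rw [← Finset.sum_neg_distrib]
      apply Finset.sum_congr rfl; intro j _; simp [hM]
    rw [h3] at h2
    have := hub y h1
    simp only [hD] at h2
    linarith
  obtain ⟨w, hw0, hwM, hwd⟩ := my_farkas q (Fin m ⊕ Unit) M D hinf
  set μ := w (.inr ()) with hμ
  have hsumM : ∀ j, ∑ i, w (.inl i) * Gr i j = μ * hr j := by
    intro j
    have h4 := hwM j
    rw [Fintype.sum_sum_type] at h4
    simp only [hM, Finset.univ_unique, Finset.sum_singleton] at h4
    rw [hμ]; linarith [h4]
  have hsumd : ∑ i, w (.inl i) * d i < μ * (β + ε) := by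
    have h4 := hwd
    rw [Fintype.sum_sum_type] at h4
    have e0 : ∑ a₂ : Unit, w (Sum.inr a₂) * D (Sum.inr a₂) = -(μ * (β + ε)) := by
      rw [Fintype.sum_unique, hμ]
      show w (Sum.inr ()) * -(β + ε) = -(w (Sum.inr ()) * (β + ε))
      ring
    have e1 : ∀ i : Fin m, w (Sum.inl i) * D (Sum.inl i) = w (Sum.inl i) * d i :=
      fun i => rfl
    rw [Finset.sum_congr rfl (fun i _ => e1 i), e0] at h4
    linarith [h4]
  have hμ0 : 0 ≤ μ := hw0 _
  rcases eq_or_lt_of_le hμ0 with hμz | hμpos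
  · exfalso
    have hcontr : (0:ℝ) ≤ ∑ i, w (.inl i) * d i := by
      have step : ∀ i, w (.inl i) * (∑ j, Gr i j * y₀ j) ≤ w (.inl i) * d i :=
        fun i => mul_le_mul_of_nonneg_left (hy₀ i) (hw0 _)
      have e1 : ∑ i, w (.inl i) * (∑ j, Gr i j * y₀ j)
          = ∑ j, (∑ i, w (.inl i) * Gr i j) * y₀ j := swap_sum' _ _ _ _
      have e2 : ∑ j, (∑ i, w (.inl i) * Gr i j) * y₀ j = 0 := by
        apply Finset.sum_eq_zero; intro j _
        rw [hsumM j, ← hμz]; ring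
      calc (0:ℝ) = ∑ i, w (.inl i) * (∑ j, Gr i j * y₀ j) := by rw [e1, e2]
        _ ≤ ∑ i, w (.inl i) * d i := Finset.sum_le_sum (fun i _ => step i)
    have : μ * (β + ε) = 0 := by rw [← hμz]; ring
    linarith
  · refine ⟨fun i => w (.inl i) / μ, fun i => div_nonneg (hw0 _) hμ0, fun j => ?_, ?_⟩
    · have e1 : ∑ i, w (.inl i) / μ * Gr i j = (∑ i, w (.inl i) * Gr i j) / μ := by
        rw [Finset.sum_div]
        apply Finset.sum_congr rfl; intro i _; ring
      rw [e1, hsumM j, mul_comm, mul_div_assoc, div_self (ne_of_gt hμpos), mul_one]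
    · have e1 : ∑ i, w (.inl i) / μ * d i = (∑ i, w (.inl i) * d i) / μ := by
        rw [Finset.sum_div]
        apply Finset.sum_congr rfl; intro i _; ring
      rw [e1, div_lt_iff₀ hμpos]
      nlinarith [hsumd]


/-- The generalized (ceiling) disjunctive cut `c·x + h·y ≤ γ̂` is valid for `P_I` whenever
`c·x + h·y ≤ γ*` is valid for `P_I` but not for `P`. -/
theorem generalized_projection_disjunctive_cut_valid
    {p q m : ℕ} (A : Matrix (Fin m) (Fin p) ℚ) (G : Matrix (Fin m) (Fin q) ℚ) (b : Fin m → ℚ)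
    (c : Fin p → ℚ) (h : Fin q → ℚ) (γstar : ℚ)
    (hvalid : ∀ z ∈ feasSet A G b, IsIntVec z.1 →
      (∑ j, (c j : ℝ) * z.1 j) + (∑ j, (h j : ℝ) * z.2 j) ≤ (γstar : ℝ))
    (hnotP : ∃ z ∈ feasSet A G b,
      (γstar : ℝ) < (∑ j, (c j : ℝ) * z.1 j) + (∑ j, (h j : ℝ) * z.2 j))
    (V : Finset ((Fin m → ℚ) × ℚ))
    (hV : ∀ v ∈ V, (∀ i, 0 ≤ v.1 i) ∧ 0 ≤ v.2 ∧
      (∀ j, (∑ i, v.1 i * G i j) = v.2 * h j) ∧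
      (∀ j, ∃ n : ℤ, (∑ i, v.1 i * A i j) - v.2 * c j = (n : ℚ)))
    (hVgen : ∀ (w : Fin m → ℝ) (t : ℝ), (∀ i, 0 ≤ w i) → 0 ≤ t →
      (∀ j, (∑ i, w i * (G i j : ℝ)) = t * (h j : ℝ)) →
      ∃ lam : ((Fin m → ℚ) × ℚ) → ℝ, (∀ v, 0 ≤ lam v) ∧
        (∀ i, w i = ∑ v ∈ V, lam v * (v.1 i : ℝ)) ∧ t = ∑ v ∈ V, lam v * (v.2 : ℝ))
    (hpos : ∃ v ∈ V, 0 < v.2)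
    (γhat : ℚ)
    (hγhat : IsGreatest {r : ℚ | ∃ v ∈ V, 0 < v.2 ∧
      r = ((∑ i, v.1 i * b i) - ((⌈(∑ i, v.1 i * b i) - v.2 * γstar⌉ : ℤ) : ℚ)) / v.2}
      γhat) :
    ∀ z ∈ mixedIntHull A G b,
      (∑ j, (c j : ℝ) * z.1 j) + (∑ j, (h j : ℝ) * z.2 j) ≤ (γhat : ℝ) := by
  intro z hz
  set H : Set ((Fin p → ℝ) × (Fin q → ℝ)) :=
    {w | (∑ j, (c j : ℝ) * w.1 j) + (∑ j, (h j : ℝ) * w.2 j) ≤ (γhat : ℝ)} with hH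
  have hconv : Convex ℝ H := by
    intro z1 hz1 z2 hz2 a1 b1 ha hb hab
    simp only [hH, Set.mem_setOf_eq] at hz1 hz2 ⊢
    have e1 : ∑ j, (c j : ℝ) * (a1 • z1 + b1 • z2).1 j
        = a1 * ∑ j, (c j : ℝ) * z1.1 j + b1 * ∑ j, (c j : ℝ) * z2.1 j := by
      rw [Finset.mul_sum, Finset.mul_sum, ← Finset.sum_add_distrib]
      apply Finset.sum_congr rfl; intro j _
      simp only [Prod.fst_add, Prod.smul_fst, Pi.add_apply, Pi.smul_apply, smul_eq_mul]
      ring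
    have e2 : ∑ j, (h j : ℝ) * (a1 • z1 + b1 • z2).2 j
        = a1 * ∑ j, (h j : ℝ) * z1.2 j + b1 * ∑ j, (h j : ℝ) * z2.2 j := by
      rw [Finset.mul_sum, Finset.mul_sum, ← Finset.sum_add_distrib]
      apply Finset.sum_congr rfl; intro j _
      simp only [Prod.snd_add, Prod.smul_snd, Pi.add_apply, Pi.smul_apply, smul_eq_mul]
      ring
    rw [e1, e2]
    have f1 := mul_le_mul_of_nonneg_left hz1 ha
    have f2 := mul_le_mul_of_nonneg_left hz2 hb
    rw [mul_add] at f1 f2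
    have f3 : a1 * (γhat:ℝ) + b1 * (γhat:ℝ) = (γhat:ℝ) := by rw [← add_mul, hab, one_mul]
    linarith [f1, f2, f3]
  refine convexHull_min ?_ hconv hz
  rintro ⟨x, y⟩ ⟨hfeas, hint⟩
  simp only [hH, Set.mem_setOf_eq]
  -- Setup
  set cx : ℝ := ∑ j, (c j : ℝ) * x j with hcx
  set d : Fin m → ℝ := fun i => (b i : ℝ) - ∑ j, (A i j : ℝ) * x j with hd
  have hyfeas : ∀ i, ∑ j, (G i j : ℝ) * y j ≤ d i := by
    intro i
    have h0 := hfeas i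
    simp only [hd]
    linarith [h0]
  have hxfeas : ∀ y' : Fin q → ℝ, (∀ i, ∑ j, (G i j : ℝ) * y' j ≤ d i) →
      (x, y') ∈ feasSet A G b := by
    intro y' hy' i
    have h0 := hy' i
    simp only [hd] at h0
    show (∑ j, (A i j : ℝ) * x j) + (∑ j, (G i j : ℝ) * y' j) ≤ (b i : ℝ)
    linarith [h0]
  set S : Set ℝ := (fun y' : Fin q → ℝ => ∑ j, (h j : ℝ) * y' j) ''
      {y' | ∀ i, ∑ j, (G i j : ℝ) * y' j ≤ d i} with hS
  have hSne : S.Nonempty := ⟨_, ⟨y, hyfeas, rfl⟩⟩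
  have hubS : ∀ r ∈ S, r ≤ (γstar : ℝ) - cx := by
    rintro r ⟨y', hy', rfl⟩
    have h0 := hvalid (x, y') (hxfeas y' hy') hint
    simp only [hcx]
    linarith [h0]
  set β : ℝ := sSup S with hβ
  have hbdd : BddAbove S := ⟨_, hubS⟩
  have hβub : ∀ y' : Fin q → ℝ, (∀ i, ∑ j, (G i j : ℝ) * y' j ≤ d i) →
      ∑ j, (h j : ℝ) * y' j ≤ β := fun y' hy' => le_csSup hbdd ⟨y', hy', rfl⟩
  have hyβ : ∑ j, (h j : ℝ) * y j ≤ β := hβub y hyfeas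
  have hβγ : cx + β ≤ (γstar : ℝ) := by
    have h0 := csSup_le hSne hubS
    rw [← hβ] at h0
    linarith
  have hint' : ∀ j : Fin p, ∃ n : ℤ, x j = (n : ℝ) := hint
  choose xint hxint using hint'
  -- per-generator quantities
  set Dv : (Fin m → ℚ) × ℚ → ℝ := fun v => ∑ i, (v.1 i : ℝ) * d i with hDv
  set Kv : (Fin m → ℚ) × ℚ → ℝ :=
    fun v => (∑ i, (v.1 i : ℝ) * ∑ j, (A i j : ℝ) * x j) - (v.2 : ℝ) * cx with hKv
  set Ev : (Fin m → ℚ) × ℚ → ℝ := fun v => (∑ i, (v.1 i : ℝ) * (b i : ℝ)) - Kv v with hEv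
  have hEvDv : ∀ v, Ev v = Dv v + (v.2 : ℝ) * cx := by
    intro v
    simp only [hEv, hKv, hDv, hd]
    have e : ∑ i, (v.1 i : ℝ) * ((b i : ℝ) - ∑ j, (A i j : ℝ) * x j)
        = ∑ i, (v.1 i : ℝ) * (b i : ℝ) - ∑ i, (v.1 i : ℝ) * ∑ j, (A i j : ℝ) * x j := by
      rw [← Finset.sum_sub_distrib]
      apply Finset.sum_congr rfl; intro i _; ring
    rw [e]; ring
  have hKint : ∀ v ∈ V, ∃ n : ℤ, Kv v = (n : ℝ) := by
    intro v hv
    obtain ⟨-, -, -, hint4⟩ := hV v hv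
    choose nf hnf using hint4
    refine ⟨∑ j, nf j * xint j, ?_⟩
    have e1 : Kv v = ∑ j, ((∑ i, (v.1 i : ℝ) * (A i j : ℝ)) - (v.2 : ℝ) * (c j : ℝ)) * x j := by
      simp only [hKv, hcx]
      rw [swap_sum' Finset.univ (fun i => (v.1 i : ℝ)) (fun i j => (A i j : ℝ)) x]
      rw [Finset.mul_sum, ← Finset.sum_sub_distrib]
      apply Finset.sum_congr rfl; intro j _; ring
    have e2 : ∀ j, ((∑ i, (v.1 i : ℝ) * (A i j : ℝ)) - (v.2 : ℝ) * (c j : ℝ))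
        = ((nf j : ℤ) : ℝ) := by
      intro j
      have e := congrArg (fun r : ℚ => (r : ℝ)) (hnf j)
      push_cast at e
      exact e
    rw [e1]
    have e3 : ∀ j, ((∑ i, (v.1 i : ℝ) * (A i j : ℝ)) - (v.2 : ℝ) * (c j : ℝ)) * x j
        = ((nf j * xint j : ℤ) : ℝ) := by
      intro j
      rw [e2 j, hxint j]
      push_cast
      ring
    rw [Finset.sum_congr rfl (fun j _ => e3 j)]
    push_cast
    rfl
  have hweak : ∀ v ∈ V, ∀ y' : Fin q → ℝ, (∀ i, ∑ j, (G i j : ℝ) * y' j ≤ d i) →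
      (v.2 : ℝ) * (∑ j, (h j : ℝ) * y' j) ≤ Dv v := by
    intro v hv y' hy'
    obtain ⟨h1, -, h3, -⟩ := hV v hv
    have step : ∑ i, (v.1 i : ℝ) * (∑ j, (G i j : ℝ) * y' j) ≤ Dv v := by
      simp only [hDv]
      apply Finset.sum_le_sum
      intro i _
      exact mul_le_mul_of_nonneg_left (hy' i) (by exact_mod_cast h1 i)
    have e2 : ∀ j : Fin q, (∑ i, (v.1 i : ℝ) * (G i j : ℝ)) = (v.2 : ℝ) * (h j : ℝ) := by
      intro j
      have e := congrArg (fun r : ℚ => (r : ℝ)) (h3 j)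
      push_cast at e
      exact e
    calc (v.2 : ℝ) * ∑ j, (h j : ℝ) * y' j
        = ∑ j, ((v.2 : ℝ) * (h j : ℝ)) * y' j := by
          rw [Finset.mul_sum]
          apply Finset.sum_congr rfl; intro j _; ring
      _ = ∑ i, (v.1 i : ℝ) * (∑ j, (G i j : ℝ) * y' j) := by
          rw [swap_sum' Finset.univ (fun i => (v.1 i : ℝ)) (fun i j => (G i j : ℝ)) y']
          apply Finset.sum_congr rfl; intro j _
          rw [e2 j]
      _ ≤ Dv v := step
  have hT0 : ∀ v ∈ V, (v.2 : ℝ) * β ≤ Dv v := by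
    intro v hv
    obtain ⟨-, h2, -, -⟩ := hV v hv
    rcases eq_or_lt_of_le h2 with hz | hp
    · have hz' : (v.2 : ℝ) = 0 := by exact_mod_cast hz.symm
      rw [hz']
      have h0 := hweak v hv y hyfeas
      rw [hz'] at h0
      simpa using h0
    · have hpr : (0 : ℝ) < (v.2 : ℝ) := by exact_mod_cast hp
      have hub2 : ∀ r ∈ S, r ≤ Dv v / (v.2 : ℝ) := by
        rintro r ⟨y', hy', rfl⟩
        rw [le_div_iff₀ hpr, mul_comm]
        exact hweak v hv y' hy'
      have h0 := csSup_le hSne hub2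
      rw [← hβ] at h0
      calc (v.2 : ℝ) * β ≤ (v.2 : ℝ) * (Dv v / (v.2 : ℝ)) :=
            mul_le_mul_of_nonneg_left h0 (le_of_lt hpr)
        _ = Dv v := by field_simp
  have hEvle : ∀ v ∈ V, Dv v ≤ (v.2 : ℝ) * β → Ev v ≤ (v.2 : ℝ) * (γhat : ℝ) := by
    intro v hv hDle
    obtain ⟨-, h2, -, -⟩ := hV v hv
    obtain ⟨K, hK⟩ := hKint v hv
    rcases eq_or_lt_of_le h2 with hz | hp
    · have hz' : (v.2 : ℝ) = 0 := by exact_mod_cast hz.symm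
      rw [hEvDv v, hz']
      rw [hz'] at hDle
      simp only [zero_mul] at hDle ⊢
      linarith
    · have hpr : (0 : ℝ) < (v.2 : ℝ) := by exact_mod_cast hp
      have step1 : Ev v ≤ (v.2 : ℝ) * (γstar : ℝ) := by
        rw [hEvDv v]
        have e := mul_le_mul_of_nonneg_left hβγ (le_of_lt hpr)
        rw [mul_add] at e
        linarith
      have hbv : ∑ i, (v.1 i : ℝ) * (b i : ℝ) = ((∑ i, v.1 i * b i : ℚ) : ℝ) := by
        push_cast
        rfl
      have hEvK : Ev v = ((∑ i, v.1 i * b i : ℚ) : ℝ) - (K : ℝ) := by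
        simp only [hEv]
        rw [hbv, hK]
      have hKge : ((∑ i, v.1 i * b i : ℚ) - v.2 * γstar : ℚ) ≤ (K : ℚ) := by
        have hr : ((∑ i, v.1 i * b i : ℚ) : ℝ) - (v.2 : ℝ) * (γstar : ℝ) ≤ (K : ℝ) := by
          rw [hEvK] at step1
          linarith
        exact_mod_cast hr
      have hceil : (⌈(∑ i, v.1 i * b i : ℚ) - v.2 * γstar⌉ : ℤ) ≤ K := Int.ceil_le.mpr hKge
      have hmem : ((∑ i, v.1 i * b i) -
          ((⌈(∑ i, v.1 i * b i) - v.2 * γstar⌉ : ℤ) : ℚ)) / v.2 ≤ γhat :=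
        hγhat.2 ⟨v, hv, hp, rfl⟩
      have hq : (∑ i, v.1 i * b i : ℚ) - (K : ℚ) ≤ v.2 * γhat := by
        rw [div_le_iff₀ hp] at hmem
        have h6 : ((⌈(∑ i, v.1 i * b i : ℚ) - v.2 * γstar⌉ : ℤ) : ℚ) ≤ (K : ℚ) := by
           exact_mod_cast hceil
        nlinarith [hmem, h6]
      have hq' : ((∑ i, v.1 i * b i : ℚ) : ℝ) - (K : ℝ) ≤ (v.2 : ℝ) * (γhat : ℝ) := by
        exact_mod_cast hq
      rw [hEvK]
      exact hq'
  -- the epsilon argument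
  set Tv : (Fin m → ℚ) × ℚ → ℝ := fun v => Dv v - (v.2 : ℝ) * β with hTv
  set Cv : (Fin m → ℚ) × ℚ → ℝ := fun v => max (Ev v - (v.2 : ℝ) * (γhat : ℝ)) 0 with hCv
  set Mc : ℝ := ∑ v ∈ V, (if 0 < Tv v then Cv v / Tv v else 0) with hMc
  have hCv0 : ∀ v, 0 ≤ Cv v := by
    intro v
    simp only [hCv]
    exact le_max_right _ _
  have hMc0 : 0 ≤ Mc := by
    simp only [hMc]
    apply Finset.sum_nonneg
    intro v _
    split
    · exact div_nonneg (hCv0 v) (le_of_lt (by assumption))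
    · exact le_rfl
  have key : ∀ ε : ℝ, 0 < ε → cx + ∑ j, (h j : ℝ) * y j ≤ (γhat : ℝ) + ε * Mc := by
    intro ε hε
    obtain ⟨u, hu0, huG, hud⟩ := dual_exists (fun i j => (G i j : ℝ)) d
      (fun j => (h j : ℝ)) y hyfeas β hβub ε hε
    obtain ⟨lam, hlam0, hlamu, hlam1⟩ := hVgen u 1 hu0 zero_le_one
      (fun j => by rw [one_mul]; exact huG j)
    have hβled : β ≤ ∑ i, u i * d i := by
      apply csSup_le hSne
      rintro r ⟨y', hy', rfl⟩
      have step : ∑ i, u i * (∑ j, (G i j : ℝ) * y' j) ≤ ∑ i, u i * d i :=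
        Finset.sum_le_sum fun i _ => mul_le_mul_of_nonneg_left (hy' i) (hu0 i)
      calc ∑ j, (h j : ℝ) * y' j = ∑ j, (∑ i, u i * (G i j : ℝ)) * y' j := by
            apply Finset.sum_congr rfl; intro j _
            rw [huG j]
        _ = ∑ i, u i * (∑ j, (G i j : ℝ) * y' j) :=
            (swap_sum' Finset.univ u (fun i j => (G i j : ℝ)) y').symm
        _ ≤ ∑ i, u i * d i := step
    have hudv : ∑ i, u i * d i = ∑ v ∈ V, lam v * Dv v := by
      have e0 : ∀ i, u i * d i = ∑ v ∈ V, lam v * (v.1 i : ℝ) * d i := by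
        intro i
        rw [hlamu i, Finset.sum_mul]
      rw [Finset.sum_congr rfl fun i _ => e0 i, Finset.sum_comm]
      apply Finset.sum_congr rfl; intro v _
      simp only [hDv]
      rw [Finset.mul_sum]
      apply Finset.sum_congr rfl; intro i _; ring
    have hlams : ∑ v ∈ V, lam v * (v.2 : ℝ) = 1 := hlam1.symm
    have hTsum : ∑ v ∈ V, lam v * Tv v < ε := by
      have e1 : ∑ v ∈ V, lam v * Tv v
          = (∑ v ∈ V, lam v * Dv v) - (∑ v ∈ V, lam v * (v.2 : ℝ)) * β := by
        rw [Finset.sum_mul, ← Finset.sum_sub_distrib]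
        apply Finset.sum_congr rfl; intro v _
        simp only [hTv]; ring
      rw [e1, hlams, ← hudv, one_mul]
      linarith [hud, hβled]
    have hterm : ∀ v ∈ V, lam v * Ev v
        ≤ lam v * (v.2 : ℝ) * (γhat : ℝ) + ε * (if 0 < Tv v then Cv v / Tv v else 0) := by
      intro v hv
      have hEC : Ev v ≤ (v.2 : ℝ) * (γhat : ℝ) + Cv v := by
        have e := le_max_left (Ev v - (v.2 : ℝ) * (γhat : ℝ)) 0
        simp only [hCv]
        linarith
      by_cases hT : 0 < Tv v
      · rw [if_pos hT]
        have hlamT : lam v * Tv v < ε := by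
          have hle : lam v * Tv v ≤ ∑ w ∈ V, lam w * Tv w :=
            Finset.single_le_sum (f := fun w => lam w * Tv w)
              (fun w hw => mul_nonneg (hlam0 w)
                (by have := hT0 w hw; simp only [hTv]; linarith)) hv
          linarith
        have hlamle : lam v ≤ ε / Tv v := by
          rw [le_div_iff₀ hT]
          linarith
        have c1 : lam v * Ev v ≤ lam v * ((v.2 : ℝ) * (γhat : ℝ) + Cv v) :=
          mul_le_mul_of_nonneg_left hEC (hlam0 v)
        rw [mul_add, ← mul_assoc] at c1
        have c2 : lam v * Cv v ≤ (ε / Tv v) * Cv v :=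
          mul_le_mul_of_nonneg_right hlamle (hCv0 v)
        calc lam v * Ev v ≤ lam v * (v.2 : ℝ) * (γhat : ℝ) + lam v * Cv v := c1
          _ ≤ lam v * (v.2 : ℝ) * (γhat : ℝ) + (ε / Tv v) * Cv v := by linarith [c2]
          _ = lam v * (v.2 : ℝ) * (γhat : ℝ) + ε * (Cv v / Tv v) := by ring
      · rw [if_neg hT]
        have hEle := hEvle v hv (by
          have := not_lt.mp hT
          simp only [hTv] at this
          linarith)
        have c1 := mul_le_mul_of_nonneg_left hEle (hlam0 v)
        rw [← mul_assoc] at c1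
        linarith [c1]
    have e1 : cx + ∑ i, u i * d i = ∑ v ∈ V, lam v * Ev v := by
      rw [hudv]
      have e0 : cx = ∑ v ∈ V, lam v * (v.2 : ℝ) * cx := by
        rw [← Finset.sum_mul, hlams, one_mul]
      calc cx + ∑ v ∈ V, lam v * Dv v
          = (∑ v ∈ V, lam v * (v.2 : ℝ) * cx) + ∑ v ∈ V, lam v * Dv v := by rw [← e0]
        _ = ∑ v ∈ V, lam v * Ev v := by
            rw [← Finset.sum_add_distrib]
            apply Finset.sum_congr rfl; intro v _
            rw [hEvDv v]; ring
    have e2 : ∑ v ∈ V, lam v * Ev v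
        ≤ ∑ v ∈ V, (lam v * (v.2 : ℝ) * (γhat : ℝ)
            + ε * (if 0 < Tv v then Cv v / Tv v else 0)) := Finset.sum_le_sum hterm
    have e3 : ∑ v ∈ V, (lam v * (v.2 : ℝ) * (γhat : ℝ)
            + ε * (if 0 < Tv v then Cv v / Tv v else 0)) = (γhat : ℝ) + ε * Mc := by
      rw [Finset.sum_add_distrib]
      congr 1
      · rw [← Finset.sum_mul, hlams, one_mul]
      · rw [← Finset.mul_sum]
    have e4 : cx + ∑ j, (h j : ℝ) * y j ≤ cx + ∑ i, u i * d i := by linarith [hyβ, hβled]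
    rw [e1] at e4
    linarith [e4, e2, e3.le]
  -- conclude
  by_contra hcon
  push_neg at hcon
  set L : ℝ := cx + ∑ j, (h j : ℝ) * y j with hL
  have hLγ : (γhat : ℝ) < L := hcon
  have hMne : Mc + 1 ≠ 0 := by linarith
  have hε : 0 < (L - (γhat : ℝ)) / (Mc + 1) := div_pos (by linarith) (by linarith)
  have hkey := key _ hε
  have hdiv : (L - (γhat : ℝ)) / (Mc + 1) * (Mc + 1) = L - (γhat : ℝ) :=
    div_mul_cancel₀ _ hMne
  have hdiv2 : (L - (γhat : ℝ)) / (Mc + 1) * Mc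
      = (L - (γhat : ℝ)) / (Mc + 1) * (Mc + 1) - (L - (γhat : ℝ)) / (Mc + 1) := by ring
  rw [hdiv] at hdiv2
  linarith [hkey, hdiv2, hε]


end
end

section
/- Let p, q, m ∈ ℕ, let A ∈ ℚ^{m×p}, G ∈ ℚ^{m×q}, b ∈ ℚ^m, and let P := {(x,y) ∈ ℝ^p × ℝ^q : Ax + Gy ≤ b componentwise} and P_I := conv({(x,y) ∈ P : x ∈ ℤ^p}). Let α ∈ ℚ^p, β ∈ ℚ^q, γ ∈ ℚ be such that α·x + β·y ≤ γ holds for every (x,y) ∈ P_I. Then there exist k ∈ ℕ with k ≥ 2, vectors d^1,…,d^k ∈ ℤ^p and integers δ^1,…,δ^k ∈ ℤ forming a k-disjunction (i.e., for every x ∈ ℤ^p there is some i with d^i·x ≤ δ^i) such that every (x,y) ∈ P with α·x + β·y > γ satisfies d^i·x > δ^i for all i ∈ {1,…,k}. That is, every valid cutting plane for P_I is a k-disjunctive cut for P for some k. -/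
open Set

noncomputable section

namespace KDisj

structure Row (p q : ℕ) where
  a : Fin p → ℚ
  g : Fin q → ℚ
  c : ℚ
  strict : Bool

variable {p q : ℕ}

def Row.lhs (r : Row p q) (x : Fin p → ℝ) (y : Fin q → ℝ) : ℝ :=
  (∑ j, (r.a j : ℝ) * x j) + (∑ j, (r.g j : ℝ) * y j)

def Row.holds (r : Row p q) (x : Fin p → ℝ) (y : Fin q → ℝ) : Prop :=
  if r.strict then r.lhs x y < r.c else r.lhs x y ≤ r.c

def SatL (L : List (Row p q)) (x : Fin p → ℝ) (y : Fin q → ℝ) : Prop :=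
  ∀ r ∈ L, r.holds x y

lemma exists_max (L : List (ℝ × Bool)) (hL : L ≠ []) :
    ∃ a ∈ L, ∀ b ∈ L, b.1 ≤ a.1 := by
  induction L with
  | nil => simp at hL
  | cons x xs ih =>
    rcases eq_or_ne xs [] with rfl | hne
    · exact ⟨x, by simp, by simp⟩
    · obtain ⟨a, haL, hmax⟩ := ih hne
      rcases le_total a.1 x.1 with h | h
      · refine ⟨x, List.mem_cons_self, fun b hb => ?_⟩
        rcases List.mem_cons.mp hb with rfl | hb
        · exact le_rfl
        · exact (hmax b hb).trans h
      · refine ⟨a, List.mem_cons_of_mem _ haL, fun b hb => ?_⟩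
        rcases List.mem_cons.mp hb with rfl | hb
        · exact h
        · exact hmax b hb

lemma exists_min (L : List (ℝ × Bool)) (hL : L ≠ []) :
    ∃ a ∈ L, ∀ b ∈ L, a.1 ≤ b.1 := by
  obtain ⟨a, ha, h⟩ := exists_max (L.map (fun u => (-u.1, u.2))) (by simpa using hL)
  obtain ⟨a', ha', rfl⟩ := List.mem_map.mp ha
  refine ⟨a', ha', fun b hb => ?_⟩
  have := h (-b.1, b.2) (List.mem_map.mpr ⟨b, hb, rfl⟩)
  simpa using this

lemma exists_between (Lo Up : List (ℝ × Bool))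
    (h : ∀ l ∈ Lo, ∀ u ∈ Up, (if l.2 || u.2 then l.1 < u.1 else l.1 ≤ u.1)) :
    ∃ t : ℝ, (∀ l ∈ Lo, if l.2 then l.1 < t else l.1 ≤ t) ∧
             (∀ u ∈ Up, if u.2 then t < u.1 else t ≤ u.1) := by
  rcases eq_or_ne Lo [] with rfl | hLo
  · rcases eq_or_ne Up [] with rfl | hUp
    · exact ⟨0, by simp, by simp⟩
    · obtain ⟨b, hb, hbmin⟩ := exists_min Up hUp
      refine ⟨b.1 - 1, by simp, fun u hu => ?_⟩
      have : b.1 - 1 < u.1 := by have := hbmin u hu; linarith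
      split <;> [exact this; exact this.le]
  · obtain ⟨a, ha, hamax⟩ := exists_max Lo hLo
    rcases eq_or_ne Up [] with rfl | hUp
    · refine ⟨a.1 + 1, fun l hl => ?_, by simp⟩
      have : l.1 < a.1 + 1 := by have := hamax l hl; linarith
      split <;> [exact this; exact this.le]
    · obtain ⟨b, hb, hbmin⟩ := exists_min Up hUp
      by_cases hopen : (∃ l ∈ Lo, l.1 = a.1 ∧ l.2 = true) ∨ (∃ u ∈ Up, u.1 = b.1 ∧ u.2 = true)
      · have hAB : a.1 < b.1 := by
          rcases hopen with ⟨l, hl, hla, hls⟩ | ⟨u, hu, hub, hus⟩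
          · have := h l hl b hb; rw [hls] at this; simp at this; rw [← hla]; exact this
          · have := h a ha u hu; rw [hus] at this; simp at this; rw [← hub]; exact this
        refine ⟨(a.1 + b.1) / 2, fun l hl => ?_, fun u hu => ?_⟩
        · have : l.1 < (a.1 + b.1) / 2 := by have := hamax l hl; linarith
          split <;> [exact this; exact this.le]
        · have : (a.1 + b.1) / 2 < u.1 := by have := hbmin u hu; linarith
          split <;> [exact this; exact this.le]
      · push_neg at hopen
        obtain ⟨h1, h2⟩ := hopen
        have has : a.2 = false := by
          have := h1 a ha rfl; simpa using this
        have hbs : b.2 = false := by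
          have := h2 b hb rfl; simpa using this
        have hAB : a.1 ≤ b.1 := by
          have := h a ha b hb; rw [has, hbs] at this; simpa using this
        refine ⟨a.1, fun l hl => ?_, fun u hu => ?_⟩
        · have hle := hamax l hl
          split
          · rename_i hs
            rcases lt_or_eq_of_le hle with h' | h'
            · exact h'
            · exact absurd hs (by simp [h1 l hl h'])
          · exact hle
        · have hge := hbmin u hu
          split
          · rename_i hs
            rcases lt_or_eq_of_le hge with h' | h'
            · exact lt_of_le_of_lt hAB h'
            · exact absurd hs (by simp [h2 u hu h'.symm])
          · exact hAB.trans hge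


def Row.init (r : Row p (q+1)) : Row p q :=
  ⟨r.a, fun j => r.g j.castSucc, r.c, r.strict⟩

def comb (r s : Row p (q+1)) : Row p q :=
  ⟨fun j => (-(s.g (Fin.last q))) * r.a j + (r.g (Fin.last q)) * s.a j,
   fun j => (-(s.g (Fin.last q))) * r.g j.castSucc + (r.g (Fin.last q)) * s.g j.castSucc,
   (-(s.g (Fin.last q))) * r.c + (r.g (Fin.last q)) * s.c,
   r.strict || s.strict⟩

def elim1 (L : List (Row p (q+1))) : List (Row p q) :=
  (L.filter (fun r => decide (r.g (Fin.last q) = 0))).map Row.init ++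
  L.flatMap (fun r => L.filterMap (fun s =>
    if 0 < r.g (Fin.last q) ∧ s.g (Fin.last q) < 0 then some (comb r s) else none))

lemma init_mem_elim1 {L : List (Row p (q+1))} {r : Row p (q+1)} (hr : r ∈ L)
    (h0 : r.g (Fin.last q) = 0) : r.init ∈ elim1 L := by
  apply List.mem_append_left
  exact List.mem_map.mpr ⟨r, List.mem_filter.mpr ⟨hr, by simpa using h0⟩, rfl⟩

lemma comb_mem_elim1 {L : List (Row p (q+1))} {r s : Row p (q+1)} (hr : r ∈ L) (hs : s ∈ L)
    (hrp : 0 < r.g (Fin.last q)) (hsn : s.g (Fin.last q) < 0) : comb r s ∈ elim1 L := by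
  apply List.mem_append_right
  apply List.mem_flatMap.mpr
  exact ⟨r, hr, List.mem_filterMap.mpr ⟨s, hs, by rw [if_pos ⟨hrp, hsn⟩]⟩⟩

lemma mem_elim1 {L : List (Row p (q+1))} {w : Row p q} (hw : w ∈ elim1 L) :
    (∃ r ∈ L, r.g (Fin.last q) = 0 ∧ w = r.init) ∨
    (∃ r ∈ L, ∃ s ∈ L, 0 < r.g (Fin.last q) ∧ s.g (Fin.last q) < 0 ∧ w = comb r s) := by
  rcases List.mem_append.mp hw with h | h
  · obtain ⟨r, hrf, rfl⟩ := List.mem_map.mp h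
    obtain ⟨hrL, h0⟩ := List.mem_filter.mp hrf
    exact Or.inl ⟨r, hrL, by simpa using h0, rfl⟩
  · obtain ⟨r, hrL, hm⟩ := List.mem_flatMap.mp h
    obtain ⟨s, hsL, hsome⟩ := List.mem_filterMap.mp hm
    by_cases hc : 0 < r.g (Fin.last q) ∧ s.g (Fin.last q) < 0
    · rw [if_pos hc] at hsome
      exact Or.inr ⟨r, hrL, s, hsL, hc.1, hc.2, (Option.some_injective _ hsome).symm⟩
    · rw [if_neg hc] at hsome; exact absurd hsome (by simp)

def Row.base (r : Row p (q+1)) (x : Fin p → ℝ) (y : Fin q → ℝ) : ℝ :=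
  (∑ j, (r.a j : ℝ) * x j) + (∑ j, (r.g j.castSucc : ℝ) * y j)

lemma lhs_snoc (r : Row p (q+1)) (x : Fin p → ℝ) (y : Fin q → ℝ) (t : ℝ) :
    r.lhs x (Fin.snoc y t) = r.base x y + (r.g (Fin.last q) : ℝ) * t := by
  simp only [Row.lhs, Row.base, Fin.sum_univ_castSucc, Fin.snoc_castSucc, Fin.snoc_last]
  ring

lemma init_lhs (r : Row p (q+1)) (x : Fin p → ℝ) (y : Fin q → ℝ) :
    (r.init).lhs x y = r.base x y := rfl

lemma comb_lhs (r s : Row p (q+1)) (x : Fin p → ℝ) (y : Fin q → ℝ) (t : ℝ) :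
    (comb r s).lhs x y = ((-(s.g (Fin.last q)) : ℚ) : ℝ) * r.lhs x (Fin.snoc y t)
      + ((r.g (Fin.last q) : ℚ) : ℝ) * s.lhs x (Fin.snoc y t) := by
  simp only [Row.lhs, comb, Fin.sum_univ_castSucc, Fin.snoc_castSucc, Fin.snoc_last]
  push_cast
  simp only [add_mul, Finset.sum_add_distrib, mul_assoc, ← Finset.mul_sum]
  ring


lemma aux_le {br bs rc sc gr gs : ℝ} (hgr : 0 < gr) (hgs : gs < 0)
    (h : (-gs) * br + gr * bs ≤ (-gs) * rc + gr * sc) :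
    (sc - bs) / gs ≤ (rc - br) / gr := by
  have h1 : (sc - bs) / gs * gs = sc - bs := div_mul_cancel₀ _ (ne_of_lt hgs)
  have h2 : (rc - br) / gr * gr = rc - br := div_mul_cancel₀ _ (ne_of_gt hgr)
  have key : 0 ≤ (-gs) * (rc - br) + gr * (sc - bs) := by linarith
  rw [← h2, ← h1] at key
  have e : (-gs) * ((rc - br) / gr * gr) + gr * ((sc - bs) / gs * gs)
      = gr * (-gs) * ((rc - br) / gr - (sc - bs) / gs) := by ring
  rw [e] at key
  have hK : 0 < gr * (-gs) := mul_pos hgr (by linarith)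
  have := (mul_nonneg_iff_of_pos_left hK).mp key
  linarith

lemma aux_lt {br bs rc sc gr gs : ℝ} (hgr : 0 < gr) (hgs : gs < 0)
    (h : (-gs) * br + gr * bs < (-gs) * rc + gr * sc) :
    (sc - bs) / gs < (rc - br) / gr := by
  have h1 : (sc - bs) / gs * gs = sc - bs := div_mul_cancel₀ _ (ne_of_lt hgs)
  have h2 : (rc - br) / gr * gr = rc - br := div_mul_cancel₀ _ (ne_of_gt hgr)
  have key : 0 < (-gs) * (rc - br) + gr * (sc - bs) := by linarith
  rw [← h2, ← h1] at key
  have e : (-gs) * ((rc - br) / gr * gr) + gr * ((sc - bs) / gs * gs)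
      = gr * (-gs) * ((rc - br) / gr - (sc - bs) / gs) := by ring
  rw [e] at key
  have hK : 0 < gr * (-gs) := mul_pos hgr (by linarith)
  have := (mul_pos_iff_of_pos_left hK).mp key
  linarith

theorem satL_elim1 (L : List (Row p (q+1))) (x : Fin p → ℝ) (y : Fin q → ℝ) :
    SatL (elim1 L) x y ↔ ∃ t, SatL L x (Fin.snoc y t) := by
  constructor
  · intro H
    -- build lower and upper bound lists
    set Lo : List (ℝ × Bool) := L.filterMap (fun s =>
      if s.g (Fin.last q) < 0 then some (((s.c : ℝ) - s.base x y) / (s.g (Fin.last q) : ℝ), s.strict)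
      else none) with hLo
    set Up : List (ℝ × Bool) := L.filterMap (fun r =>
      if 0 < r.g (Fin.last q) then some (((r.c : ℝ) - r.base x y) / (r.g (Fin.last q) : ℝ), r.strict)
      else none) with hUp
    have hpair : ∀ l ∈ Lo, ∀ u ∈ Up, (if l.2 || u.2 then l.1 < u.1 else l.1 ≤ u.1) := by
      intro l hl u hu
      obtain ⟨s, hsL, hsome⟩ := List.mem_filterMap.mp hl
      by_cases hsn : s.g (Fin.last q) < 0
      swap; · rw [if_neg hsn] at hsome; exact absurd hsome (by simp)
      rw [if_pos hsn] at hsome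
      obtain ⟨r, hrL, hsome'⟩ := List.mem_filterMap.mp hu
      by_cases hrp : 0 < r.g (Fin.last q)
      swap; · rw [if_neg hrp] at hsome'; exact absurd hsome' (by simp)
      rw [if_pos hrp] at hsome'
      have hc := H _ (comb_mem_elim1 hrL hsL hrp hsn)
      cases hsome; cases hsome'
      -- hc : (comb r s).holds x y
      have hglr : (0:ℝ) < (r.g (Fin.last q) : ℝ) := by exact_mod_cast hrp
      have hgls : ((s.g (Fin.last q) : ℝ)) < 0 := by exact_mod_cast hsn
      have hlhs := comb_lhs r s x y 0
      simp only [lhs_snoc] at hlhs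
      have hcc : ((comb r s).c : ℝ) = ((-(s.g (Fin.last q)) : ℚ) : ℝ) * r.c
          + ((r.g (Fin.last q) : ℚ) : ℝ) * s.c := by
        simp only [comb]; push_cast; ring
      set gr := (r.g (Fin.last q) : ℝ)
      set gs := (s.g (Fin.last q) : ℝ)
      set br := r.base x y
      set bs := s.base x y
      have key : ∀ _h : (comb r s).lhs x y ≤ (comb r s).c,
          ((s.c : ℝ) - bs) / gs ≤ ((r.c : ℝ) - br) / gr := by
        intro h
        rw [hlhs, hcc] at h
        push_cast at h
        exact aux_le hglr hgls (by linarith)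
      have keys : ∀ _h : (comb r s).lhs x y < (comb r s).c,
          ((s.c : ℝ) - bs) / gs < ((r.c : ℝ) - br) / gr := by
        intro h
        rw [hlhs, hcc] at h
        push_cast at h
        exact aux_lt hglr hgls (by linarith)
      unfold Row.holds at hc
      simp only [comb] at hc
      by_cases hbs : s.strict = true <;> by_cases hbr : r.strict = true <;>
        simp only [hbs, hbr, Bool.or_true, Bool.true_or, Bool.or_false, if_true, if_false] at hc ⊢
      · exact keys hc
      · exact keys hc
      · exact keys hc
      · exact key hc
    obtain ⟨t, hLo', hUp'⟩ := exists_between Lo Up hpair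
    refine ⟨t, fun r hrL => ?_⟩
    rcases lt_trichotomy (r.g (Fin.last q)) 0 with hneg | hzero | hpos
    · have hmem : (((r.c : ℝ) - r.base x y) / (r.g (Fin.last q) : ℝ), r.strict) ∈ Lo :=
        List.mem_filterMap.mpr ⟨r, hrL, by rw [if_pos hneg]⟩
      have hb := hLo' _ hmem
      have hgl : ((r.g (Fin.last q) : ℝ)) < 0 := by exact_mod_cast hneg
      unfold Row.holds
      rw [lhs_snoc]
      split
      · rename_i hs
        rw [hs] at hb; simp only [if_true] at hb
        have := (div_lt_iff_of_neg hgl).mp hb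
        linarith
      · rename_i hs
        simp only [hs, Bool.false_eq_true, if_false] at hb
        have := (div_le_iff_of_neg hgl).mp hb
        linarith
    · have hb := H _ (init_mem_elim1 hrL hzero)
      unfold Row.holds at hb ⊢
      rw [init_lhs] at hb
      rw [lhs_snoc, hzero]
      simp only [Row.init] at hb
      simp at hb ⊢
      exact hb
    · have hmem : (((r.c : ℝ) - r.base x y) / (r.g (Fin.last q) : ℝ), r.strict) ∈ Up :=
        List.mem_filterMap.mpr ⟨r, hrL, by rw [if_pos hpos]⟩
      have hb := hUp' _ hmem
      have hgl : (0:ℝ) < ((r.g (Fin.last q) : ℝ)) := by exact_mod_cast hpos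
      unfold Row.holds
      rw [lhs_snoc]
      split
      · rename_i hs
        rw [hs] at hb; simp only [if_true] at hb
        have := (lt_div_iff₀ hgl).mp hb
        linarith
      · rename_i hs
        simp only [hs, Bool.false_eq_true, if_false] at hb
        have := (le_div_iff₀ hgl).mp hb
        linarith
  · rintro ⟨t, H⟩ w hw
    rcases mem_elim1 hw with ⟨r, hrL, h0, rfl⟩ | ⟨r, hrL, s, hsL, hrp, hsn, rfl⟩
    · have hb := H r hrL
      unfold Row.holds at hb ⊢
      rw [lhs_snoc, h0] at hb
      rw [init_lhs]
      simp only [Row.init]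
      simp at hb ⊢
      exact hb
    · have hbr := H r hrL
      have hbs := H s hsL
      have hglr : (0:ℝ) < (r.g (Fin.last q) : ℝ) := by exact_mod_cast hrp
      have hgls : ((s.g (Fin.last q) : ℝ)) < 0 := by exact_mod_cast hsn
      unfold Row.holds at hbr hbs ⊢
      rw [comb_lhs r s x y t]
      have hcc : ((comb r s).c : ℝ) = ((-(s.g (Fin.last q)) : ℚ) : ℝ) * r.c
          + ((r.g (Fin.last q) : ℚ) : ℝ) * s.c := by
        simp only [comb]; push_cast; ring
      rw [hcc]
      have hstr : (comb r s).strict = (r.strict || s.strict) := rfl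
      rw [hstr]
      have hlam : (0:ℝ) < ((-(s.g (Fin.last q)) : ℚ) : ℝ) := by push_cast; linarith
      set lam := ((-(s.g (Fin.last q)) : ℚ) : ℝ)
      set mu := (r.g (Fin.last q) : ℝ)
      by_cases hbs' : s.strict = true <;> by_cases hbr' : r.strict = true <;>
        simp only [hbs', hbr', if_true, if_false, Bool.or_true, Bool.true_or,
          Bool.or_false, Bool.false_or, Bool.false_eq_true] at hbr hbs ⊢
      · nlinarith
      · nlinarith
      · nlinarith
      · nlinarith


def elimAll : {q : ℕ} → List (Row p q) → List (Row p 0)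
  | 0, L => L
  | _+1, L => elimAll (elim1 L)

theorem satL_elimAll {q : ℕ} (L : List (Row p q)) (x : Fin p → ℝ) :
    SatL (elimAll L) x (fun i => i.elim0) ↔ ∃ y, SatL L x y := by
  induction q with
  | zero =>
    constructor
    · intro h; exact ⟨_, h⟩
    · rintro ⟨y, h⟩
      have hy : (fun i : Fin 0 => i.elim0 : Fin 0 → ℝ) = y := funext fun i => i.elim0
      show SatL L x (fun i : Fin 0 => i.elim0)
      rw [hy]; exact h
  | succ q ih =>
    show SatL (elimAll (elim1 L)) x _ ↔ _
    rw [ih (elim1 L)]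
    constructor
    · rintro ⟨y, hy⟩
      obtain ⟨t, ht⟩ := (satL_elim1 L x y).mp hy
      exact ⟨_, ht⟩
    · rintro ⟨y, hy⟩
      refine ⟨Fin.init y, (satL_elim1 L x (Fin.init y)).mpr ⟨y (Fin.last q), ?_⟩⟩
      rwa [Fin.snoc_init_self]

def denom (r : Row p 0) : ℕ := ∏ j, (r.a j).den

lemma denom_pos (r : Row p 0) : 0 < denom r :=
  Finset.prod_pos (fun j _ => (r.a j).pos)

def rowD (r : Row p 0) (j : Fin p) : ℤ := -((denom r / (r.a j).den : ℕ) * (r.a j).num)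

def rowDelta (r : Row p 0) : ℤ :=
  if r.strict then -⌈(denom r : ℚ) * r.c⌉ else -(⌊(denom r : ℚ) * r.c⌋ + 1)

lemma rowD_cast (r : Row p 0) (j : Fin p) : ((rowD r j : ℤ) : ℚ) = -(denom r : ℚ) * r.a j := by
  have hdvd : (r.a j).den ∣ denom r := Finset.dvd_prod_of_mem _ (Finset.mem_univ j)
  obtain ⟨M, hM⟩ := hdvd
  have hq : denom r / (r.a j).den = M := by
    rw [hM]; exact Nat.mul_div_cancel_left _ (r.a j).pos
  have hden : ((r.a j).den : ℚ) ≠ 0 := Nat.cast_ne_zero.mpr (r.a j).den_nz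
  have key : (r.a j) * ((r.a j).den : ℚ) = (r.a j).num := Rat.mul_den_eq_num _
  rw [rowD, hq, hM]
  push_cast
  rw [← key]
  ring

lemma rowD_sum_cast (r : Row p 0) (x : Fin p → ℝ) :
    ∑ j, ((rowD r j : ℤ) : ℝ) * x j = -(denom r : ℝ) * ∑ j, (r.a j : ℝ) * x j := by
  rw [Finset.mul_sum]
  apply Finset.sum_congr rfl
  intro j _
  have h := rowD_cast r j
  have h' : ((rowD r j : ℤ) : ℝ) = -(denom r : ℝ) * (r.a j : ℝ) := by
    exact_mod_cast congrArg (fun t : ℚ => (t : ℝ)) h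
  rw [h']; ring

lemma lhs_zero (r : Row p 0) (x : Fin p → ℝ) (y : Fin 0 → ℝ) :
    r.lhs x y = ∑ j, (r.a j : ℝ) * x j := by
  simp [Row.lhs]

lemma rowD_strict (r : Row p 0) (x : Fin p → ℝ) (h : r.holds x (fun i => i.elim0)) :
    (rowDelta r : ℝ) < ∑ j, ((rowD r j : ℤ) : ℝ) * x j := by
  have hN : (0:ℝ) < (denom r : ℝ) := by exact_mod_cast denom_pos r
  rw [rowD_sum_cast]
  unfold Row.holds at h
  rw [lhs_zero] at h
  set S : ℝ := ∑ j, (r.a j : ℝ) * x j with hS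
  unfold rowDelta
  by_cases hs : r.strict = true <;> simp only [hs, if_true, Bool.false_eq_true, if_false] at h ⊢
  · -- S < c ; δ = -⌈N c⌉
    have h1 : (denom r : ℝ) * S < (denom r : ℝ) * (r.c : ℝ) :=
      (mul_lt_mul_iff_right₀ hN).mpr h
    have h2 : ((denom r : ℚ) * r.c : ℚ) ≤ (⌈(denom r : ℚ) * r.c⌉ : ℚ) := Int.le_ceil _
    have h2' : (denom r : ℝ) * (r.c : ℝ) ≤ ((⌈(denom r : ℚ) * r.c⌉ : ℤ) : ℝ) := by
      exact_mod_cast h2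
    push_cast
    nlinarith
  · -- S ≤ c ; δ = -(⌊N c⌋+1)
    have h1 : (denom r : ℝ) * S ≤ (denom r : ℝ) * (r.c : ℝ) :=
      (mul_le_mul_iff_right₀ hN).mpr h
    have h2 : ((denom r : ℚ) * r.c : ℚ) < ((⌊(denom r : ℚ) * r.c⌋ : ℤ) : ℚ) + 1 :=
      Int.lt_floor_add_one _
    have h2' : (denom r : ℝ) * (r.c : ℝ) < ((⌊(denom r : ℚ) * r.c⌋ : ℤ) : ℝ) + 1 := by
      exact_mod_cast h2
    push_cast
    nlinarith

lemma rowD_cover (r : Row p 0) (v : Fin p → ℤ)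
    (h : ¬ r.holds (fun j => ((v j : ℤ) : ℝ)) (fun i => i.elim0)) :
    ∑ j, rowD r j * v j ≤ rowDelta r := by
  set S : ℚ := ∑ j, r.a j * ((v j : ℤ) : ℚ) with hSdef
  have hw : ((∑ j, rowD r j * v j : ℤ) : ℚ) = -(denom r : ℚ) * S := by
    push_cast
    rw [hSdef, Finset.mul_sum]
    apply Finset.sum_congr rfl
    intro j _
    rw [rowD_cast r j]; ring
  unfold Row.holds at h
  rw [lhs_zero] at h
  have hScast : ((S : ℚ) : ℝ) = ∑ j, (r.a j : ℝ) * ((v j : ℤ) : ℝ) := by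
    rw [hSdef]; push_cast; rfl
  unfold rowDelta
  by_cases hs : r.strict = true <;> simp only [hs, if_true, Bool.false_eq_true, if_false] at h ⊢
  · -- ¬(Σ < c) : c ≤ S over ℝ hence over ℚ
    push_neg at h
    have hSc : r.c ≤ S := by
      rw [← Rat.cast_le (K := ℝ)]; rw [hScast]; exact h
    have h1 : (denom r : ℚ) * r.c ≤ (denom r : ℚ) * S := by
      have hN : (0:ℚ) < (denom r : ℚ) := by exact_mod_cast denom_pos r
      exact (mul_le_mul_iff_right₀ hN).mpr hSc
    have h2 : (⌈(denom r : ℚ) * r.c⌉ : ℤ) ≤ -(∑ j, rowD r j * v j) := by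
      apply Int.ceil_le.mpr
      have hcast : ((-(∑ j, rowD r j * v j) : ℤ) : ℚ) = (denom r : ℚ) * S := by
        rw [Int.cast_neg, hw]; ring
      rw [hcast]
      linarith
    omega
  · -- ¬(Σ ≤ c) : c < S
    push_neg at h
    have hSc : r.c < S := by
      rw [← Rat.cast_lt (K := ℝ)]; rw [hScast]; exact h
    have h1 : (denom r : ℚ) * r.c < (denom r : ℚ) * S := by
      have hN : (0:ℚ) < (denom r : ℚ) := by exact_mod_cast denom_pos r
      exact (mul_lt_mul_iff_right₀ hN).mpr hSc
    have h2 : (⌊(denom r : ℚ) * r.c⌋ : ℤ) < -(∑ j, rowD r j * v j) := by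
      have hfl : ((⌊(denom r : ℚ) * r.c⌋ : ℤ) : ℚ) ≤ (denom r : ℚ) * r.c := Int.floor_le _
      have hcast : ((-(∑ j, rowD r j * v j) : ℤ) : ℚ) = (denom r : ℚ) * S := by
        rw [Int.cast_neg, hw]; ring
      have : ((⌊(denom r : ℚ) * r.c⌋ : ℤ) : ℚ) < ((-(∑ j, rowD r j * v j) : ℤ) : ℚ) := by
        rw [hcast]; linarith
      exact_mod_cast this
    omega


variable {m : ℕ}

/-- the initial system: the rows of `P` together with the (strict) reversed cut. -/
def rows0 (A : Matrix (Fin m) (Fin p) ℚ) (G : Matrix (Fin m) (Fin q) ℚ) (b : Fin m → ℚ)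
    (α : Fin p → ℚ) (β : Fin q → ℚ) (γ : ℚ) : List (Row p q) :=
  ((List.finRange m).map fun i => ⟨fun j => A i j, fun j => G i j, b i, false⟩) ++
  [⟨fun j => -(α j), fun j => -(β j), -γ, true⟩]

lemma satL_rows0_iff (A : Matrix (Fin m) (Fin p) ℚ) (G : Matrix (Fin m) (Fin q) ℚ)
    (b : Fin m → ℚ) (α : Fin p → ℚ) (β : Fin q → ℚ) (γ : ℚ)
    (z : (Fin p → ℝ) × (Fin q → ℝ)) :
    SatL (rows0 A G b α β γ) z.1 z.2 ↔
      (z ∈ feasSet A G b ∧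
        (γ : ℝ) < (∑ j, (α j : ℝ) * z.1 j) + (∑ j, (β j : ℝ) * z.2 j)) := by
  constructor
  · intro h
    constructor
    · intro i
      have hm : (⟨fun j => A i j, fun j => G i j, b i, false⟩ : Row p q) ∈ rows0 A G b α β γ :=
        List.mem_append_left _ (List.mem_map.mpr ⟨i, List.mem_finRange i, rfl⟩)
      have := h _ hm
      simpa [Row.holds, Row.lhs] using this
    · have hm : (⟨fun j => -(α j), fun j => -(β j), -γ, true⟩ : Row p q) ∈ rows0 A G b α β γ :=
        List.mem_append_right _ (List.mem_cons_self)
      have hstr := h _ hm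
      simp only [Row.holds, Row.lhs, if_true] at hstr
      push_cast at hstr
      simp only [neg_mul, Finset.sum_neg_distrib] at hstr
      linarith
  · rintro ⟨hfeas, hcut⟩ r hr
    rcases List.mem_append.mp hr with hmem | hmem
    · obtain ⟨i, -, rfl⟩ := List.mem_map.mp hmem
      simpa [Row.holds, Row.lhs] using hfeas i
    · rcases List.mem_cons.mp hmem with rfl | hmem
      · simp only [Row.holds, Row.lhs, if_true]
        push_cast
        simp only [neg_mul, Finset.sum_neg_distrib]
        linarith
      · exact absurd hmem List.not_mem_nil

end KDisj

open KDisj in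
/-- Every valid cutting plane for `P_I` is a `k`-disjunctive cut for `P` for some `k`. -/
theorem every_valid_inequality_is_kdisjunctive_cut_for_some_k
    {p q m : ℕ} (A : Matrix (Fin m) (Fin p) ℚ) (G : Matrix (Fin m) (Fin q) ℚ) (b : Fin m → ℚ)
    (α : Fin p → ℚ) (β : Fin q → ℚ) (γ : ℚ)
    (hvalid : ∀ z ∈ mixedIntHull A G b,
      (∑ j, (α j : ℝ) * z.1 j) + (∑ j, (β j : ℝ) * z.2 j) ≤ (γ : ℝ)) :
    ∃ k : ℕ, 2 ≤ k ∧ ∃ (d : Fin k → Fin p → ℤ) (δ : Fin k → ℤ),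
      IsKDisjunction k d δ ∧
      ∀ z ∈ feasSet A G b,
        (γ : ℝ) < (∑ j, (α j : ℝ) * z.1 j) + (∑ j, (β j : ℝ) * z.2 j) →
        ∀ i, (δ i : ℝ) < ∑ j, (d i j : ℝ) * z.1 j := by
  classical
  set L0 : List (Row p q) := rows0 A G b α β γ with hL0
  set F : List (Row p 0) := elimAll L0 with hF
  set n : ℕ := F.length with hn
  refine ⟨n + 2, by omega,
    (fun i => if h : (i : ℕ) < n then rowD (F.get ⟨(i : ℕ), h⟩) else 0),
    (fun i => if h : (i : ℕ) < n then rowDelta (F.get ⟨(i : ℕ), h⟩) else -1), ?_, ?_⟩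
  · -- it is a disjunction
    intro v
    have hnot : ¬ SatL F (fun j => ((v j : ℤ) : ℝ)) (fun i => i.elim0) := by
      intro hSat
      obtain ⟨y, hy⟩ := (satL_elimAll L0 _).mp hSat
      have hz := (satL_rows0_iff A G b α β γ ((fun j => ((v j : ℤ) : ℝ)), y)).mp hy
      have hmem : ((fun j => ((v j : ℤ) : ℝ)), y) ∈ mixedIntHull A G b :=
        subset_convexHull ℝ _ ⟨hz.1, fun j => ⟨v j, rfl⟩⟩
      exact absurd hz.2 (not_lt.mpr (hvalid _ hmem))
    unfold SatL at hnot
    push_neg at hnot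
    obtain ⟨r, hrF, hrbad⟩ := hnot
    obtain ⟨i, hget⟩ := List.mem_iff_get.mp hrF
    refine ⟨⟨(i : ℕ), by omega⟩, ?_⟩
    have hlt : ((⟨(i : ℕ), by omega⟩ : Fin (n + 2)) : ℕ) < n := i.isLt
    simp only [hlt, dif_pos]
    have hgeq : F.get ⟨(i : ℕ), hlt⟩ = r := by
      rw [← hget]
    rw [hgeq]
    exact rowD_cover r v hrbad
  · -- strict violation of each branch
    rintro z hz hviol i
    have hy : SatL L0 z.1 z.2 :=
      (satL_rows0_iff A G b α β γ z).mpr ⟨hz, hviol⟩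
    have hFsat : SatL F z.1 (fun i => i.elim0) :=
      (satL_elimAll L0 z.1).mpr ⟨z.2, hy⟩
    by_cases h : (i : ℕ) < n
    · simp only [h, dif_pos]
      exact rowD_strict _ _ (hFsat _ (List.get_mem F _))
    · simp only [h, dif_neg, not_false_iff]
      simp

end
end
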